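/- arXiv:1108.2079 — 11 statements merged into one kernel-verified Lean document; each statement's English description precedes it below -/
import Mathlib

section
/- Let ω : ℝ² → ℝ be compactly supported, square-integrable, and odd in each variable, i.e. ω(−x₁,x₂) = −ω(x₁,x₂) whenever x₁ ≠ 0 and ω(x₁,−x₂) = −ω(x₁,x₂) whenever x₂ ≠ 0. Let v = K * ω be the associated velocity field. Then: (1) v₂(x₁,0) = 0 for all x₁ ∈ ℝ; (2) v₁(0,x₂) = 0 for all x₂ ∈ ℝ; (3) v(0,0) = (0,0); and (4) if in addition ω(y) ≥ 0 for all y in the first quadrant Q₁ = {(y₁,y₂) : y₁ ≥ 0, y₂ ≥ 0}, then v₁(x₁,0) ≥ 0 for all x₁ ≥ 0. -/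
open MeasureTheory Real

/-- The Biot–Savart kernel on `ℝ²`: `K(x) = (1/(2π)) · (−x₂, x₁)/|x|²`. -/
noncomputable def biotSavartKernel (x : ℝ × ℝ) : ℝ × ℝ :=
  ((2 * Real.pi * (x.1 ^ 2 + x.2 ^ 2))⁻¹ * (-x.2),
   (2 * Real.pi * (x.1 ^ 2 + x.2 ^ 2))⁻¹ * x.1)

section aux

/-- Reflection in the first coordinate as a measurable equiv. -/
def reflFst : (ℝ × ℝ) ≃ᵐ (ℝ × ℝ) where
  toFun y := (-y.1, y.2)
  invFun y := (-y.1, y.2)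
  left_inv y := by simp
  right_inv y := by simp
  measurable_toFun := (measurable_fst.neg.prodMk measurable_snd : Measurable fun y : ℝ × ℝ => (-y.1, y.2))
  measurable_invFun := (measurable_fst.neg.prodMk measurable_snd : Measurable fun y : ℝ × ℝ => (-y.1, y.2))

/-- Reflection in the second coordinate as a measurable equiv. -/
def reflSnd : (ℝ × ℝ) ≃ᵐ (ℝ × ℝ) where
  toFun y := (y.1, -y.2)
  invFun y := (y.1, -y.2)
  left_inv y := by simp
  right_inv y := by simp
  measurable_toFun := (measurable_fst.prodMk measurable_snd.neg : Measurable fun y : ℝ × ℝ => (y.1, -y.2))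
  measurable_invFun := (measurable_fst.prodMk measurable_snd.neg : Measurable fun y : ℝ × ℝ => (y.1, -y.2))

lemma mpFst : MeasurePreserving (fun y : ℝ × ℝ => (-y.1, y.2)) volume volume := by
  have h := (Measure.measurePreserving_neg (volume : Measure ℝ)).prod
    (MeasurePreserving.id (volume : Measure ℝ))
  rw [← Measure.volume_eq_prod] at h
  exact h

lemma mpSnd : MeasurePreserving (fun y : ℝ × ℝ => (y.1, -y.2)) volume volume := by
  have h := (MeasurePreserving.id (volume : Measure ℝ)).prod
    (Measure.measurePreserving_neg (volume : Measure ℝ))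
  rw [← Measure.volume_eq_prod] at h
  exact h

lemma embFst : MeasurableEmbedding (fun y : ℝ × ℝ => (-y.1, y.2)) :=
  reflFst.measurableEmbedding

lemma embSnd : MeasurableEmbedding (fun y : ℝ × ℝ => (y.1, -y.2)) :=
  reflSnd.measurableEmbedding

lemma intFst (g : ℝ × ℝ → ℝ) : ∫ y : ℝ × ℝ, g (-y.1, y.2) = ∫ y, g y :=
  mpFst.integral_comp embFst g

lemma intSnd (g : ℝ × ℝ → ℝ) : ∫ y : ℝ × ℝ, g (y.1, -y.2) = ∫ y, g y :=
  mpSnd.integral_comp embSnd g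

lemma nullFst : (volume : Measure (ℝ × ℝ)) {y : ℝ × ℝ | y.1 = 0} = 0 := by
  have h : {y : ℝ × ℝ | y.1 = 0} = ({0} : Set ℝ) ×ˢ (Set.univ : Set ℝ) := by
    ext ⟨a, b⟩; simp [Set.mem_prod, eq_comm]
  rw [h, Measure.volume_eq_prod, Measure.prod_prod]
  simp

lemma nullSnd : (volume : Measure (ℝ × ℝ)) {y : ℝ × ℝ | y.2 = 0} = 0 := by
  have h : {y : ℝ × ℝ | y.2 = 0} = (Set.univ : Set ℝ) ×ˢ ({0} : Set ℝ) := by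
    ext ⟨a, b⟩; simp [Set.mem_prod, eq_comm]
  rw [h, Measure.volume_eq_prod, Measure.prod_prod]
  simp

lemma aeFst : ∀ᵐ y : ℝ × ℝ, y.1 ≠ 0 := by
  rw [MeasureTheory.ae_iff]
  simpa using nullFst

lemma aeSnd : ∀ᵐ y : ℝ × ℝ, y.2 ≠ 0 := by
  rw [MeasureTheory.ae_iff]
  simpa using nullSnd

/-- If `f ∘ reflection` equals `-f` a.e., the integral vanishes. -/
lemma integral_zero_of_anti_fst (f : ℝ × ℝ → ℝ)
    (h : ∀ y : ℝ × ℝ, y.1 ≠ 0 → f (-y.1, y.2) = -f y) : ∫ y, f y = 0 := by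
  have h1 : ∫ y : ℝ × ℝ, f (-y.1, y.2) = ∫ y, f y := intFst f
  have h2 : ∫ y : ℝ × ℝ, f (-y.1, y.2) = ∫ y : ℝ × ℝ, -f y := by
    refine integral_congr_ae ?_
    filter_upwards [aeFst] with y hy using h y hy
  rw [h2, integral_neg] at h1
  linarith

lemma integral_zero_of_anti_snd (f : ℝ × ℝ → ℝ)
    (h : ∀ y : ℝ × ℝ, y.2 ≠ 0 → f (y.1, -y.2) = -f y) : ∫ y, f y = 0 := by
  have h1 : ∫ y : ℝ × ℝ, f (y.1, -y.2) = ∫ y, f y := intSnd f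
  have h2 : ∫ y : ℝ × ℝ, f (y.1, -y.2) = ∫ y : ℝ × ℝ, -f y := by
    refine integral_congr_ae ?_
    filter_upwards [aeSnd] with y hy using h y hy
  rw [h2, integral_neg] at h1
  linarith

end aux

theorem stmt0 (ω : ℝ × ℝ → ℝ) (hsupp : HasCompactSupport ω)
    (hL2 : MemLp ω 2 (volume : Measure (ℝ × ℝ)))
    (hodd1 : ∀ x₁ x₂ : ℝ, x₁ ≠ 0 → ω (-x₁, x₂) = -ω (x₁, x₂))
    (hodd2 : ∀ x₁ x₂ : ℝ, x₂ ≠ 0 → ω (x₁, -x₂) = -ω (x₁, x₂))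
    (v : ℝ × ℝ → ℝ × ℝ)
    (hv : ∀ x : ℝ × ℝ, v x = ∫ y : ℝ × ℝ, ω y • biotSavartKernel (x - y)) :
    (∀ x₁ : ℝ, (v (x₁, 0)).2 = 0) ∧
    (∀ x₂ : ℝ, (v (0, x₂)).1 = 0) ∧
    v (0, 0) = (0, 0) ∧
    ((∀ y : ℝ × ℝ, 0 ≤ y.1 → 0 ≤ y.2 → 0 ≤ ω y) →
      ∀ x₁ : ℝ, 0 ≤ x₁ → 0 ≤ (v (x₁, 0)).1) := by
  -- Part 1
  have part1 : ∀ x₁ : ℝ, (v (x₁, 0)).2 = 0 := by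
    intro x₁
    rw [hv]
    set g : ℝ × ℝ → ℝ × ℝ := fun y => ω y • biotSavartKernel ((x₁, 0) - y) with hg
    by_cases hInt : Integrable g (volume : Measure (ℝ × ℝ))
    · have hc := (ContinuousLinearMap.snd ℝ ℝ ℝ).integral_comp_comm hInt
      simp only [ContinuousLinearMap.coe_snd'] at hc
      rw [← hc]
      refine integral_zero_of_anti_snd (fun y => (g y).2) ?_
      intro y hy
      simp only [hg, biotSavartKernel, Prod.smul_mk, smul_eq_mul, Prod.mk_sub_mk,
        Prod.fst_sub, Prod.snd_sub, Prod.fst, Prod.snd]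
      rw [hodd2 y.1 y.2 hy, ← Prod.mk.eta (p := y)]
      ring_nf
    · rw [integral_undef hInt]
      rfl
  -- Part 2
  have part2 : ∀ x₂ : ℝ, (v (0, x₂)).1 = 0 := by
    intro x₂
    rw [hv]
    set g : ℝ × ℝ → ℝ × ℝ := fun y => ω y • biotSavartKernel ((0, x₂) - y) with hg
    by_cases hInt : Integrable g (volume : Measure (ℝ × ℝ))
    · have hc := (ContinuousLinearMap.fst ℝ ℝ ℝ).integral_comp_comm hInt
      simp only [ContinuousLinearMap.coe_fst'] at hc
      rw [← hc]
      refine integral_zero_of_anti_fst (fun y => (g y).1) ?_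
      intro y hy
      simp only [hg, biotSavartKernel, Prod.smul_mk, smul_eq_mul, Prod.mk_sub_mk,
        Prod.fst_sub, Prod.snd_sub, Prod.fst, Prod.snd]
      rw [hodd1 y.1 y.2 hy, ← Prod.mk.eta (p := y)]
      ring_nf
    · rw [integral_undef hInt]
      rfl
  refine ⟨part1, part2, ?_, ?_⟩
  · -- Part 3
    have h1 := part2 0
    have h2 := part1 0
    exact Prod.ext h1 h2
  · -- Part 4
    intro hpos x₁ hx₁
    rw [hv]
    set g : ℝ × ℝ → ℝ × ℝ := fun y => ω y • biotSavartKernel ((x₁, 0) - y) with hg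
    by_cases hInt : Integrable g (volume : Measure (ℝ × ℝ))
    · have hc := (ContinuousLinearMap.fst ℝ ℝ ℝ).integral_comp_comm hInt
      simp only [ContinuousLinearMap.coe_fst'] at hc
      rw [← hc]
      set f : ℝ × ℝ → ℝ := fun y => (g y).1 with hf
      have hfInt : Integrable f volume :=
        (ContinuousLinearMap.fst ℝ ℝ ℝ).integrable_comp hInt
      -- symmetrization
      set F : ℝ × ℝ → ℝ := fun y =>
        f y + f (-y.1, y.2) + f (y.1, -y.2) + f (-y.1, -y.2) with hF
      have hI1 : Integrable (fun y : ℝ × ℝ => f (-y.1, y.2)) volume :=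
        (mpFst.integrable_comp_emb embFst).2 hfInt
      have hI2 : Integrable (fun y : ℝ × ℝ => f (y.1, -y.2)) volume :=
        (mpSnd.integrable_comp_emb embSnd).2 hfInt
      have hI3 : Integrable (fun y : ℝ × ℝ => f (-y.1, -y.2)) volume := by
        have := (mpSnd.integrable_comp_emb embSnd).2 hI1
        simpa [Function.comp_def] using this
      have hA1 : Integrable (fun y : ℝ × ℝ => f y + f (-y.1, y.2)) volume :=
        hfInt.add hI1
      have hA2 : Integrable (fun y : ℝ × ℝ => (f y + f (-y.1, y.2)) + f (y.1, -y.2)) volume :=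
        hA1.add hI2
      have hFint : ∫ y, F y = 4 * ∫ y, f y := by
        simp only [hF]
        rw [integral_add hA2 hI3, integral_add hA1 hI2, integral_add hfInt hI1]
        rw [intFst f, intSnd f]
        have h3 : ∫ y : ℝ × ℝ, f (-y.1, -y.2) = ∫ y, f y := by
          have := intSnd (fun y => f (-y.1, y.2))
          rw [intFst f] at this
          simpa using this
        rw [h3]; ring
      -- pointwise nonnegativity of F off the axes
      have key : ∀ a b : ℝ, 0 < a → 0 < b →
          0 ≤ f (a, b) + f (-a, b) + f (a, -b) + f (-a, -b) := by
        intro a b ha hb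
        have hω : 0 ≤ ω (a, b) := hpos (a, b) ha.le hb.le
        have hna : (-a : ℝ) ≠ 0 := by simpa using ha.ne'
        have e1 : ω (-a, b) = -ω (a, b) := hodd1 a b ha.ne'
        have e2 : ω (a, -b) = -ω (a, b) := hodd2 a b hb.ne'
        have e3 : ω (-a, -b) = ω (a, b) := by
          rw [hodd2 (-a) b hb.ne', hodd1 a b ha.ne']; ring
        simp only [hf, hg, biotSavartKernel, Prod.smul_mk, smul_eq_mul, Prod.mk_sub_mk,
          e1, e2, e3]
        have hb2 : (0:ℝ) < (0 - b) ^ 2 := by nlinarith [mul_pos hb hb]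
        have hA : (0:ℝ) < 2 * Real.pi * ((x₁ - a) ^ 2 + (0 - b) ^ 2) := by
          nlinarith [Real.pi_pos, sq_nonneg (x₁ - a), hb2,
            mul_pos Real.pi_pos hb2, mul_nonneg Real.pi_pos.le (sq_nonneg (x₁ - a))]
        have hB : (0:ℝ) < 2 * Real.pi * ((x₁ - -a) ^ 2 + (0 - b) ^ 2) := by
          nlinarith [Real.pi_pos, sq_nonneg (x₁ - -a), hb2,
            mul_pos Real.pi_pos hb2, mul_nonneg Real.pi_pos.le (sq_nonneg (x₁ - -a))]
        have hAB : 2 * Real.pi * ((x₁ - a) ^ 2 + (0 - b) ^ 2)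
            ≤ 2 * Real.pi * ((x₁ - -a) ^ 2 + (0 - b) ^ 2) := by
          nlinarith [Real.pi_pos, mul_nonneg (mul_nonneg Real.pi_pos.le hx₁) ha.le]
        have hineq : (2 * Real.pi * ((x₁ - -a) ^ 2 + (0 - b) ^ 2))⁻¹
            ≤ (2 * Real.pi * ((x₁ - a) ^ 2 + (0 - b) ^ 2))⁻¹ :=
          inv_anti₀ hA hAB
        have kk : 0 ≤ ω (a, b) * b *
            ((2 * Real.pi * ((x₁ - a) ^ 2 + (0 - b) ^ 2))⁻¹
              - (2 * Real.pi * ((x₁ - -a) ^ 2 + (0 - b) ^ 2))⁻¹) :=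
          mul_nonneg (mul_nonneg hω hb.le) (sub_nonneg.mpr hineq)
        ring_nf at kk ⊢
        nlinarith [kk]
      have hFsymm : ∀ y : ℝ × ℝ, y.1 ≠ 0 → y.2 ≠ 0 → 0 ≤ F y := by
        intro y h1 h2
        have base : ∀ a b : ℝ, 0 < a → 0 < b → 0 ≤ F (a, b) := by
          intro a b ha hb
          simpa [hF] using key a b ha hb
        rcases lt_or_gt_of_ne h1 with h1' | h1' <;>
          rcases lt_or_gt_of_ne h2 with h2' | h2'
        · have := key (-y.1) (-y.2) (by linarith) (by linarith)
          simp only [neg_neg] at this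
          simpa [hF] using by linarith [this]
        · have := key (-y.1) y.2 (by linarith) h2'
          simp only [neg_neg] at this
          simpa [hF] using by linarith [this]
        · have := key y.1 (-y.2) h1' (by linarith)
          simp only [neg_neg] at this
          simpa [hF] using by linarith [this]
        · exact base y.1 y.2 h1' h2'
      have hFae : ∀ᵐ y : ℝ × ℝ, 0 ≤ F y := by
        filter_upwards [aeFst, aeSnd] with y h1 h2 using hFsymm y h1 h2
      have hFnn : 0 ≤ ∫ y, F y := integral_nonneg_of_ae hFae
      rw [hFint] at hFnn
      linarith
    · rw [integral_undef hInt]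
      norm_num
end

section
/- For every λ ∈ (0,1) there exists c > 0, depending only on λ, with the following property: for every r ∈ (0,1), let ω : ℝ² → ℝ be given by ω(x) = 2π·sgn(x₁)·sgn(x₂) when max(|x₁|,|x₂|) ≤ r and ω(x) = 0 otherwise (so ω equals 2π·1_{[0,r]×[0,r]} on the first quadrant and is odd in each variable), and let v = K * ω. Then v₁(x₁,0) ≥ 2(1−λ)·x₁·log(1/x₁) for all x₁ ∈ (0, r^{1/λ}] with x₁ < c. -/
open MeasureTheory Real Set intervalIntegral

lemma aux_sign_mul_self (y : ℝ) : Real.sign y * y = |y| := by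
  rcases lt_trichotomy y 0 with h|h|h
  · rw [Real.sign_of_neg h, abs_of_neg h]; ring
  · simp [h]
  · rw [Real.sign_of_pos h, abs_of_pos h]; ring

lemma aux_measurable_sign : Measurable Real.sign := by
  unfold Real.sign
  exact Measurable.ite (measurableSet_lt measurable_id measurable_const) measurable_const
    (Measurable.ite (measurableSet_lt measurable_const measurable_id) measurable_const
      measurable_const)

lemma aux_abs_sign_le (y : ℝ) : |Real.sign y| ≤ 1 := by
  rcases Real.sign_apply_eq y with h|h|h <;> rw [h] <;> norm_num

lemma aux_abs_log_le {x : ℝ} (hx : 0 < x) : |Real.log x| ≤ 4 * x ^ (-(1:ℝ)/2) + x := by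
  have hppos : (0:ℝ) ≤ x ^ (-(1:ℝ)/2) := Real.rpow_nonneg hx.le _
  rcases le_or_gt 1 x with h|h
  · have h0 : (0:ℝ) ≤ Real.log x := Real.log_nonneg h
    rw [abs_of_nonneg h0]
    have := Real.log_le_sub_one_of_pos hx
    nlinarith
  · have h0 : Real.log x ≤ 0 := Real.log_nonpos hx.le h.le
    rw [abs_of_nonpos h0]
    have h4 : Real.log (x ^ ((1:ℝ)/4)) ≤ x ^ ((1:ℝ)/4) - 1 :=
      Real.log_le_sub_one_of_pos (Real.rpow_pos_of_pos hx _)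
    rw [Real.log_rpow hx] at h4
    have hle : x ^ (-(1:ℝ)/4) ≤ x ^ (-(1:ℝ)/2) :=
      Real.rpow_le_rpow_of_exponent_ge hx h.le (by norm_num)
    have hneg : x ^ (-(1:ℝ)/4) = (x ^ ((1:ℝ)/4))⁻¹ := by
      rw [← Real.rpow_neg hx.le]; norm_num
    -- -log x ≤ 4 * (x ^ (1/4))... need: -(1/4) log x ≤ x^{-1/4}
    have h5 : Real.log (x ^ (-(1:ℝ)/4)) ≤ x ^ (-(1:ℝ)/4) - 1 :=
      Real.log_le_sub_one_of_pos (Real.rpow_pos_of_pos hx _)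
    rw [Real.log_rpow hx] at h5
    nlinarith
lemma aux_intervalIntegrable_log (a b : ℝ) : IntervalIntegrable Real.log volume a b := by
  suffices h : ∀ c : ℝ, IntervalIntegrable Real.log volume 0 c by
    exact ((h a).symm.trans (h b))
  have hpos : ∀ c : ℝ, 0 ≤ c → IntervalIntegrable Real.log volume 0 c := by
    intro c hc
    have hg : IntervalIntegrable (fun x : ℝ => 4 * x ^ (-(1:ℝ)/2) + x) volume 0 c :=
      ((intervalIntegrable_rpow' (by norm_num)).const_mul 4).add intervalIntegral.intervalIntegrable_id
    refine hg.mono_fun' Real.measurable_log.aestronglyMeasurable ?_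
    rw [uIoc_of_le hc]
    filter_upwards [ae_restrict_mem measurableSet_Ioc] with x hx
    have h1 := aux_abs_log_le hx.1
    simpa [Real.norm_eq_abs] using h1
  intro c
  rcases le_or_gt 0 c with hc|hc
  · exact hpos c hc
  · have h1 : IntervalIntegrable Real.log volume 0 (-c) := hpos _ (by linarith)
    rw [IntervalIntegrable.iff_comp_neg] at h1
    have : (fun x : ℝ => Real.log (-x)) = Real.log := by
      funext x; rw [Real.log_neg_eq_log]
    rw [this] at h1
    simpa using h1
-- L1
lemma aux_int_abs (a r : ℝ) (ha : a ≠ 0) (hr : 0 ≤ r) :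
    ∫ t in (-r)..r, |t| * (a^2 + t^2)⁻¹ = Real.log (a^2 + r^2) - Real.log (a^2) := by
  have hden : ∀ t : ℝ, a^2 + t^2 ≠ 0 := by
    intro t; positivity
  have hcont : Continuous fun t : ℝ => t * (a^2 + t^2)⁻¹ := by
    exact continuous_id.mul ((continuous_const.add (continuous_pow 2)).inv₀ hden)
  have hconta : Continuous fun t : ℝ => |t| * (a^2 + t^2)⁻¹ :=
    continuous_abs.mul ((continuous_const.add (continuous_pow 2)).inv₀ hden)
  have hFTC : ∫ t in (0:ℝ)..r, t * (a^2 + t^2)⁻¹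
      = (1/2) * Real.log (a^2 + r^2) - (1/2) * Real.log (a^2 + 0^2) := by
    have hderiv : ∀ t ∈ uIcc (0:ℝ) r,
        HasDerivAt (fun t : ℝ => (1/2) * Real.log (a^2 + t^2)) (t * (a^2 + t^2)⁻¹) t := by
      intro t _
      have h1 : HasDerivAt (fun t : ℝ => a^2 + t^2) (2*t) t := by
        simpa using ((hasDerivAt_pow 2 t).const_add (a^2))
      have h2 := (Real.hasDerivAt_log (hden t)).comp t h1
      have h3 := h2.const_mul (1/2 : ℝ)
      refine h3.congr_deriv ?_
      ring
    simpa using integral_eq_sub_of_hasDerivAt hderiv (hcont.intervalIntegrable 0 r)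
  have hsplit : ∫ t in (-r)..r, |t| * (a^2 + t^2)⁻¹
      = (∫ t in (-r)..(0:ℝ), |t| * (a^2 + t^2)⁻¹) + ∫ t in (0:ℝ)..r, |t| * (a^2 + t^2)⁻¹ :=
    (integral_add_adjacent_intervals (hconta.intervalIntegrable _ _)
      (hconta.intervalIntegrable _ _)).symm
  have hneg : (∫ t in (-r)..(0:ℝ), |t| * (a^2 + t^2)⁻¹) = ∫ t in (0:ℝ)..r, |t| * (a^2 + t^2)⁻¹ := by
    have h := intervalIntegral.integral_comp_neg (a := (0:ℝ)) (b := r)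
      (f := fun t : ℝ => |t| * (a^2 + t^2)⁻¹)
    simp only [abs_neg, neg_sq, neg_zero] at h
    exact h.symm
  have habs : ∀ᵐ t ∂(volume : Measure ℝ), t ∈ Set.uIoc (0:ℝ) r →
      |t| * (a^2 + t^2)⁻¹ = t * (a^2 + t^2)⁻¹ := by
    filter_upwards with t ht
    rw [Set.uIoc_of_le hr] at ht
    rw [abs_of_pos ht.1]
  rw [hsplit, hneg, intervalIntegral.integral_congr_ae habs, hFTC]
  simp
  ring

-- L2
lemma aux_int_poisson (a r : ℝ) (ha : 0 < a) (hr : 0 ≤ r) :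
    (∫ t in (-r)..r, a * (a^2 + t^2)⁻¹) ≤ π := by
  have hden : ∀ t : ℝ, a^2 + t^2 ≠ 0 := fun t => by positivity
  have hcont : Continuous fun t : ℝ => a * (a^2 + t^2)⁻¹ :=
    continuous_const.mul ((continuous_const.add (continuous_pow 2)).inv₀ hden)
  have hFTC : ∫ t in (-r)..r, a * (a^2 + t^2)⁻¹
      = Real.arctan (r/a) - Real.arctan ((-r)/a) := by
    have hderiv : ∀ t ∈ uIcc (-r) r,
        HasDerivAt (fun t : ℝ => Real.arctan (t/a)) (a * (a^2 + t^2)⁻¹) t := by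
      intro t _
      have h1 : HasDerivAt (fun t : ℝ => t/a) (1/a) t := (hasDerivAt_id t).div_const a
      have h2 := (Real.hasDerivAt_arctan (t/a)).comp t h1
      refine h2.congr_deriv ?_
      have ha' : a ≠ 0 := ha.ne'
      field_simp
    simpa using integral_eq_sub_of_hasDerivAt hderiv (hcont.intervalIntegrable _ _)
  rw [hFTC]
  have h1 := Real.arctan_lt_pi_div_two (r/a)
  have h2 := Real.neg_pi_div_two_lt_arctan ((-r)/a)
  linarith

set_option maxHeartbeats 1000000 in
theorem stmt1 (lam : ℝ) (hlam : lam ∈ Set.Ioo (0:ℝ) 1) :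
    ∃ c > 0, ∀ r ∈ Set.Ioo (0:ℝ) 1, ∀ ω : ℝ × ℝ → ℝ,
      (∀ x : ℝ × ℝ, ω x =
        if max |x.1| |x.2| ≤ r then 2 * Real.pi * Real.sign x.1 * Real.sign x.2 else 0) →
      ∀ v : ℝ × ℝ → ℝ × ℝ,
        (∀ x : ℝ × ℝ, v x = ∫ y : ℝ × ℝ, ω y • biotSavartKernel (x - y)) →
        ∀ x₁ : ℝ, x₁ ∈ Set.Ioc 0 (r ^ (1 / lam)) → x₁ < c →
          2 * (1 - lam) * x₁ * Real.log (1 / x₁) ≤ (v (x₁, 0)).1 := by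
  obtain ⟨hlam0, hlam1⟩ := hlam
  have h1lam : 0 < 1 - lam := by linarith
  refine ⟨Real.exp (-(Real.log 5) / (1 - lam)), Real.exp_pos _, ?_⟩
  intro r hr ω hω v hv x₁ hx hxc
  obtain ⟨hr0, hr1⟩ := hr
  obtain ⟨hx0, hxr⟩ := hx
  have hlog5 : 0 < Real.log 5 := Real.log_pos (by norm_num)
  have hL : Real.log x₁ < -(Real.log 5) / (1 - lam) := by
    have h := Real.log_lt_log hx0 hxc
    rwa [Real.log_exp] at h
  have hLneg : Real.log x₁ < 0 := by
    have : (0:ℝ) < Real.log 5 / (1 - lam) := by positivity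
    calc Real.log x₁ < -(Real.log 5) / (1-lam) := hL
      _ = -(Real.log 5 / (1-lam)) := by ring
      _ < 0 := by linarith
  have hx1 : x₁ < 1 := (Real.log_neg_iff hx0).mp hLneg
  have hlamlog : lam * Real.log x₁ ≤ Real.log r := by
    have h1 : Real.log x₁ ≤ Real.log (r ^ (1/lam)) := Real.log_le_log hx0 hxr
    rw [Real.log_rpow hr0] at h1
    have h2 := mul_le_mul_of_nonneg_left h1 hlam0.le
    calc lam * Real.log x₁ ≤ lam * (1/lam * Real.log r) := h2
      _ = Real.log r := by field_simp
  have h1L : (1 - lam) * Real.log x₁ < -(Real.log 5) := by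
    have := (mul_lt_mul_iff_right₀ h1lam).mpr hL
    calc (1-lam) * Real.log x₁ < (1-lam) * (-(Real.log 5)/(1-lam)) := this
      _ = -(Real.log 5) := by field_simp
  have hx₁r : x₁ ≤ r / 2 := by
    have hlog2 : Real.log 2 ≤ Real.log 5 := Real.log_le_log (by norm_num) (by norm_num)
    have h3 : Real.log x₁ ≤ Real.log r - Real.log 2 := by nlinarith
    have h4 := Real.exp_le_exp.mpr h3
    rwa [Real.exp_log hx0, Real.exp_sub, Real.exp_log hr0,
      Real.exp_log (by norm_num : (0:ℝ) < 2)] at h4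
  have hrx : x₁ ≤ r := le_trans hx₁r (by linarith)
  have hx1r : x₁ < r := lt_of_le_of_lt hx₁r (by linarith)
  -- the cleaned integrand components
  set g : ℝ → ℝ := fun u => Real.log (u^2 + r^2) - Real.log (u^2) with hg
  set G : ℝ × ℝ → ℝ := fun y =>
    if |y.1| ≤ r ∧ |y.2| ≤ r then Real.sign y.1 * (|y.2| * ((x₁ - y.1)^2 + y.2^2)⁻¹) else 0
    with hGdef
  set G₂ : ℝ × ℝ → ℝ := fun y =>
    if |y.1| ≤ r ∧ |y.2| ≤ r then
      Real.sign y.1 * Real.sign y.2 * ((x₁ - y.1) * ((x₁ - y.1)^2 + y.2^2)⁻¹) else 0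
    with hG2def
  -- pointwise identification of the integrand
  have hfun : ∀ y : ℝ × ℝ, ω y • biotSavartKernel ((x₁, 0) - y) = (G y, G₂ y) := by
    intro y
    rw [hω y]
    have hsub : (x₁, (0:ℝ)) - y = (x₁ - y.1, -y.2) := by
      simp [Prod.ext_iff]
    rw [hsub]
    simp only [biotSavartKernel, Prod.smul_mk, smul_eq_mul, hGdef, hG2def]
    simp only [max_le_iff]
    split_ifs with h
    · have hsq : (-y.2)^2 = y.2^2 := by ring
      rcases eq_or_ne ((x₁ - y.1)^2 + y.2^2) 0 with hD|hD
      · have hy2sq : y.2^2 = 0 := by nlinarith [sq_nonneg (x₁ - y.1), sq_nonneg y.2]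
        have hy2 : y.2 = 0 := by
          exact pow_eq_zero_iff (n := 2) (by norm_num) |>.mp hy2sq
        have hy1 : x₁ - y.1 = 0 := by nlinarith [sq_nonneg (x₁ - y.1)]
        simp [hy2, hy1, Prod.ext_iff]
      · have hpi : (2:ℝ) * Real.pi ≠ 0 := by positivity
        refine Prod.ext ?_ ?_
        · show 2 * Real.pi * Real.sign y.1 * Real.sign y.2 *
            ((2 * Real.pi * ((x₁ - y.1)^2 + (-y.2)^2))⁻¹ * (-(-y.2)))
            = Real.sign y.1 * (|y.2| * ((x₁ - y.1)^2 + y.2^2)⁻¹)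
          rw [← aux_sign_mul_self y.2, hsq, neg_neg]
          field_simp
        · show 2 * Real.pi * Real.sign y.1 * Real.sign y.2 *
            ((2 * Real.pi * ((x₁ - y.1)^2 + (-y.2)^2))⁻¹ * (x₁ - y.1))
            = Real.sign y.1 * Real.sign y.2 * ((x₁ - y.1) * ((x₁ - y.1)^2 + y.2^2)⁻¹)
          rw [hsq]
          field_simp
    · simp [Prod.ext_iff]
  -- measurability
  have hset : MeasurableSet {y : ℝ × ℝ | |y.1| ≤ r ∧ |y.2| ≤ r} := by
    exact (measurableSet_le (measurable_fst.abs) measurable_const).inter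
      (measurableSet_le (measurable_snd.abs) measurable_const)
  have hDm : Measurable fun y : ℝ × ℝ => ((x₁ - y.1)^2 + y.2^2)⁻¹ :=
    (((measurable_const.sub measurable_fst).pow_const 2).add
      (measurable_snd.pow_const 2)).inv
  have hGm : Measurable G := by
    rw [hGdef]
    exact Measurable.ite hset
      ((aux_measurable_sign.comp measurable_fst).mul (measurable_snd.abs.mul hDm))
      measurable_const
  have hG2m : Measurable G₂ := by
    rw [hG2def]
    exact Measurable.ite hset
      (((aux_measurable_sign.comp measurable_fst).mul
        (aux_measurable_sign.comp measurable_snd)).mul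
        ((measurable_const.sub measurable_fst).mul hDm))
      measurable_const
  -- interval integrability of g
  have hg_int : ∀ p q : ℝ, IntervalIntegrable g volume p q := by
    intro p q
    have h1 : Continuous fun u : ℝ => Real.log (u^2 + r^2) := by
      apply Continuous.log ((continuous_pow 2).add continuous_const)
      intro u; show u^2 + r^2 ≠ 0; positivity
    have h2 : (fun u : ℝ => Real.log (u^2)) = fun u : ℝ => 2 * Real.log u := by
      funext u
      rw [Real.log_pow]
      norm_num
    have h3 : IntervalIntegrable (fun u : ℝ => Real.log (u^2)) volume p q := by
      rw [h2]
      exact (aux_intervalIntegrable_log p q).const_mul 2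
    exact (h1.intervalIntegrable p q).sub h3
  -- inner integral evaluation
  have hkey : ∀ y₁ : ℝ, y₁ ≠ x₁ →
      ∫ t in (-r)..r, |t| * ((x₁ - y₁)^2 + t^2)⁻¹ = g (x₁ - y₁) := by
    intro y₁ h
    exact aux_int_abs _ r (sub_ne_zero_of_ne (Ne.symm h)) hr0.le
  -- integrability of G and G₂
  have hae_ne : ∀ (z : ℝ), ∀ᵐ y₁ : ℝ, y₁ ≠ z := by
    intro z
    rw [MeasureTheory.ae_iff]
    have hs : {a : ℝ | ¬ a ≠ z} = {z} := by ext a; simp [not_not]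
    rw [hs]
    exact measure_singleton z
  have hsliceG : ∀ y₁ : ℝ, |y₁| ≤ r → (fun t => G (y₁, t)) =
      Set.indicator (Set.Icc (-r) r)
        (fun t => Real.sign y₁ * (|t| * ((x₁ - y₁)^2 + t^2)⁻¹)) := by
    intro y₁ h
    funext t
    by_cases ht : |t| ≤ r
    · rw [hGdef]
      simp only
      rw [if_pos ⟨h, ht⟩, Set.indicator_of_mem (Set.mem_Icc.mpr (abs_le.mp ht))]
    · rw [hGdef]
      simp only
      rw [if_neg (fun hc => ht hc.2),
        Set.indicator_of_notMem (fun hc => ht (abs_le.mpr (Set.mem_Icc.mp hc)))]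
  have hsliceG0 : ∀ y₁ : ℝ, ¬ |y₁| ≤ r → (fun t => G (y₁, t)) = fun _ => (0:ℝ) := by
    intro y₁ h
    funext t
    rw [hGdef]
    simp only
    rw [if_neg (fun hc => h hc.1)]
  have hGaesm : AEStronglyMeasurable G ((volume : Measure ℝ).prod volume) := by
    rw [← MeasureTheory.Measure.volume_eq_prod]
    exact hGm.aestronglyMeasurable
  have hGslice_int : ∀ y₁ : ℝ, y₁ ≠ x₁ → Integrable (fun t => G (y₁, t)) volume := by
    intro y₁ hy₁
    by_cases h : |y₁| ≤ r
    · rw [hsliceG y₁ h]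
      refine IntegrableOn.integrable_indicator ?_ measurableSet_Icc
      refine Continuous.integrableOn_Icc ?_
      have hb : x₁ - y₁ ≠ 0 := sub_ne_zero_of_ne (Ne.symm hy₁)
      have hden : ∀ t : ℝ, (x₁ - y₁)^2 + t^2 ≠ 0 := by intro t; positivity
      exact continuous_const.mul
        (continuous_abs.mul ((continuous_const.add (continuous_pow 2)).inv₀ hden))
    · rw [hsliceG0 y₁ h]
      exact integrable_zero _ _ _
  have hGnormint : ∀ y₁ : ℝ, y₁ ≠ x₁ → |y₁| ≤ r →
      (∫ t : ℝ, ‖G (y₁, t)‖) ≤ g (x₁ - y₁) := by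
    intro y₁ hy₁ h
    have hb : x₁ - y₁ ≠ 0 := sub_ne_zero_of_ne (Ne.symm hy₁)
    have hden : ∀ t : ℝ, (x₁ - y₁)^2 + t^2 ≠ 0 := by intro t; positivity
    have hcont : Continuous fun t : ℝ => |t| * ((x₁ - y₁)^2 + t^2)⁻¹ :=
      continuous_abs.mul ((continuous_const.add (continuous_pow 2)).inv₀ hden)
    have hint2 : Integrable
        (Set.indicator (Set.Icc (-r) r) (fun t : ℝ => |t| * ((x₁ - y₁)^2 + t^2)⁻¹)) volume :=
      (hcont.integrableOn_Icc).integrable_indicator measurableSet_Icc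
    have hle : ∀ t : ℝ, ‖G (y₁, t)‖ ≤
        Set.indicator (Set.Icc (-r) r) (fun t : ℝ => |t| * ((x₁ - y₁)^2 + t^2)⁻¹) t := by
      intro t
      rw [congrFun (hsliceG y₁ h) t]
      by_cases ht : t ∈ Set.Icc (-r) r
      · rw [Set.indicator_of_mem ht, Set.indicator_of_mem ht, Real.norm_eq_abs, abs_mul]
        have h1 : |Real.sign y₁| ≤ 1 := aux_abs_sign_le y₁
        have h2 : |(|t| * ((x₁ - y₁)^2 + t^2)⁻¹)| = |t| * ((x₁ - y₁)^2 + t^2)⁻¹ := by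
          rw [abs_of_nonneg]; positivity
        rw [h2]
        have h3 : (0:ℝ) ≤ |t| * ((x₁ - y₁)^2 + t^2)⁻¹ := by positivity
        calc |Real.sign y₁| * (|t| * ((x₁ - y₁)^2 + t^2)⁻¹)
            ≤ 1 * (|t| * ((x₁ - y₁)^2 + t^2)⁻¹) := mul_le_mul_of_nonneg_right h1 h3
          _ = |t| * ((x₁ - y₁)^2 + t^2)⁻¹ := one_mul _
      · rw [Set.indicator_of_notMem ht, Set.indicator_of_notMem ht]
        simp
    calc (∫ t : ℝ, ‖G (y₁, t)‖)
        ≤ ∫ t : ℝ, Set.indicator (Set.Icc (-r) r)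
            (fun t : ℝ => |t| * ((x₁ - y₁)^2 + t^2)⁻¹) t :=
          integral_mono ((hGslice_int y₁ hy₁).norm) hint2 hle
      _ = ∫ t in Set.Icc (-r) r, |t| * ((x₁ - y₁)^2 + t^2)⁻¹ :=
          integral_indicator measurableSet_Icc
      _ = ∫ t in Set.Ioc (-r) r, |t| * ((x₁ - y₁)^2 + t^2)⁻¹ :=
          integral_Icc_eq_integral_Ioc
      _ = ∫ t in (-r)..r, |t| * ((x₁ - y₁)^2 + t^2)⁻¹ :=
          (intervalIntegral.integral_of_le (by linarith)).symm
      _ = g (x₁ - y₁) := hkey y₁ hy₁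
  have hbound_int : Integrable
      (Set.indicator (Set.Icc (-r) r) (fun y₁ : ℝ => g (x₁ - y₁))) volume := by
    have h1 : IntervalIntegrable (fun y₁ : ℝ => g (x₁ - y₁)) volume (x₁ - (x₁ + r)) (x₁ - (x₁ - r)) :=
      (hg_int (x₁ + r) (x₁ - r)).comp_sub_left x₁
    have h2 : IntervalIntegrable (fun y₁ : ℝ => g (x₁ - y₁)) volume (-r) r := by
      have e1 : x₁ - (x₁ + r) = -r := by ring
      have e2 : x₁ - (x₁ - r) = r := by ring
      rwa [e1, e2] at h1
    exact ((intervalIntegrable_iff_integrableOn_Icc_of_le (by linarith)).mp h2).integrable_indicator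
      measurableSet_Icc
  have hGint : Integrable G (volume : Measure (ℝ × ℝ)) := by
    rw [MeasureTheory.Measure.volume_eq_prod]
    refine (MeasureTheory.integrable_prod_iff hGaesm).mpr ⟨?_, ?_⟩
    · filter_upwards [hae_ne x₁] with y₁ hy₁
      exact hGslice_int y₁ hy₁
    · refine Integrable.mono' hbound_int (hGaesm.norm.integral_prod_right') ?_
      filter_upwards [hae_ne x₁] with y₁ hy₁
      by_cases h : |y₁| ≤ r
      · rw [Set.indicator_of_mem (Set.mem_Icc.mpr (abs_le.mp h))]
        have hnn : (0:ℝ) ≤ ∫ t : ℝ, ‖G (y₁, t)‖ :=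
          integral_nonneg (fun t => norm_nonneg _)
        rw [Real.norm_of_nonneg hnn]
        exact hGnormint y₁ hy₁ h
      · rw [Set.indicator_of_notMem (fun hc => h (abs_le.mpr (Set.mem_Icc.mp hc)))]
        have hz : ∀ t : ℝ, G (y₁, t) = 0 := fun t => congrFun (hsliceG0 y₁ h) t
        simp [hz]
  have hsliceG2 : ∀ y₁ : ℝ, |y₁| ≤ r → (fun t => G₂ (y₁, t)) =
      Set.indicator (Set.Icc (-r) r)
        (fun t => Real.sign y₁ * Real.sign t * ((x₁ - y₁) * ((x₁ - y₁)^2 + t^2)⁻¹)) := by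
    intro y₁ h
    funext t
    by_cases ht : |t| ≤ r
    · rw [hG2def]
      simp only
      rw [if_pos ⟨h, ht⟩, Set.indicator_of_mem (Set.mem_Icc.mpr (abs_le.mp ht))]
    · rw [hG2def]
      simp only
      rw [if_neg (fun hc => ht hc.2),
        Set.indicator_of_notMem (fun hc => ht (abs_le.mpr (Set.mem_Icc.mp hc)))]
  have hsliceG20 : ∀ y₁ : ℝ, ¬ |y₁| ≤ r → (fun t => G₂ (y₁, t)) = fun _ => (0:ℝ) := by
    intro y₁ h
    funext t
    rw [hG2def]
    simp only
    rw [if_neg (fun hc => h hc.1)]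
  have hG2aesm : AEStronglyMeasurable G₂ ((volume : Measure ℝ).prod volume) := by
    rw [← MeasureTheory.Measure.volume_eq_prod]
    exact hG2m.aestronglyMeasurable
  have hG2bound : ∀ y₁ t : ℝ, |Real.sign y₁ * Real.sign t * ((x₁ - y₁) * ((x₁ - y₁)^2 + t^2)⁻¹)|
      ≤ |x₁ - y₁| * ((x₁ - y₁)^2 + t^2)⁻¹ := by
    intro y₁ t
    have hD : (0:ℝ) ≤ ((x₁ - y₁)^2 + t^2)⁻¹ := by positivity
    rw [abs_mul, abs_mul, abs_mul]
    have h1 : |Real.sign y₁| ≤ 1 := aux_abs_sign_le y₁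
    have h2 : |Real.sign t| ≤ 1 := aux_abs_sign_le t
    have h3 : |((x₁ - y₁)^2 + t^2)⁻¹| = ((x₁ - y₁)^2 + t^2)⁻¹ := abs_of_nonneg hD
    rw [h3]
    have h4 : (0:ℝ) ≤ |x₁ - y₁| * ((x₁ - y₁)^2 + t^2)⁻¹ := by positivity
    have h5 : |Real.sign y₁| * |Real.sign t| ≤ 1 :=
      mul_le_one₀ h1 (abs_nonneg _) h2
    calc |Real.sign y₁| * |Real.sign t| * (|x₁ - y₁| * ((x₁ - y₁)^2 + t^2)⁻¹)
        ≤ 1 * (|x₁ - y₁| * ((x₁ - y₁)^2 + t^2)⁻¹) := mul_le_mul_of_nonneg_right h5 h4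
      _ = _ := one_mul _
  have hG2slice_int : ∀ y₁ : ℝ, Integrable (fun t => G₂ (y₁, t)) volume := by
    intro y₁
    by_cases h : |y₁| ≤ r
    · have hmeas : AEStronglyMeasurable (fun t => G₂ (y₁, t)) volume :=
        (hG2m.comp measurable_prodMk_left).aestronglyMeasurable
      refine Integrable.mono'
        (g := Set.indicator (Set.Icc (-r) r) (fun _ => |x₁ - y₁| * ((x₁ - y₁)^2)⁻¹))
        ?_ hmeas ?_
      · exact (integrableOn_const measure_Icc_lt_top.ne).integrable_indicator
          measurableSet_Icc
      · filter_upwards with t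
        rw [congrFun (hsliceG2 y₁ h) t]
        by_cases ht : t ∈ Set.Icc (-r) r
        · rw [Set.indicator_of_mem ht, Set.indicator_of_mem ht, Real.norm_eq_abs]
          refine le_trans (hG2bound y₁ t) ?_
          rcases eq_or_ne (x₁ - y₁) 0 with hb|hb
          · simp [hb]
          · have hb2 : (0:ℝ) < (x₁ - y₁)^2 := by positivity
            have hle : ((x₁ - y₁)^2 + t^2)⁻¹ ≤ ((x₁ - y₁)^2)⁻¹ :=
              inv_anti₀ hb2 (by nlinarith [sq_nonneg t])
            exact mul_le_mul_of_nonneg_left hle (abs_nonneg _)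
        · rw [Set.indicator_of_notMem ht, Set.indicator_of_notMem ht]
          simp
    · rw [hsliceG20 y₁ h]
      exact integrable_zero _ _ _
  have hG2int : Integrable G₂ (volume : Measure (ℝ × ℝ)) := by
    rw [MeasureTheory.Measure.volume_eq_prod]
    refine (MeasureTheory.integrable_prod_iff hG2aesm).mpr ⟨?_, ?_⟩
    · filter_upwards with y₁
      exact hG2slice_int y₁
    · refine Integrable.mono'
        (g := Set.indicator (Set.Icc (-r) r) (fun _ => π))
        ((integrableOn_const measure_Icc_lt_top.ne).integrable_indicator
          measurableSet_Icc)
        (hG2aesm.norm.integral_prod_right') ?_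
      filter_upwards with y₁
      by_cases h : |y₁| ≤ r
      · rw [Set.indicator_of_mem (Set.mem_Icc.mpr (abs_le.mp h))]
        have hnn : (0:ℝ) ≤ ∫ t : ℝ, ‖G₂ (y₁, t)‖ := integral_nonneg (fun t => norm_nonneg _)
        rw [Real.norm_of_nonneg hnn]
        rcases eq_or_ne (x₁ - y₁) 0 with hb|hb
        · have hz : ∀ t : ℝ, G₂ (y₁, t) = 0 := by
            intro t
            rw [congrFun (hsliceG2 y₁ h) t]
            by_cases ht : t ∈ Set.Icc (-r) r
            · rw [Set.indicator_of_mem ht, hb]; ring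
            · rw [Set.indicator_of_notMem ht]
          simp only [hz]
          simp [Real.pi_pos.le]
        · set b := |x₁ - y₁| with hbdef
          have hbpos : 0 < b := abs_pos.mpr hb
          have hbsq : (x₁ - y₁)^2 = b^2 := (sq_abs _).symm
          have hden : ∀ t : ℝ, b^2 + t^2 ≠ 0 := by intro t; positivity
          have hcont : Continuous fun t : ℝ => b * (b^2 + t^2)⁻¹ :=
            continuous_const.mul ((continuous_const.add (continuous_pow 2)).inv₀ hden)
          have hint2 : Integrable
              (Set.indicator (Set.Icc (-r) r) (fun t : ℝ => b * (b^2 + t^2)⁻¹)) volume :=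
            (hcont.integrableOn_Icc).integrable_indicator measurableSet_Icc
          have hle : ∀ t : ℝ, ‖G₂ (y₁, t)‖ ≤
              Set.indicator (Set.Icc (-r) r) (fun t : ℝ => b * (b^2 + t^2)⁻¹) t := by
            intro t
            rw [congrFun (hsliceG2 y₁ h) t]
            by_cases ht : t ∈ Set.Icc (-r) r
            · rw [Set.indicator_of_mem ht, Set.indicator_of_mem ht, Real.norm_eq_abs]
              have := hG2bound y₁ t
              rw [hbsq] at this ⊢
              rw [← hbdef] at this
              exact this
            · rw [Set.indicator_of_notMem ht, Set.indicator_of_notMem ht]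
              simp
          calc (∫ t : ℝ, ‖G₂ (y₁, t)‖)
              ≤ ∫ t : ℝ, Set.indicator (Set.Icc (-r) r) (fun t : ℝ => b * (b^2 + t^2)⁻¹) t :=
                integral_mono ((hG2slice_int y₁).norm) hint2 hle
            _ = ∫ t in Set.Icc (-r) r, b * (b^2 + t^2)⁻¹ := integral_indicator measurableSet_Icc
            _ = ∫ t in Set.Ioc (-r) r, b * (b^2 + t^2)⁻¹ := integral_Icc_eq_integral_Ioc
            _ = ∫ t in (-r)..r, b * (b^2 + t^2)⁻¹ :=
                (intervalIntegral.integral_of_le (by linarith)).symm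
            _ ≤ π := aux_int_poisson b r hbpos hr0.le
      · rw [Set.indicator_of_notMem (fun hc => h (abs_le.mpr (Set.mem_Icc.mp hc)))]
        have hz : ∀ t : ℝ, G₂ (y₁, t) = 0 := fun t => congrFun (hsliceG20 y₁ h) t
        simp [hz]
  -- first component of velocity
  have hv1 : (v (x₁, 0)).1 = ∫ y₁ : ℝ, ∫ t : ℝ, G (y₁, t) := by
    rw [hv (x₁, 0)]
    have h1 : (fun y : ℝ × ℝ => ω y • biotSavartKernel ((x₁, (0:ℝ)) - y))
        = fun y => (G y, G₂ y) := funext hfun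
    rw [h1, integral_pair hGint hG2int]
    show (∫ y : ℝ × ℝ, G y) = _
    rw [MeasureTheory.Measure.volume_eq_prod]
    exact MeasureTheory.integral_prod G
      (by rwa [MeasureTheory.Measure.volume_eq_prod] at hGint)
  -- inner integral identification
  have hinner : (∫ y₁ : ℝ, ∫ t : ℝ, G (y₁, t))
      = ∫ y₁ in (-r)..r, Real.sign y₁ * g (x₁ - y₁) := by
    have h1 : (∫ y₁ : ℝ, ∫ t : ℝ, G (y₁, t))
        = ∫ y₁ : ℝ, Set.indicator (Set.Icc (-r) r)
            (fun y₁ => Real.sign y₁ * g (x₁ - y₁)) y₁ := by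
      refine MeasureTheory.integral_congr_ae ?_
      filter_upwards [hae_ne x₁] with y₁ hy₁
      by_cases h : |y₁| ≤ r
      · rw [Set.indicator_of_mem (Set.mem_Icc.mpr (abs_le.mp h))]
        rw [hsliceG y₁ h]
        rw [MeasureTheory.integral_indicator measurableSet_Icc,
          MeasureTheory.integral_Icc_eq_integral_Ioc,
          ← intervalIntegral.integral_of_le (by linarith : -r ≤ r),
          intervalIntegral.integral_const_mul, hkey y₁ hy₁]
      · rw [Set.indicator_of_notMem (fun hc => h (abs_le.mpr (Set.mem_Icc.mp hc)))]
        have hz : ∀ t : ℝ, G (y₁, t) = 0 := fun t => congrFun (hsliceG0 y₁ h) t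
        simp [hz]
    rw [h1, MeasureTheory.integral_indicator measurableSet_Icc,
      MeasureTheory.integral_Icc_eq_integral_Ioc,
      ← intervalIntegral.integral_of_le (by linarith : -r ≤ r)]
  -- rearrangement of the outer integral
  have hgm2 : Measurable g := by
    rw [hg]
    exact (Real.measurable_log.comp ((measurable_id.pow_const 2).add measurable_const)).sub
      (Real.measurable_log.comp (measurable_id.pow_const 2))
  have hsg_int : ∀ p q : ℝ,
      IntervalIntegrable (fun y₁ => Real.sign y₁ * g (x₁ - y₁)) volume p q := by
    intro p q
    have hgi : IntervalIntegrable (fun y₁ => g (x₁ - y₁)) volume p q := by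
      have h1 := (hg_int (x₁ - p) (x₁ - q)).comp_sub_left x₁
      have e1 : x₁ - (x₁ - p) = p := by ring
      have e2 : x₁ - (x₁ - q) = q := by ring
      rwa [e1, e2] at h1
    refine hgi.mono_fun
      ((aux_measurable_sign.mul
        (hgm2.comp (measurable_const.sub measurable_id))).aestronglyMeasurable) ?_
    filter_upwards with t
    rw [Real.norm_eq_abs, Real.norm_eq_abs, abs_mul]
    exact mul_le_of_le_one_left (abs_nonneg _) (aux_abs_sign_le t)
  have hgcomp_int : ∀ p q : ℝ, IntervalIntegrable (fun y₁ => g (x₁ - y₁)) volume p q := by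
    intro p q
    have h1 := (hg_int (x₁ - p) (x₁ - q)).comp_sub_left x₁
    have e1 : x₁ - (x₁ - p) = p := by ring
    have e2 : x₁ - (x₁ - q) = q := by ring
    rwa [e1, e2] at h1
  have houter : (∫ y₁ in (-r)..r, Real.sign y₁ * g (x₁ - y₁))
      = (∫ u in (-x₁)..x₁, g u) - ∫ u in (r - x₁)..(r + x₁), g u := by
    have hsplit : (∫ y₁ in (-r)..r, Real.sign y₁ * g (x₁ - y₁))
        = (∫ y₁ in (-r)..(0:ℝ), Real.sign y₁ * g (x₁ - y₁))
          + ∫ y₁ in (0:ℝ)..r, Real.sign y₁ * g (x₁ - y₁) :=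
      (intervalIntegral.integral_add_adjacent_intervals (hsg_int _ _) (hsg_int _ _)).symm
    have hnegp : (∫ y₁ in (-r)..(0:ℝ), Real.sign y₁ * g (x₁ - y₁))
        = - ∫ y₁ in (-r)..(0:ℝ), g (x₁ - y₁) := by
      rw [← intervalIntegral.integral_neg]
      refine intervalIntegral.integral_congr_ae ?_
      filter_upwards [hae_ne 0] with t ht0 htmem
      rw [Set.uIoc_of_le (by linarith : -r ≤ (0:ℝ))] at htmem
      have htneg : t < 0 := lt_of_le_of_ne htmem.2 ht0
      rw [Real.sign_of_neg htneg]
      ring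
    have hposp : (∫ y₁ in (0:ℝ)..r, Real.sign y₁ * g (x₁ - y₁))
        = ∫ y₁ in (0:ℝ)..r, g (x₁ - y₁) := by
      refine intervalIntegral.integral_congr_ae ?_
      filter_upwards with t htmem
      rw [Set.uIoc_of_le (by linarith : (0:ℝ) ≤ r)] at htmem
      rw [Real.sign_of_pos htmem.1]
      ring
    have hs1 : (∫ y₁ in (0:ℝ)..r, g (x₁ - y₁)) = ∫ u in (x₁ - r)..x₁, g u := by
      have h := intervalIntegral.integral_comp_sub_left (a := (0:ℝ)) (b := r) g x₁
      rwa [sub_zero] at h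
    have hs2 : (∫ y₁ in (-r)..(0:ℝ), g (x₁ - y₁)) = ∫ u in x₁..(x₁ + r), g u := by
      have h := intervalIntegral.integral_comp_sub_left (a := -r) (b := (0:ℝ)) g x₁
      rwa [sub_zero, sub_neg_eq_add] at h
    have heven : (∫ u in (x₁ - r)..x₁, g u) = ∫ u in (-x₁)..(r - x₁), g u := by
      have h := intervalIntegral.integral_comp_neg (a := -x₁) (b := r - x₁) (f := g)
      have hgneg : (fun u : ℝ => g (-u)) = g := by
        funext u
        rw [hg]
        simp only [neg_sq]
      rw [hgneg] at h
      rw [h]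
      congr 1 <;> ring
    have hadd1 : (∫ u in (-x₁)..(r - x₁), g u)
        = (∫ u in (-x₁)..x₁, g u) + ∫ u in x₁..(r - x₁), g u :=
      (intervalIntegral.integral_add_adjacent_intervals (hg_int _ _) (hg_int _ _)).symm
    have hadd2 : (∫ u in x₁..(x₁ + r), g u)
        = (∫ u in x₁..(r - x₁), g u) + ∫ u in (r - x₁)..(x₁ + r), g u :=
      (intervalIntegral.integral_add_adjacent_intervals (hg_int _ _) (hg_int _ _)).symm
    have e3 : x₁ + r = r + x₁ := add_comm _ _
    rw [hsplit, hnegp, hposp, hs1, hs2, heven, hadd1, hadd2, e3]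
    ring
  -- lower bound for the near part
  have hnear : 4 * x₁ * (Real.log r - Real.log x₁) ≤ ∫ u in (-x₁)..x₁, g u := by
    have hconst : (∫ _ in (-x₁)..x₁, (2 * Real.log r - 2 * Real.log x₁ : ℝ))
        = 4 * x₁ * (Real.log r - Real.log x₁) := by
      rw [intervalIntegral.integral_const, smul_eq_mul]
      ring
    rw [← hconst]
    refine intervalIntegral.integral_mono_ae_restrict (by linarith : -x₁ ≤ x₁)
      (intervalIntegrable_const) (hg_int _ _) ?_
    refine (ae_restrict_iff' measurableSet_Icc).mpr ?_
    filter_upwards [hae_ne 0] with u hu0 humem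
    have habs : |u| ≤ x₁ := abs_le.mpr ⟨humem.1, humem.2⟩
    have hupos : 0 < |u| := abs_pos.mpr hu0
    have h1 : Real.log (u^2) ≤ 2 * Real.log x₁ := by
      rw [← sq_abs, Real.log_pow]
      push_cast
      have := Real.log_le_log hupos habs
      nlinarith
    have h3 : Real.log (r^2) ≤ Real.log (u^2 + r^2) :=
      Real.log_le_log (by positivity) (by nlinarith [sq_nonneg u])
    have h2 : Real.log (r^2) = 2 * Real.log r := by
      rw [Real.log_pow]; push_cast; ring
    rw [hg]
    simp only
    linarith
  -- upper bound for the far part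
  have hfar : (∫ u in (r - x₁)..(r + x₁), g u) ≤ 2 * x₁ * Real.log 5 := by
    have hconst : (∫ _ in (r - x₁)..(r + x₁), (Real.log 5 : ℝ)) = 2 * x₁ * Real.log 5 := by
      rw [intervalIntegral.integral_const, smul_eq_mul]
      ring
    rw [← hconst]
    refine intervalIntegral.integral_mono_on (by linarith : r - x₁ ≤ r + x₁)
      (hg_int _ _) (intervalIntegrable_const) ?_
    intro u humem
    have hu : r / 2 ≤ u := le_trans (by linarith) humem.1
    have hupos : 0 < u := lt_of_lt_of_le (by linarith) hu
    have h5 : u^2 + r^2 ≤ 5 * u^2 := by nlinarith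
    have h6 : Real.log (u^2 + r^2) ≤ Real.log (5 * u^2) :=
      Real.log_le_log (by positivity) h5
    rw [Real.log_mul (by norm_num) (by positivity)] at h6
    rw [hg]
    simp only
    linarith
  -- conclusion
  rw [hv1, hinner, houter]
  rw [one_div, Real.log_inv]
  nlinarith [hnear, hfar, hlamlog, h1L, hx0]
end

section
/- Let ω : ℝ² → ℝ be defined by ω(x) = sgn(x₁)·sgn(x₂)·log(log(1/m(x))) when 0 < m(x) < 1/e, where m(x) = max(|x₁|,|x₂|), and ω(x) = 0 otherwise. Then ∫_{ℝ²} |ω(x)|^p dx = 8 ∫₁^∞ e^{−2u} (log u)^p du for every p ≥ 1, and there exists p₀ such that for all p ≥ p₀: 4·e^{−2p}·(log p)^p ≤ ∫_{ℝ²} |ω(x)|^p dx ≤ 8·(log p)^p. In particular, the L^p norm of ω is comparable to log p for large p: e^{−2}·log p ≲ ‖ω‖_{L^p(ℝ²)} ≲ log p. -/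
open MeasureTheory Real

/-- `m(x) = max(|x₁|, |x₂|)`. -/
noncomputable def mfun (x : ℝ × ℝ) : ℝ := max |x.1| |x.2|

/-- The vorticity `ω(x) = sgn(x₁)·sgn(x₂)·log(log(1/m(x)))` for `0 < m(x) < 1/e`,
and `0` otherwise. -/
noncomputable def omega3 (x : ℝ × ℝ) : ℝ :=
  if 0 < mfun x ∧ mfun x < (Real.exp 1)⁻¹ then
    Real.sign x.1 * Real.sign x.2 * Real.log (Real.log (1 / mfun x))
  else 0

section Aux
open Set Metric

noncomputable def Ffun (p : ℝ) (r : ℝ) : ℝ :=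
  if 0 < r ∧ r < (Real.exp 1)⁻¹ then Real.log (Real.log (1/r)) ^ p else 0

lemma mfun_eq_norm (x : ℝ × ℝ) : mfun x = ‖x‖ := by
  simp [mfun, Prod.norm_def, Real.norm_eq_abs]

lemma axes_null : volume {x : ℝ × ℝ | x.1 = 0 ∨ x.2 = 0} = 0 := by
  have h1 : volume {x : ℝ × ℝ | x.1 = 0} = 0 := by
    have : {x : ℝ × ℝ | x.1 = 0} = ({0} : Set ℝ) ×ˢ (univ : Set ℝ) := by
      ext x; constructor
      · intro hx; exact ⟨hx, trivial⟩
      · intro hx; exact hx.1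
    rw [this, show (volume : Measure (ℝ×ℝ)) = (volume : Measure ℝ).prod volume from rfl,
      Measure.prod_prod]
    simp
  have h2 : volume {x : ℝ × ℝ | x.2 = 0} = 0 := by
    have : {x : ℝ × ℝ | x.2 = 0} = (univ : Set ℝ) ×ˢ ({0} : Set ℝ) := by
      ext x; constructor
      · intro hx; exact ⟨trivial, hx⟩
      · intro hx; exact hx.2
    rw [this, show (volume : Measure (ℝ×ℝ)) = (volume : Measure ℝ).prod volume from rfl,
      Measure.prod_prod]
    simp
  have : {x : ℝ × ℝ | x.1 = 0 ∨ x.2 = 0} ⊆ {x : ℝ × ℝ | x.1 = 0} ∪ {x : ℝ × ℝ | x.2 = 0} := by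
    intro x hx; exact hx
  exact measure_mono_null this (by rw [measure_union_null h1 h2])

lemma step_a (p : ℝ) (hp : 1 ≤ p) :
    ∫ x : ℝ × ℝ, |omega3 x| ^ p = ∫ x : ℝ × ℝ, Ffun p ‖x‖ := by
  apply integral_congr_ae
  have hae : ∀ᵐ x : ℝ × ℝ, ¬(x.1 = 0 ∨ x.2 = 0) := by
    rw [ae_iff]
    convert axes_null using 2
    ext x; simp only [Set.mem_setOf_eq, not_not]
  filter_upwards [hae] with x hx
  push_neg at hx
  obtain ⟨h1, h2⟩ := hx
  rw [← mfun_eq_norm]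
  unfold omega3 Ffun
  by_cases hc : 0 < mfun x ∧ mfun x < (Real.exp 1)⁻¹
  · rw [if_pos hc, if_pos hc]
    have hL : 0 < Real.log (Real.log (1 / mfun x)) := by
      apply Real.log_pos
      rw [one_div]
      rw [show (1:ℝ) = Real.log (Real.exp 1) by simp]
      apply Real.log_lt_log (Real.exp_pos 1)
      rw [lt_inv_comm₀ (Real.exp_pos 1) hc.1]
      exact hc.2
    have hs1 : |Real.sign x.1| = 1 := by
      rcases Real.sign_apply_eq_of_ne_zero _ h1 with h | h <;> simp [h]
    have hs2 : |Real.sign x.2| = 1 := by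
      rcases Real.sign_apply_eq_of_ne_zero _ h2 with h | h <;> simp [h]
    rw [abs_mul, abs_mul, hs1, hs2, abs_of_pos hL, one_mul, one_mul]
  · rw [if_neg hc, if_neg hc, abs_zero, Real.zero_rpow (by linarith)]

lemma step_b (p : ℝ) :
    ∫ x : ℝ × ℝ, Ffun p ‖x‖ = 8 * ∫ y in Ioi (0:ℝ), y * Ffun p y := by
  rw [MeasureTheory.integral_fun_norm_addHaar volume (Ffun p)]
  have hrank : Module.finrank ℝ (ℝ × ℝ) = 2 := by simp
  have hball : (volume (ball (0:ℝ×ℝ) 1)).toReal = 4 := by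
    rw [← ball_prod_same, show (volume : Measure (ℝ×ℝ)) = (volume : Measure ℝ).prod volume from rfl,
      Measure.prod_prod, Real.ball_eq_Ioo, Real.volume_Ioo]
    norm_num
  rw [hrank, measureReal_def, hball]
  rw [nsmul_eq_mul, smul_eq_mul]
  rw [show ∫ y in Ioi (0:ℝ), y ^ (2-1) • Ffun p y = ∫ y in Ioi (0:ℝ), y * Ffun p y by
    congr 1; ext y; simp]
  ring

lemma step_c (p : ℝ) :
    ∫ y in Ioi (0:ℝ), y * Ffun p y
      = ∫ y in Ioo (0:ℝ) (Real.exp 1)⁻¹, y * Real.log (Real.log (1/y)) ^ p := by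
  rw [show ∫ y in Ioi (0:ℝ), y * Ffun p y
      = ∫ y in Ioi (0:ℝ), (Ioo (0:ℝ) (Real.exp 1)⁻¹).indicator
          (fun y => y * Real.log (Real.log (1/y)) ^ p) y by
    apply setIntegral_congr_fun measurableSet_Ioi
    intro y hy
    simp only [Ffun, Set.indicator_apply, Set.mem_Ioo]
    by_cases hc : y < (Real.exp 1)⁻¹
    · rw [if_pos ⟨hy, hc⟩, if_pos ⟨hy, hc⟩]
    · rw [if_neg (by tauto), if_neg (by tauto), mul_zero]]
  rw [MeasureTheory.integral_indicator measurableSet_Ioo]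
  rw [Measure.restrict_restrict measurableSet_Ioo]
  congr 1
  rw [Set.Ioo_inter_Ioi]
  simp

lemma image_exp_neg : (fun u : ℝ => Real.exp (-u)) '' Ioi 1 = Ioo (0:ℝ) (Real.exp 1)⁻¹ := by
  ext y
  constructor
  · rintro ⟨u, hu, rfl⟩
    refine ⟨Real.exp_pos _, ?_⟩
    rw [← Real.exp_neg]
    exact Real.exp_lt_exp.mpr (by simpa using hu)
  · rintro ⟨hy0, hy1⟩
    refine ⟨-Real.log y, ?_, by simp [Real.exp_log hy0]⟩
    simp only [Set.mem_Ioi]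
    have : Real.log y < Real.log (Real.exp 1)⁻¹ := Real.log_lt_log hy0 hy1
    rw [Real.log_inv, Real.log_exp] at this
    linarith

lemma step_d (p : ℝ) :
    ∫ y in Ioo (0:ℝ) (Real.exp 1)⁻¹, y * Real.log (Real.log (1/y)) ^ p
      = ∫ u in Ioi (1:ℝ), Real.exp (-2*u) * Real.log u ^ p := by
  rw [← image_exp_neg]
  rw [MeasureTheory.integral_image_eq_integral_abs_deriv_smul measurableSet_Ioi
      (f' := fun u => -Real.exp (-u))
      (fun u _ => by simpa using (hasDerivAt_neg u).exp.hasDerivWithinAt)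
      (fun a _ b _ hab => by
        have := Real.exp_injective hab; linarith [neg_injective this])
      (fun y => y * Real.log (Real.log (1/y)) ^ p)]
  apply setIntegral_congr_fun measurableSet_Ioi
  intro u hu
  simp only [smul_eq_mul]
  rw [abs_neg, abs_of_pos (Real.exp_pos _)]
  rw [one_div, ← Real.exp_neg, neg_neg, Real.log_exp, ← mul_assoc, ← Real.exp_add]
  ring_nf


lemma int_exp_neg_two (a : ℝ) : ∫ u in Ioi a, Real.exp (-2*u) = Real.exp (-2*a) / 2 := by
  have := MeasureTheory.integral_comp_mul_left_Ioi (fun x => Real.exp (-x)) a (by norm_num : (0:ℝ) < 2)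
  simp only [smul_eq_mul] at this
  rw [show (fun u => Real.exp (-2*u)) = fun u => Real.exp (-(2*u)) by ext u; ring_nf]
  calc ∫ u in Ioi a, Real.exp (-(2*u)) = 2⁻¹ * ∫ x in Ioi (2*a), Real.exp (-x) := this
    _ = Real.exp (-2*a)/2 := by rw [integral_exp_neg_Ioi]; ring_nf

lemma int_exp_shift (p : ℝ) : ∫ u in Ioi p, Real.exp (p - u) = 1 := by
  calc ∫ u in Ioi p, Real.exp (p - u) = ∫ u in Ioi p, Real.exp p * Real.exp (-u) := by
        congr 1; ext u; rw [← Real.exp_add]; ring_nf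
    _ = Real.exp p * ∫ u in Ioi p, Real.exp (-u) := by rw [integral_const_mul]
    _ = 1 := by rw [integral_exp_neg_Ioi, ← Real.exp_add]; simp

lemma exp_integrable (a : ℝ) : IntegrableOn (fun u => Real.exp (-2*u)) (Ioi a) := by
  simpa using exp_neg_integrableOn_Ioi a (by norm_num : (0:ℝ) < 2)

lemma exp_two_ge : (3:ℝ) ≤ Real.exp 2 := by nlinarith [Real.add_one_le_exp (2:ℝ)]

lemma log_ge_one {p : ℝ} (hp : 3 ≤ p) : 1 ≤ Real.log p := by
  rw [Real.le_log_iff_exp_le (by linarith)]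
  exact le_trans Real.exp_one_lt_d9.le (by linarith)

lemma tail_bound {p u : ℝ} (hp : 3 ≤ p) (hu : p ≤ u) :
    Real.exp (-2*u) * Real.log u ^ p
      ≤ Real.exp (-2*p) * Real.log p ^ p * Real.exp (p - u) := by
  have hlp : 1 ≤ Real.log p := log_ge_one hp
  have hlu : Real.log p ≤ Real.log u := Real.log_le_log (by linarith) hu
  have hlu1 : 1 ≤ Real.log u := hlp.trans hlu
  rw [Real.rpow_def_of_pos (by linarith : (0:ℝ) < Real.log u),
      Real.rpow_def_of_pos (by linarith : (0:ℝ) < Real.log p),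
      ← Real.exp_add, ← Real.exp_add, ← Real.exp_add]
  rw [Real.exp_le_exp]
  have e1 : Real.log u - Real.log p ≤ (u - p)/p := by
    rw [← Real.log_div (by linarith) (by linarith)]
    have hp0 : (0:ℝ) < p := by linarith
    have := Real.log_le_sub_one_of_pos (show (0:ℝ) < u/p from div_pos (by linarith) hp0)
    rw [show u/p - 1 = (u-p)/p by field_simp] at this
    exact this
  have e2 : Real.log (Real.log u) - Real.log (Real.log p) ≤ (Real.log u - Real.log p)/Real.log p := by
    rw [← Real.log_div (by linarith) (by linarith)]
    have := Real.log_le_sub_one_of_pos (show (0:ℝ) < Real.log u / Real.log p from div_pos (by linarith) (by linarith))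
    rw [show Real.log u / Real.log p - 1 = (Real.log u - Real.log p)/Real.log p by
      field_simp] at this
    exact this
  have e3 : (Real.log u - Real.log p)/Real.log p ≤ Real.log u - Real.log p :=
    div_le_self (by linarith) hlp
  have e4 : Real.log u - Real.log p ≤ (u-p)/p := e1
  have hp0 : (0:ℝ) < p := by linarith
  have key : p * (Real.log (Real.log u) - Real.log (Real.log p)) ≤ u - p := by
    have h5 : Real.log (Real.log u) - Real.log (Real.log p) ≤ (u-p)/p := by linarith
    calc p * (Real.log (Real.log u) - Real.log (Real.log p)) ≤ p * ((u-p)/p) :=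
          mul_le_mul_of_nonneg_left h5 hp0.le
      _ = u - p := by field_simp
  nlinarith

lemma J_bounds (p : ℝ) (hp : 3 ≤ p) :
    Real.exp (-2*p)/2 * Real.log p ^ p ≤ (∫ u in Ioi (1:ℝ), Real.exp (-2*u) * Real.log u ^ p) ∧
    (∫ u in Ioi (1:ℝ), Real.exp (-2*u) * Real.log u ^ p) ≤ Real.log p ^ p := by
  have hlp : 1 ≤ Real.log p := log_ge_one hp
  have hlpp : 0 ≤ Real.log p ^ p := Real.rpow_nonneg (by linarith) p
  set f : ℝ → ℝ := fun u => Real.exp (-2*u) * Real.log u ^ p with hf_def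
  set g : ℝ → ℝ := fun u => Real.log p ^ p * Real.exp (-2*u)
      + (Ioi p).indicator (fun u => Real.exp (-2*p) * Real.log p ^ p * Real.exp (p-u)) u with hg_def
  have hg1 : IntegrableOn (fun u => Real.log p ^ p * Real.exp (-2*u)) (Ioi 1) :=
    (exp_integrable 1).const_mul _
  have hexpneg : IntegrableOn (fun u => Real.exp (-u)) (Ioi p) := by
    simpa using exp_neg_integrableOn_Ioi p (by norm_num : (0:ℝ) < 1)
  have hind_int : IntegrableOn (fun u => Real.exp (-2*p) * Real.log p ^ p * Real.exp (p-u)) (Ioi p) := by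
    apply IntegrableOn.congr_fun
      (hexpneg.const_mul (Real.exp (-2*p) * Real.log p ^ p * Real.exp p)) _ measurableSet_Ioi
    intro u _
    show Real.exp (-2*p) * Real.log p ^ p * Real.exp p * Real.exp (-u) = _
    rw [mul_assoc, ← Real.exp_add]
    ring_nf
  have hg_ind : IntegrableOn ((Ioi p).indicator
      (fun u => Real.exp (-2*p) * Real.log p ^ p * Real.exp (p-u))) (Ioi 1) :=
    (hind_int.integrable_indicator measurableSet_Ioi).integrableOn
  have hg_int : IntegrableOn g (Ioi 1) := hg1.add hg_ind
  have Ig : ∫ u in Ioi (1:ℝ), g u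
      = Real.log p ^ p * (Real.exp (-2*1)/2) + Real.exp (-2*p) * Real.log p ^ p := by
    rw [integral_add hg1 hg_ind, integral_const_mul, int_exp_neg_two,
      integral_indicator measurableSet_Ioi, Measure.restrict_restrict measurableSet_Ioi,
      Set.Ioi_inter_Ioi, max_eq_left (by linarith : (1:ℝ) ≤ p), integral_const_mul,
      int_exp_shift]
    ring
  have hfg : ∀ u ∈ Ioi (1:ℝ), f u ≤ g u := by
    intro u hu
    simp only [Set.mem_Ioi] at hu
    by_cases hup : u ≤ p
    · have h1 : f u ≤ Real.log p ^ p * Real.exp (-2*u) := by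
        rw [hf_def, mul_comm (Real.log p ^ p)]
        exact mul_le_mul_of_nonneg_left
          (Real.rpow_le_rpow (Real.log_nonneg hu.le) (Real.log_le_log (by linarith) hup)
            (by linarith)) (Real.exp_pos _).le
      have h2 : 0 ≤ (Ioi p).indicator
          (fun u => Real.exp (-2*p) * Real.log p ^ p * Real.exp (p-u)) u :=
        Set.indicator_nonneg (fun x _ => by positivity) u
      rw [hg_def]; dsimp only; linarith
    · push_neg at hup
      have h1 : f u ≤ Real.exp (-2*p) * Real.log p ^ p * Real.exp (p-u) :=
        tail_bound hp hup.le
      have h2 : (Ioi p).indicator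
          (fun u => Real.exp (-2*p) * Real.log p ^ p * Real.exp (p-u)) u
          = Real.exp (-2*p) * Real.log p ^ p * Real.exp (p-u) :=
        Set.indicator_of_mem hup _
      have h3 : 0 ≤ Real.log p ^ p * Real.exp (-2*u) := by positivity
      rw [hg_def]; dsimp only; rw [h2]; linarith
  have hf_meas : AEStronglyMeasurable f (volume.restrict (Ioi 1)) := by
    have hm : Measurable (fun u : ℝ => Real.exp (-2*u) * Real.exp (Real.log (Real.log u) * p)) :=
      (Real.measurable_exp.comp (measurable_const.mul measurable_id)).mul
        (Real.measurable_exp.comp ((Real.measurable_log.comp Real.measurable_log).mul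
          measurable_const))
    apply hm.aestronglyMeasurable.congr
    filter_upwards [ae_restrict_mem measurableSet_Ioi] with u hu
    show _ = Real.exp (-2*u) * Real.log u ^ p
    rw [Real.rpow_def_of_pos (Real.log_pos hu)]
  have hf_nonneg : 0 ≤ᵐ[volume.restrict (Ioi 1)] f := by
    filter_upwards [ae_restrict_mem measurableSet_Ioi] with u hu
    exact mul_nonneg (Real.exp_pos _).le
      (Real.rpow_nonneg (Real.log_nonneg (le_of_lt hu)) p)
  have hf_int : IntegrableOn f (Ioi 1) := by
    apply hg_int.mono' hf_meas
    filter_upwards [ae_restrict_mem measurableSet_Ioi] with u hu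
    rw [Real.norm_eq_abs, abs_of_nonneg (mul_nonneg (Real.exp_pos _).le
      (Real.rpow_nonneg (Real.log_nonneg (le_of_lt hu)) p))]
    exact hfg u hu
  constructor
  · have hsub : Ioi p ⊆ Ioi (1:ℝ) := Ioi_subset_Ioi (by linarith)
    have hlow1 : ∫ u in Ioi p, Real.log p ^ p * Real.exp (-2*u) ≤ ∫ u in Ioi p, f u := by
      apply setIntegral_mono_on ((exp_integrable p).const_mul _) (hf_int.mono_set hsub)
        measurableSet_Ioi
      intro u hu
      simp only [Set.mem_Ioi] at hu
      rw [hf_def, mul_comm (Real.log p ^ p)]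
      exact mul_le_mul_of_nonneg_left
        (Real.rpow_le_rpow (by linarith) (Real.log_le_log (by linarith) hu.le) (by linarith))
        (Real.exp_pos _).le
    have hlow2 : ∫ u in Ioi p, f u ≤ ∫ u in Ioi (1:ℝ), f u :=
      setIntegral_mono_set hf_int hf_nonneg (HasSubset.Subset.eventuallyLE hsub)
    have : ∫ u in Ioi p, Real.log p ^ p * Real.exp (-2*u)
        = Real.log p ^ p * (Real.exp (-2*p)/2) := by
      rw [integral_const_mul, int_exp_neg_two]
    rw [this] at hlow1
    calc Real.exp (-2*p)/2 * Real.log p ^ p = Real.log p ^ p * (Real.exp (-2*p)/2) := by ring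
      _ ≤ ∫ u in Ioi (1:ℝ), f u := le_trans hlow1 hlow2
  · have hup : ∫ u in Ioi (1:ℝ), f u ≤ ∫ u in Ioi (1:ℝ), g u := by
      apply integral_mono_of_nonneg hf_nonneg hg_int
      filter_upwards [ae_restrict_mem measurableSet_Ioi] with u hu
      exact hfg u hu
    rw [Ig] at hup
    have h2 : Real.exp (-2:ℝ) ≤ 1/3 := by
      rw [Real.exp_neg]
      rw [show (1:ℝ)/3 = 3⁻¹ by norm_num]
      exact inv_anti₀ (by norm_num) exp_two_ge
    have h3 : Real.exp (-2*p) ≤ Real.exp (-2:ℝ) := Real.exp_le_exp.mpr (by linarith)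
    have : Real.log p ^ p * (Real.exp (-2*1)/2) + Real.exp (-2*p) * Real.log p ^ p
        ≤ Real.log p ^ p := by
      rw [show (-2*(1:ℝ)) = (-2:ℝ) by norm_num]
      nlinarith
    linarith


lemma part1 (p : ℝ) (hp : 1 ≤ p) :
    ∫ x : ℝ × ℝ, |omega3 x| ^ p = 8 * ∫ u in Ioi (1:ℝ), Real.exp (-2*u) * Real.log u ^ p := by
  rw [step_a p hp, step_b, step_c, step_d]

end Aux

theorem stmt3 :
    (∀ p : ℝ, 1 ≤ p →
      ∫ x : ℝ × ℝ, |omega3 x| ^ p =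
        8 * ∫ u in Set.Ioi (1:ℝ), Real.exp (-2 * u) * Real.log u ^ p) ∧
    (∃ p₀ : ℝ, ∀ p : ℝ, p₀ ≤ p →
      4 * Real.exp (-2 * p) * Real.log p ^ p ≤ (∫ x : ℝ × ℝ, |omega3 x| ^ p) ∧
      (∫ x : ℝ × ℝ, |omega3 x| ^ p) ≤ 8 * Real.log p ^ p) ∧
    (∃ p₁ : ℝ, ∀ p : ℝ, p₁ ≤ p →
      Real.exp (-2) * Real.log p ≤ (∫ x : ℝ × ℝ, |omega3 x| ^ p) ^ (1 / p) ∧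
      (∫ x : ℝ × ℝ, |omega3 x| ^ p) ^ (1 / p) ≤ 2 * Real.log p) := by
  have part2 : ∀ p : ℝ, 3 ≤ p →
      4 * Real.exp (-2 * p) * Real.log p ^ p ≤ (∫ x : ℝ × ℝ, |omega3 x| ^ p) ∧
      (∫ x : ℝ × ℝ, |omega3 x| ^ p) ≤ 8 * Real.log p ^ p := by
    intro p hp
    rw [part1 p (by linarith)]
    obtain ⟨h1, h2⟩ := J_bounds p hp
    constructor
    · calc 4 * Real.exp (-2*p) * Real.log p ^ p
          = 8 * (Real.exp (-2*p)/2 * Real.log p ^ p) := by ring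
        _ ≤ 8 * ∫ u in Set.Ioi (1:ℝ), Real.exp (-2*u) * Real.log u ^ p := by linarith
    · linarith
  refine ⟨fun p hp => part1 p hp, ⟨3, part2⟩, ⟨3, ?_⟩⟩
  intro p hp
  obtain ⟨h1, h2⟩ := part2 p hp
  have hlp : 1 ≤ Real.log p := log_ge_one hp
  have hp0 : (0:ℝ) < p := by linarith
  have hplow : 0 ≤ Real.exp (-2) * Real.log p := by positivity
  have hA : (Real.exp (-2) * Real.log p) ^ p = Real.exp (-2*p) * Real.log p ^ p := by
    rw [Real.mul_rpow (Real.exp_pos _).le (by linarith), ← Real.exp_mul]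
  have hI0 : 0 ≤ ∫ x : ℝ × ℝ, |omega3 x| ^ p := by
    refine le_trans ?_ h1
    positivity
  have hinvp : (0:ℝ) ≤ 1/p := by positivity
  constructor
  · have hle : (Real.exp (-2) * Real.log p) ^ p ≤ ∫ x : ℝ × ℝ, |omega3 x| ^ p := by
      rw [hA]
      nlinarith [Real.exp_pos (-2*p), Real.rpow_nonneg (show (0:ℝ) ≤ Real.log p by linarith) p]
    calc Real.exp (-2) * Real.log p
        = ((Real.exp (-2) * Real.log p) ^ p) ^ (1/p) := by
          rw [← Real.rpow_mul hplow, mul_one_div, div_self hp0.ne', Real.rpow_one]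
      _ ≤ (∫ x : ℝ × ℝ, |omega3 x| ^ p) ^ (1/p) :=
          Real.rpow_le_rpow (Real.rpow_nonneg hplow p) hle hinvp
  · have h8 : (8:ℝ) ≤ (2:ℝ) ^ p := by
      have h2p : (2:ℝ) ^ (3:ℝ) ≤ (2:ℝ) ^ p :=
        Real.rpow_le_rpow_left_iff (by norm_num : (1:ℝ) < 2) |>.mpr hp
      rw [show ((3:ℝ)) = ((3:ℕ):ℝ) by norm_num, Real.rpow_natCast] at h2p
      norm_num at h2p
      linarith
    have hle : (∫ x : ℝ × ℝ, |omega3 x| ^ p) ≤ (2 * Real.log p) ^ p := by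
      rw [Real.mul_rpow (by norm_num) (by linarith)]
      have := Real.rpow_nonneg (show (0:ℝ) ≤ Real.log p by linarith) p
      nlinarith
    calc (∫ x : ℝ × ℝ, |omega3 x| ^ p) ^ (1/p)
        ≤ ((2 * Real.log p) ^ p) ^ (1/p) := Real.rpow_le_rpow hI0 hle hinvp
      _ = 2 * Real.log p := by
          rw [← Real.rpow_mul (by linarith), mul_one_div, div_self hp0.ne', Real.rpow_one]
end

section
/- For every real p ≥ e^e and every real x ≥ 1, log(x·p) · log(log(x·p)) ≤ log(p) · log(log(p)) · e^{x−1}. -/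
private lemma stmt4_aux (L M t s : ℝ) (ht0 : 0 ≤ t) (hL2 : 2 ≤ L) (hM : 1 ≤ M)
    (hL0 : 0 < L) (hM0 : 0 < M) (hexp : (1 + t / 2) ^ 2 ≤ s)
    (hA : L / 2 + M ≤ L * M) :
    (L + t) * (M + t / 2) ≤ L * M * s := by
  have hB : (2:ℝ) ≤ L * M := by nlinarith
  nlinarith [mul_nonneg ht0 (by linarith : (0:ℝ) ≤ L * M - (L / 2 + M)),
    mul_nonneg (mul_nonneg ht0 ht0) (by linarith : (0:ℝ) ≤ L * M - 2),
    mul_le_mul_of_nonneg_left hexp (le_of_lt (mul_pos hL0 hM0))]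


theorem stmt4 (p x : ℝ) (hp : Real.exp (Real.exp 1) ≤ p) (hx : 1 ≤ x) :
    Real.log (x * p) * Real.log (Real.log (x * p)) ≤
      Real.log p * Real.log (Real.log p) * Real.exp (x - 1) := by
  have hE2 : (2:ℝ) ≤ Real.exp 1 := by
    have := Real.add_one_le_exp (1:ℝ); linarith
  have hp0 : (0:ℝ) < p := lt_of_lt_of_le (Real.exp_pos _) hp
  set L := Real.log p with hLdef
  set t := x - 1 with htdef
  have ht0 : 0 ≤ t := by simp [htdef]; linarith
  have hx0 : (0:ℝ) < x := by linarith
  have hL : Real.exp 1 ≤ L := by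
    have := Real.log_le_log (Real.exp_pos _) hp
    simpa [Real.log_exp] using this
  have hL2 : (2:ℝ) ≤ L := le_trans hE2 hL
  have hL0 : (0:ℝ) < L := by linarith
  set M := Real.log L with hMdef
  have hM : (1:ℝ) ≤ M := by
    have := Real.log_le_log (Real.exp_pos 1) hL
    simpa [Real.log_exp] using this
  have hlogmul : Real.log (x * p) = Real.log x + L := by
    rw [Real.log_mul (ne_of_gt hx0) (ne_of_gt hp0)]
  have hlogx0 : 0 ≤ Real.log x := Real.log_nonneg hx
  have hlogx : Real.log x ≤ t := by
    have := Real.log_le_sub_one_of_pos hx0; linarith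
  have h1 : Real.log (x * p) ≤ L + t := by rw [hlogmul]; linarith
  have h2 : L ≤ Real.log (x * p) := by rw [hlogmul]; linarith
  have hxp0 : 0 < Real.log (x * p) := lt_of_lt_of_le hL0 h2
  -- log (L + t) ≤ M + t / 2
  have hLt0 : 0 < L + t := by linarith
  have hkey : Real.log (L + t) ≤ M + t / 2 := by
    have hdiv : Real.log (L + t) - M = Real.log ((L + t) / L) := by
      rw [Real.log_div (ne_of_gt hLt0) (ne_of_gt hL0)]
    have hdivpos : 0 < (L + t) / L := div_pos hLt0 hL0
    have := Real.log_le_sub_one_of_pos hdivpos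
    have h3 : (L + t) / L - 1 = t / L := by field_simp; ring
    have h4 : t / L ≤ t / 2 := by
      apply div_le_div_of_nonneg_left ht0 (by linarith) hL2
    linarith [hdiv ▸ this, h3 ▸ this]
  have h3 : Real.log (Real.log (x * p)) ≤ M + t / 2 :=
    le_trans (Real.log_le_log hxp0 h1) hkey
  have h4 : M ≤ Real.log (Real.log (x * p)) := Real.log_le_log hL0 h2
  have hM0 : (0:ℝ) < M := by linarith
  -- exp bound
  have hexp : (1 + t / 2) ^ 2 ≤ Real.exp t := by
    have h5 : 1 + t / 2 ≤ Real.exp (t / 2) := by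
      have := Real.add_one_le_exp (t / 2); linarith
    have h6 : Real.exp t = Real.exp (t / 2) * Real.exp (t / 2) := by
      rw [← Real.exp_add]; ring_nf
    have h7 : (0:ℝ) ≤ 1 + t / 2 := by linarith
    calc (1 + t / 2) ^ 2 ≤ Real.exp (t / 2) * Real.exp (t / 2) := by
          rw [sq]; exact mul_le_mul h5 h5 h7 (Real.exp_pos _).le
      _ = Real.exp t := h6.symm
  -- combine
  have hLHS : Real.log (x * p) * Real.log (Real.log (x * p)) ≤ (L + t) * (M + t / 2) := by
    apply mul_le_mul h1 h3 (by linarith) (by linarith)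
  refine le_trans hLHS ?_
  have hA : L / 2 + M ≤ L * M := by
    nlinarith [mul_nonneg (by linarith : (0:ℝ) ≤ M - 1) (by linarith : (0:ℝ) ≤ L - 1)]
  exact stmt4_aux L M t (Real.exp t) ht0 hL2 hM hL0 hM0 hexp hA
end

section
/- Let μ : [0,∞) → [0,∞) be continuous with μ(0) = 0, μ(x) > 0 for all x > 0, ∫₀¹ dr/μ(r) = ∞ (the Osgood condition), and ∫₁^∞ dr/μ(r) = ∞. Then there exists a unique function Γ : [0,∞) × (0,∞) → (0,∞) satisfying ∫ₓ^{Γ(t,x)} dr/μ(r) = t for all t ≥ 0 and x > 0. Moreover: Γ(0,x) = x for all x > 0; Γ(t,x) > x for all t > 0 and x > 0; for each fixed t ≥ 0 the map x ↦ Γ(t,x) is strictly increasing; for each fixed x > 0 the map t ↦ Γ(t,x) is strictly increasing; and for each fixed t ≥ 0, Γ(t,x) → 0 as x → 0⁺. -/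
open MeasureTheory Real Filter Set

section
variable (μ : ℝ → ℝ) (hcont : ContinuousOn μ (Set.Ici 0)) (hpos : ∀ x > 0, 0 < μ x)

lemma uIcc_sub {a b : ℝ} (ha : 0 < a) (hb : 0 < b) : Set.uIcc a b ⊆ Set.Ioi 0 := by
  intro x hx
  exact lt_of_lt_of_le (lt_min ha hb) hx.1

include hcont hpos

lemma finv_contOn : ContinuousOn (fun r => (μ r)⁻¹) (Set.Ioi 0) := by
  apply ContinuousOn.inv₀
  · exact hcont.mono (Set.Ioi_subset_Ici le_rfl)
  · exact fun x hx => (hpos x hx).ne'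

lemma finv_intervalInteg {a b : ℝ} (ha : 0 < a) (hb : 0 < b) :
    IntervalIntegrable (fun r => (μ r)⁻¹) volume a b :=
  ((finv_contOn μ hcont hpos).mono (uIcc_sub ha hb)).intervalIntegrable

omit hcont hpos

noncomputable def Fprim : ℝ → ℝ := fun x => ∫ r in (1:ℝ)..x, (μ r)⁻¹

include hcont hpos

lemma Fprim_sub {a b : ℝ} (ha : 0 < a) (hb : 0 < b) :
    Fprim μ b - Fprim μ a = ∫ r in a..b, (μ r)⁻¹ := by
  rw [Fprim, Fprim, intervalIntegral.integral_interval_sub_left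
    (finv_intervalInteg μ hcont hpos one_pos hb) (finv_intervalInteg μ hcont hpos one_pos ha)]

lemma Fprim_strictMono : StrictMonoOn (Fprim μ) (Set.Ioi 0) := by
  intro a ha b hb hab
  have h := intervalIntegral.intervalIntegral_pos_of_pos_on
    (finv_intervalInteg μ hcont hpos ha hb)
    (fun x hx => inv_pos.2 (hpos x (lt_trans ha hx.1))) hab
  have := Fprim_sub μ hcont hpos ha hb
  linarith

end

section
variable (μ : ℝ → ℝ) (hcont : ContinuousOn μ (Set.Ici 0)) (hpos : ∀ x > 0, 0 < μ x)
include hcont hpos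

lemma Fprim_contOn' {a b : ℝ} (ha : 0 < a) : ContinuousOn (Fprim μ) (Set.Icc a b) := by
  set c := max a b with hc
  have hsub : Set.Icc a b ⊆ Set.uIcc a c := by
    rw [Set.uIcc_of_le (le_max_left a b)]
    exact Set.Icc_subset_Icc le_rfl (le_max_right a b)
  have hcc : ContinuousOn (fun x => Fprim μ a + ∫ r in a..x, (μ r)⁻¹) (Set.Icc a b) := by
    apply ContinuousOn.add continuousOn_const
    exact (intervalIntegral.continuousOn_primitive_interval'
      (finv_intervalInteg μ hcont hpos ha (lt_of_lt_of_le ha (le_max_left a b)))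
      Set.left_mem_uIcc).mono hsub
  apply ContinuousOn.congr hcc
  intro x hx
  have := Fprim_sub μ hcont hpos ha (lt_of_lt_of_le ha hx.1)
  linarith

end

section
variable (μ : ℝ → ℝ) (hcont : ContinuousOn μ (Set.Ici 0)) (hpos : ∀ x > 0, 0 < μ x)

-- generic: sup over monotone measurable sets
lemma lint_sup {s : ℕ → Set ℝ} (hm : ∀ n, MeasurableSet (s n)) (hmono : Monotone s)
    (htop : ∫⁻ r in ⋃ n, s n, ENNReal.ofReal (μ r)⁻¹ = ⊤) :
    ⨆ n, ∫⁻ r in s n, ENNReal.ofReal (μ r)⁻¹ = ⊤ := by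
  set g : ℝ → ENNReal := fun r => ENNReal.ofReal (μ r)⁻¹ with hg
  set ν := volume.withDensity g with hν
  have h1 : ν (⋃ n, s n) = ⊤ := by
    rw [hν, withDensity_apply g (MeasurableSet.iUnion hm)]; exact htop
  have h2 : ν (⋃ n, s n) = ⨆ n, ν (s n) :=
    Directed.measure_iUnion (hmono.directed_le)
  rw [h2] at h1
  rw [← h1]
  congr 1; funext n
  rw [hν, withDensity_apply g (hm n)]

include hcont hpos

-- lintegral over Ioc/Ioo as ofReal of interval integral
lemma lint_Ioc_eq {a b : ℝ} (ha : 0 < a) (hab : a ≤ b) :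
    ∫⁻ r in Set.Ioc a b, ENNReal.ofReal (μ r)⁻¹
      = ENNReal.ofReal (∫ r in a..b, (μ r)⁻¹) := by
  have hint : IntegrableOn (fun r => (μ r)⁻¹) (Set.Ioc a b) volume :=
    (intervalIntegrable_iff_integrableOn_Ioc_of_le hab).1
      (finv_intervalInteg μ hcont hpos ha (lt_of_lt_of_le ha hab))
  rw [intervalIntegral.integral_of_le hab,
    ← ofReal_integral_eq_lintegral_ofReal hint]
  exact ae_restrict_of_forall_mem measurableSet_Ioc
    (fun x hx => (inv_pos.2 (hpos x (lt_trans ha hx.1))).le)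

lemma lint_Ioo_eq {a b : ℝ} (ha : 0 < a) (hab : a ≤ b) :
    ∫⁻ r in Set.Ioo a b, ENNReal.ofReal (μ r)⁻¹
      = ENNReal.ofReal (∫ r in a..b, (μ r)⁻¹) := by
  rw [← lint_Ioc_eq μ hcont hpos ha hab]
  exact setLIntegral_congr Ioo_ae_eq_Ioc

end

section
variable (μ : ℝ → ℝ) (hcont : ContinuousOn μ (Set.Ici 0)) (hpos : ∀ x > 0, 0 < μ x)
include hcont hpos

lemma Fprim_unbdd_top
    (hInfty : ∫⁻ r in Set.Ioi (1:ℝ), ENNReal.ofReal (μ r)⁻¹ = ⊤) :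
    ∀ M : ℝ, ∃ R, 1 < R ∧ M < Fprim μ R := by
  intro M
  have hU : (⋃ n : ℕ, Set.Ioc (1:ℝ) ((n:ℝ)+2)) = Set.Ioi 1 := by
    ext y
    simp only [Set.mem_iUnion, Set.mem_Ioc, Set.mem_Ioi]
    constructor
    · rintro ⟨n, h1, _⟩; exact h1
    · intro h1
      obtain ⟨n, hn⟩ := exists_nat_gt y
      exact ⟨n, h1, by linarith⟩
  have hsup := lint_sup μ (s := fun n : ℕ => Set.Ioc (1:ℝ) ((n:ℝ)+2))
    (fun n => measurableSet_Ioc)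
    (fun n m hnm => Set.Ioc_subset_Ioc le_rfl (by have := (Nat.cast_le (α := ℝ)).2 hnm; linarith))
    (by rw [hU]; exact hInfty)
  have heach : ∀ n : ℕ, ∫⁻ r in Set.Ioc (1:ℝ) ((n:ℝ)+2), ENNReal.ofReal (μ r)⁻¹
      = ENNReal.ofReal (Fprim μ ((n:ℝ)+2)) := by
    intro n
    rw [lint_Ioc_eq μ hcont hpos one_pos (by have := Nat.cast_nonneg (α := ℝ) n; linarith)]
    rfl
  simp only [heach] at hsup
  obtain ⟨n, hn⟩ := iSup_eq_top.1 hsup (ENNReal.ofReal M) ENNReal.ofReal_lt_top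
  refine ⟨(n:ℝ)+2, by have := Nat.cast_nonneg (α := ℝ) n; linarith, ?_⟩
  by_contra h
  exact absurd hn (not_lt.2 (ENNReal.ofReal_le_ofReal (not_lt.1 h)))

lemma Fprim_unbdd_bot
    (hOsgood : ∫⁻ r in Set.Ioo (0:ℝ) 1, ENNReal.ofReal (μ r)⁻¹ = ⊤) :
    ∀ M : ℝ, ∃ δ, 0 < δ ∧ δ < 1 ∧ Fprim μ δ < M := by
  intro M
  have hU : (⋃ n : ℕ, Set.Ioo (1/((n:ℝ)+2)) 1) = Set.Ioo 0 1 := by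
    ext y
    simp only [Set.mem_iUnion, Set.mem_Ioo]
    constructor
    · rintro ⟨n, h1, h2⟩
      exact ⟨lt_trans (by positivity) h1, h2⟩
    · rintro ⟨h1, h2⟩
      obtain ⟨n, hn⟩ := exists_nat_one_div_lt h1
      refine ⟨n, lt_of_le_of_lt ?_ hn, h2⟩
      apply one_div_le_one_div_of_le (by positivity)
      push_cast; linarith
  have hsup := lint_sup μ (s := fun n : ℕ => Set.Ioo (1/((n:ℝ)+2)) 1)
    (fun n => measurableSet_Ioo)
    (fun n m hnm => Set.Ioo_subset_Ioo (by
      apply one_div_le_one_div_of_le (by positivity)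
      have := (Nat.cast_le (α := ℝ)).2 hnm; linarith) le_rfl)
    (by rw [hU]; exact hOsgood)
  have heach : ∀ n : ℕ, ∫⁻ r in Set.Ioo (1/((n:ℝ)+2)) 1, ENNReal.ofReal (μ r)⁻¹
      = ENNReal.ofReal (- Fprim μ (1/((n:ℝ)+2))) := by
    intro n
    have hd : (0:ℝ) < 1/((n:ℝ)+2) := by positivity
    have hd1 : 1/((n:ℝ)+2) ≤ 1 := by
      rw [div_le_one (by positivity)]; linarith
    rw [lint_Ioo_eq μ hcont hpos hd hd1]
    congr 1
    have := Fprim_sub μ hcont hpos hd one_pos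
    have h1 : Fprim μ 1 = 0 := intervalIntegral.integral_same
    linarith
  simp only [heach] at hsup
  obtain ⟨n, hn⟩ := iSup_eq_top.1 hsup (ENNReal.ofReal (-M)) ENNReal.ofReal_lt_top
  refine ⟨1/((n:ℝ)+2), by positivity, by rw [div_lt_one (by positivity)]; linarith, ?_⟩
  by_contra h
  exact absurd hn (not_lt.2 (ENNReal.ofReal_le_ofReal (by linarith [not_lt.1 h])))

end

section
variable (μ : ℝ → ℝ) (hcont : ContinuousOn μ (Set.Ici 0)) (hpos : ∀ x > 0, 0 < μ x)
include hcont hpos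

lemma exists_gamma
    (hInfty : ∫⁻ r in Set.Ioi (1:ℝ), ENNReal.ofReal (μ r)⁻¹ = ⊤)
    {t x : ℝ} (ht : 0 ≤ t) (hx : 0 < x) :
    ∃ y, x ≤ y ∧ Fprim μ y = Fprim μ x + t := by
  obtain ⟨R, hR1, hRM⟩ := Fprim_unbdd_top μ hcont hpos hInfty (Fprim μ x + t)
  set b := max x R with hb
  have hbx : x ≤ b := le_max_left _ _
  have hbpos : 0 < b := lt_of_lt_of_le hx hbx
  have hFb : Fprim μ x + t ≤ Fprim μ b := by
    refine le_trans hRM.le ?_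
    exact (Fprim_strictMono μ hcont hpos).monotoneOn (Set.mem_Ioi.2 (lt_trans one_pos hR1))
      (Set.mem_Ioi.2 hbpos) (le_max_right _ _)
  have hIVT := intermediate_value_Icc hbx (Fprim_contOn' μ hcont hpos hx)
  obtain ⟨y, hy, hFy⟩ := hIVT ⟨by linarith, hFb⟩
  exact ⟨y, hy.1, hFy⟩

end

theorem stmt5 (μ : ℝ → ℝ) (hcont : ContinuousOn μ (Set.Ici 0)) (h0 : μ 0 = 0)
    (hpos : ∀ x > 0, 0 < μ x)
    (hOsgood : ∫⁻ r in Set.Ioo (0:ℝ) 1, ENNReal.ofReal (μ r)⁻¹ = ⊤)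
    (hInfty : ∫⁻ r in Set.Ioi (1:ℝ), ENNReal.ofReal (μ r)⁻¹ = ⊤) :
    ∃ Γ : ℝ → ℝ → ℝ,
      (∀ t ≥ 0, ∀ x > 0, 0 < Γ t x ∧ ∫ r in x..Γ t x, (μ r)⁻¹ = t) ∧
      (∀ Γ' : ℝ → ℝ → ℝ,
        (∀ t ≥ 0, ∀ x > 0, 0 < Γ' t x ∧ ∫ r in x..Γ' t x, (μ r)⁻¹ = t) →
        ∀ t ≥ 0, ∀ x > 0, Γ' t x = Γ t x) ∧
      (∀ x > 0, Γ 0 x = x) ∧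
      (∀ t > 0, ∀ x > 0, x < Γ t x) ∧
      (∀ t ≥ 0, StrictMonoOn (Γ t) (Set.Ioi 0)) ∧
      (∀ x > 0, StrictMonoOn (fun t => Γ t x) (Set.Ici 0)) ∧
      (∀ t ≥ 0, Tendsto (Γ t) (nhdsWithin 0 (Set.Ioi 0)) (nhds 0)) := by
  have hmono := Fprim_strictMono μ hcont hpos
  set Γ : ℝ → ℝ → ℝ := fun t x =>
    if h : 0 ≤ t ∧ 0 < x then (exists_gamma μ hcont hpos hInfty h.1 h.2).choose else x
    with hΓdef
  have key : ∀ t, 0 ≤ t → ∀ x, 0 < x → x ≤ Γ t x ∧ Fprim μ (Γ t x) = Fprim μ x + t := by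
    intro t ht x hx
    have h : 0 ≤ t ∧ 0 < x := ⟨ht, hx⟩
    rw [hΓdef]
    simp only [dif_pos h]
    exact (exists_gamma μ hcont hpos hInfty h.1 h.2).choose_spec
  have hΓpos : ∀ t, 0 ≤ t → ∀ x, 0 < x → 0 < Γ t x := fun t ht x hx =>
    lt_of_lt_of_le hx (key t ht x hx).1
  have hint : ∀ t, 0 ≤ t → ∀ x, 0 < x → ∫ r in x..Γ t x, (μ r)⁻¹ = t := by
    intro t ht x hx
    have h1 := Fprim_sub μ hcont hpos hx (hΓpos t ht x hx)
    rw [← h1, (key t ht x hx).2]; ring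
  refine ⟨Γ, ?_, ?_, ?_, ?_, ?_, ?_, ?_⟩
  · exact fun t ht x hx => ⟨hΓpos t ht x hx, hint t ht x hx⟩
  · -- uniqueness
    intro Γ' hΓ' t ht x hx
    obtain ⟨hpos', hint'⟩ := hΓ' t ht x hx
    have h1 : Fprim μ (Γ' t x) = Fprim μ x + t := by
      have := Fprim_sub μ hcont hpos hx hpos'
      rw [hint'] at this; linarith
    exact hmono.injOn (Set.mem_Ioi.2 hpos') (Set.mem_Ioi.2 (hΓpos t ht x hx))
      (by rw [h1, (key t ht x hx).2])
  · -- Γ 0 x = x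
    intro x hx
    have h1 := (key 0 le_rfl x hx).2
    simp only [add_zero] at h1
    exact (hmono.injOn (Set.mem_Ioi.2 (hΓpos 0 le_rfl x hx)) (Set.mem_Ioi.2 hx) h1)
  · -- x < Γ t x for t > 0
    intro t ht x hx
    have h1 := (key t ht.le x hx).2
    have := (hmono.lt_iff_lt (Set.mem_Ioi.2 hx) (Set.mem_Ioi.2 (hΓpos t ht.le x hx))).1
    exact (hmono.lt_iff_lt (Set.mem_Ioi.2 hx) (Set.mem_Ioi.2 (hΓpos t ht.le x hx))).1
      (by rw [h1]; linarith)
  · -- strict mono in x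
    intro t ht x1 hx1 x2 hx2 h12
    refine (hmono.lt_iff_lt (Set.mem_Ioi.2 (hΓpos t ht x1 hx1))
      (Set.mem_Ioi.2 (hΓpos t ht x2 hx2))).1 ?_
    rw [(key t ht x1 hx1).2, (key t ht x2 hx2).2]
    have := hmono hx1 hx2 h12
    linarith
  · -- strict mono in t
    intro x hx t1 ht1 t2 ht2 h12
    refine (hmono.lt_iff_lt (Set.mem_Ioi.2 (hΓpos t1 ht1 x hx))
      (Set.mem_Ioi.2 (hΓpos t2 ht2 x hx))).1 ?_
    rw [(key t1 ht1 x hx).2, (key t2 ht2 x hx).2]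
    linarith
  · -- tendsto
    intro t ht
    rw [Metric.tendsto_nhds]
    intro ε hε
    set c := min ε 1 with hc
    have hcpos : 0 < c := lt_min hε one_pos
    obtain ⟨δ, hδ0, hδ1, hδF⟩ := Fprim_unbdd_bot μ hcont hpos hOsgood (Fprim μ c - t)
    have hev : Set.Ioo (0:ℝ) δ ∈ nhdsWithin 0 (Set.Ioi 0) :=
      Ioo_mem_nhdsGT_of_mem ⟨le_rfl, hδ0⟩
    filter_upwards [hev] with x hx
    have hx0 : 0 < x := hx.1
    have hFx : Fprim μ x ≤ Fprim μ δ := hmono.monotoneOn (Set.mem_Ioi.2 hx0) (Set.mem_Ioi.2 hδ0) hx.2.le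
    have hΓlt : Γ t x < c := by
      refine (hmono.lt_iff_lt (Set.mem_Ioi.2 (hΓpos t ht x hx0)) (Set.mem_Ioi.2 hcpos)).1 ?_
      rw [(key t ht x hx0).2]; linarith
    have h1 : 0 < Γ t x := hΓpos t ht x hx0
    rw [Real.dist_eq, sub_zero, abs_of_pos h1]
    exact lt_of_lt_of_le hΓlt (min_le_left _ _)
end

section
/- Let μ : [0,∞) → [0,∞) be continuous with μ(0) = 0, μ > 0 on (0,∞), ∫₀¹ dr/μ(r) = ∞ and ∫₁^∞ dr/μ(r) = ∞, and assume μ is differentiable on (0,∞). Let Γ be the associated flow defined by ∫ₓ^{Γ(t,x)} dr/μ(r) = t, and let 0 < a ≤ ∞. Then the following are equivalent: (1) μ is concave on (0,a) (i.e. μ' is nonincreasing on (0,a)); (2) for every t > 0, x ↦ Γ(t,x) is twice differentiable on (0,∞) and ∂ₓ²Γ(t,x) ≤ 0 for every x > 0 with Γ(t,x) < a; (3) there exists δ > 0 such that the conclusion of (2) holds for every t ∈ (0,δ). Moreover, in this situation ∂ₓ²Γ(t,x) = (μ'(Γ(t,x)) − μ'(x))·∂ₓΓ(t,x)/μ(x),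 and if ∂ₓ²Γ(t,x) < 0 for every t > 0 and every x with Γ(t,x) < a, then μ' is strictly decreasing on (0,a). -/
open MeasureTheory Real Filter
open scoped ENNReal

theorem stmt7 (μ : ℝ → ℝ) (hcont : ContinuousOn μ (Set.Ici 0)) (h0 : μ 0 = 0)
    (hpos : ∀ x > 0, 0 < μ x)
    (hdiff : ∀ x > 0, DifferentiableAt ℝ μ x)
    (hOsgood : ∫⁻ r in Set.Ioo (0:ℝ) 1, ENNReal.ofReal (μ r)⁻¹ = ⊤)
    (hInfty : ∫⁻ r in Set.Ioi (1:ℝ), ENNReal.ofReal (μ r)⁻¹ = ⊤)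
    (Γ : ℝ → ℝ → ℝ)
    (hΓ : ∀ t ≥ 0, ∀ x > 0, 0 < Γ t x ∧ ∫ r in x..Γ t x, (μ r)⁻¹ = t)
    (a : ℝ≥0∞) (ha : 0 < a) :
    (AntitoneOn (deriv μ) {x : ℝ | 0 < x ∧ ENNReal.ofReal x < a} ↔
      (∀ t > 0,
        (∀ x > 0, DifferentiableAt ℝ (fun y => Γ t y) x ∧
          DifferentiableAt ℝ (deriv (fun y => Γ t y)) x) ∧
        (∀ x > 0, ENNReal.ofReal (Γ t x) < a →
          deriv (deriv (fun y => Γ t y)) x ≤ 0))) ∧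
    ((∀ t > 0,
        (∀ x > 0, DifferentiableAt ℝ (fun y => Γ t y) x ∧
          DifferentiableAt ℝ (deriv (fun y => Γ t y)) x) ∧
        (∀ x > 0, ENNReal.ofReal (Γ t x) < a →
          deriv (deriv (fun y => Γ t y)) x ≤ 0)) ↔
      (∃ δ > 0, ∀ t ∈ Set.Ioo (0:ℝ) δ,
        (∀ x > 0, DifferentiableAt ℝ (fun y => Γ t y) x ∧
          DifferentiableAt ℝ (deriv (fun y => Γ t y)) x) ∧
        (∀ x > 0, ENNReal.ofReal (Γ t x) < a →
          deriv (deriv (fun y => Γ t y)) x ≤ 0))) ∧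
    (∀ t > 0, ∀ x > 0,
      deriv (deriv (fun y => Γ t y)) x =
        (deriv μ (Γ t x) - deriv μ x) * deriv (fun y => Γ t y) x / μ x) ∧
    ((∀ t > 0, ∀ x > 0, ENNReal.ofReal (Γ t x) < a →
        deriv (deriv (fun y => Γ t y)) x < 0) →
      StrictAntiOn (deriv μ) {x : ℝ | 0 < x ∧ ENNReal.ofReal x < a}) := by
  have hcA : ∀ x > (0:ℝ), ContinuousAt μ x := fun x hx =>
    hcont.continuousAt (Ici_mem_nhds hx)
  have hcInv : ∀ x > (0:ℝ), ContinuousAt (fun r => (μ r)⁻¹) x := fun x hx =>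
    (hcA x hx).inv₀ (ne_of_gt (hpos x hx))
  have hcInvOn : ContinuousOn (fun r => (μ r)⁻¹) (Set.Ioi 0) := fun x hx =>
    (hcInv x hx).continuousWithinAt
  have hII : ∀ x > (0:ℝ), ∀ y > (0:ℝ),
      IntervalIntegrable (fun r => (μ r)⁻¹) volume x y := by
    intro x hx y hy
    apply (hcInvOn.mono ?_).intervalIntegrable
    intro r hr
    rw [Set.mem_uIcc] at hr
    rcases hr with h | h <;> simp only [Set.mem_Ioi] <;> nlinarith [h.1, h.2]
  set F : ℝ → ℝ := fun x => ∫ r in (1:ℝ)..x, (μ r)⁻¹ with hFdef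
  have hF' : ∀ x > (0:ℝ), HasDerivAt F (μ x)⁻¹ x := by
    intro x hx
    exact intervalIntegral.integral_hasDerivAt_right (hII 1 one_pos x hx)
      ((hcInvOn.stronglyMeasurableAtFilter isOpen_Ioi x hx)) (hcInv x hx)
  -- additivity : F at Γ
  have hFΓ : ∀ t ≥ (0:ℝ), ∀ x > (0:ℝ), F (Γ t x) = F x + t := by
    intro t ht x hx
    obtain ⟨hΓpos, hΓint⟩ := hΓ t ht x hx
    have := intervalIntegral.integral_add_adjacent_intervals
      (hII 1 one_pos x hx) (hII x hx (Γ t x) hΓpos)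
    rw [hΓint] at this
    simpa [hFdef] using this.symm
  -- strict monotone of F on Ioi 0
  have hFmono : StrictMonoOn F (Set.Ioi 0) := by
    apply strictMonoOn_of_deriv_pos (convex_Ioi 0)
    · exact fun x hx => ((hF' x hx).continuousAt).continuousWithinAt
    · intro x hx
      rw [interior_Ioi] at hx
      rw [(hF' x hx).deriv]
      exact inv_pos.mpr (hpos x hx)
  have hFinj : Set.InjOn F (Set.Ioi 0) := hFmono.injOn
  -- H
  set H : ℝ → ℝ := fun y => F (Real.exp y) with hHdef
  have hH' : ∀ y : ℝ, HasDerivAt H ((μ (Real.exp y))⁻¹ * Real.exp y) y := by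
    intro y
    exact (hF' _ (Real.exp_pos y)).comp y (Real.hasDerivAt_exp y)
  have hHmono : StrictMono H := by
    apply strictMono_of_deriv_pos
    intro y
    rw [(hH' y).deriv]
    exact mul_pos (inv_pos.mpr (hpos _ (Real.exp_pos y))) (Real.exp_pos y)
  have hHcont : Continuous H :=
    Differentiable.continuous (fun y => (hH' y).differentiableAt)
  -- the density measure
  set ν : Measure ℝ := volume.withDensity (fun r => ENNReal.ofReal (μ r)⁻¹) with hνdef
  have hν : ∀ s : Set ℝ, MeasurableSet s →
      ν s = ∫⁻ r in s, ENNReal.ofReal (μ r)⁻¹ := by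
    intro s hs; rw [hνdef, withDensity_apply _ hs]
  -- lintegral over Ioc in terms of F
  have hνIoc : ∀ u v : ℝ, 0 < u → u ≤ v → ν (Set.Ioc u v) = ENNReal.ofReal (F v - F u) := by
    intro u v hu huv
    rw [hν _ measurableSet_Ioc]
    have hint : IntegrableOn (fun r => (μ r)⁻¹) (Set.Ioc u v) volume :=
      (intervalIntegrable_iff_integrableOn_Ioc_of_le huv).1 (hII u hu v (lt_of_lt_of_le hu huv))
    rw [← MeasureTheory.ofReal_integral_eq_lintegral_ofReal hint]
    · congr 1
      have h1 : ∫ r in u..v, (μ r)⁻¹ = F v - F u := by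
        have := intervalIntegral.integral_add_adjacent_intervals
          (hII 1 one_pos u hu) (hII u hu v (lt_of_lt_of_le hu huv))
        rw [hFdef]; simp only []; linarith [this]
      rw [← h1, intervalIntegral.integral_of_le huv]
    · filter_upwards [MeasureTheory.ae_restrict_mem measurableSet_Ioc] with r hr
      exact le_of_lt (inv_pos.mpr (hpos r (lt_of_lt_of_le hu (le_of_lt hr.1))))
  -- Tendsto at top
  have hFtop : Tendsto H atTop atTop := by
    rw [tendsto_atTop_atTop]
    intro b
    by_contra hcon
    push_neg at hcon
    have hball : ∀ z > (0:ℝ), F z < b := by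
      intro z hz
      obtain ⟨w, hw, hwb⟩ := hcon (Real.log z)
      calc F z = H (Real.log z) := by rw [hHdef]; simp [Real.exp_log hz]
        _ ≤ H w := (hHmono.monotone hw)
        _ < b := hwb
    have hcup : Set.Ioi (1:ℝ) = ⋃ n : ℕ, Set.Ioc (1:ℝ) ((n:ℝ)+2) := by
      ext r
      simp only [Set.mem_Ioi, Set.mem_iUnion, Set.mem_Ioc]
      constructor
      · intro hr
        obtain ⟨n, hn⟩ := exists_nat_ge r
        exact ⟨n, hr, by linarith⟩
      · rintro ⟨n, h1, _⟩; exact h1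
    have hdir : Directed (· ⊆ ·) (fun n : ℕ => Set.Ioc (1:ℝ) ((n:ℝ)+2)) := by
      apply Monotone.directed_le
      intro m n hmn
      have : (m:ℝ) ≤ (n:ℝ) := Nat.cast_le.mpr hmn
      exact Set.Ioc_subset_Ioc le_rfl (by linarith)
    have htop : ν (Set.Ioi 1) = ⊤ := by rw [hν _ measurableSet_Ioi]; exact hInfty
    rw [hcup, hdir.measure_iUnion] at htop
    have hle : ∀ n : ℕ, ν (Set.Ioc (1:ℝ) ((n:ℝ)+2)) ≤ ENNReal.ofReal (b - F 1) := by
      intro n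
      rw [hνIoc 1 ((n:ℝ)+2) one_pos (by linarith [Nat.cast_nonneg (α := ℝ) n])]
      exact ENNReal.ofReal_le_ofReal (by linarith [hball ((n:ℝ)+2) (by positivity)])
    have := iSup_le hle
    rw [htop] at this
    exact ENNReal.ofReal_lt_top.ne (top_le_iff.mp this)
  -- Tendsto at bot
  have hFbot : Tendsto H atBot atBot := by
    rw [tendsto_atBot_atBot]
    intro b
    by_contra hcon
    push_neg at hcon
    have hball : ∀ z : ℝ, 0 < z → z < 1 → b < F z := by
      intro z hz hz1
      obtain ⟨w, hw, hwb⟩ := hcon (Real.log z)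
      calc b < H w := hwb
        _ ≤ H (Real.log z) := hHmono.monotone hw
        _ = F z := by rw [hHdef]; simp [Real.exp_log hz]
    have hcup : Set.Ioo (0:ℝ) 1 = ⋃ n : ℕ, Set.Ioo (((n:ℝ)+2)⁻¹) 1 := by
      ext r
      simp only [Set.mem_Ioo, Set.mem_iUnion]
      constructor
      · rintro ⟨h1, h2⟩
        obtain ⟨n, hn⟩ := exists_nat_ge r⁻¹
        refine ⟨n, ?_, h2⟩
        rw [inv_lt_comm₀ (by positivity) h1]
        calc r⁻¹ ≤ (n:ℝ) := hn
          _ < (n:ℝ) + 2 := by linarith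
      · rintro ⟨n, h1, h2⟩
        exact ⟨lt_trans (by positivity) h1, h2⟩
    have hdir : Directed (· ⊆ ·) (fun n : ℕ => Set.Ioo (((n:ℝ)+2)⁻¹) 1) := by
      apply Monotone.directed_le
      intro m n hmn
      have h1 : (m:ℝ) ≤ (n:ℝ) := Nat.cast_le.mpr hmn
      exact Set.Ioo_subset_Ioo (by
        apply inv_anti₀ (by positivity) (by linarith)) le_rfl
    have htop : ν (Set.Ioo 0 1) = ⊤ := by rw [hν _ measurableSet_Ioo]; exact hOsgood
    rw [hcup, hdir.measure_iUnion] at htop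
    have hle : ∀ n : ℕ, ν (Set.Ioo (((n:ℝ)+2)⁻¹) 1) ≤ ENNReal.ofReal (F 1 - b) := by
      intro n
      have hio : ν (Set.Ioo (((n:ℝ)+2)⁻¹) 1) ≤ ν (Set.Ioc (((n:ℝ)+2)⁻¹) 1) :=
        measure_mono Set.Ioo_subset_Ioc_self
      refine le_trans hio ?_
      rw [hνIoc _ 1 (by positivity) ?_]
      · apply ENNReal.ofReal_le_ofReal
        have := hball (((n:ℝ)+2)⁻¹) (by positivity) ?_
        · linarith
        · rw [inv_lt_one_iff₀]; right; linarith [Nat.cast_nonneg (α := ℝ) n]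
      · rw [inv_le_one_iff₀]; right; linarith [Nat.cast_nonneg (α := ℝ) n]
    have := iSup_le hle
    rw [htop] at this
    exact ENNReal.ofReal_lt_top.ne (top_le_iff.mp this)
  have hHsurj : Function.Surjective H := hHcont.surjective hFtop hFbot
  set e : ℝ ≃o ℝ := StrictMono.orderIsoOfSurjective H hHmono hHsurj with hedef
  have hesymmH : ∀ z, H (e.symm z) = z := fun z =>
    StrictMono.orderIsoOfSurjective_self_symm_apply H hHmono hHsurj z
  have hesymm_cont : Continuous (⇑e.symm) := OrderIso.continuous _
  have hesymm' : ∀ z : ℝ,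
      HasDerivAt (⇑e.symm) (((μ (Real.exp (e.symm z)))⁻¹ * Real.exp (e.symm z))⁻¹) z := by
    intro z
    refine HasDerivAt.of_local_left_inverse hesymm_cont.continuousAt (hH' (e.symm z)) ?_
      (Eventually.of_forall hesymmH)
    have := mul_pos (inv_pos.mpr (hpos _ (Real.exp_pos (e.symm z)))) (Real.exp_pos (e.symm z))
    exact ne_of_gt this
  have hΓformula : ∀ t ≥ (0:ℝ), ∀ x > (0:ℝ),
      Γ t x = Real.exp (e.symm (H (Real.log x) + t)) := by
    intro t ht x hx
    obtain ⟨hΓpos, -⟩ := hΓ t ht x hx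
    have h1 : H (Real.log (Γ t x)) = H (Real.log x) + t := by
      rw [hHdef]
      simp only [Real.exp_log hΓpos, Real.exp_log hx]
      exact hFΓ t ht x hx
    have h2 : H (Real.log (Γ t x)) = H (e.symm (H (Real.log x) + t)) := by
      rw [h1, hesymmH]
    have := hHmono.injective h2
    rw [← this, Real.exp_log hΓpos]
  -- first derivative of Γ t
  have hΓderiv : ∀ t ≥ (0:ℝ), ∀ x > (0:ℝ),
      HasDerivAt (fun y => Γ t y) (μ (Γ t x) / μ x) x := by
    intro t ht x hx
    obtain ⟨hΓpos, -⟩ := hΓ t ht x hx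
    set u : ℝ := e.symm (H (Real.log x) + t) with hudef
    have hu : Real.exp u = Γ t x := (hΓformula t ht x hx).symm
    have h1 : HasDerivAt (fun y : ℝ => Real.log y) x⁻¹ x := Real.hasDerivAt_log (ne_of_gt hx)
    have h2 : HasDerivAt H ((μ x)⁻¹ * x) (Real.log x) := by
      have := hH' (Real.log x)
      rwa [Real.exp_log hx] at this
    have h3 : HasDerivAt (fun y => H (Real.log y)) ((μ x)⁻¹ * x * x⁻¹) x := h2.comp x h1
    have h4 : HasDerivAt (fun y => H (Real.log y) + t) ((μ x)⁻¹ * x * x⁻¹) x := h3.add_const t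
    have h5 : HasDerivAt (fun y => e.symm (H (Real.log y) + t))
        (((μ (Real.exp u))⁻¹ * Real.exp u)⁻¹ * ((μ x)⁻¹ * x * x⁻¹)) x :=
      (hesymm' _).comp x h4
    have h6 : HasDerivAt (fun y => Real.exp (e.symm (H (Real.log y) + t)))
        (Real.exp u * (((μ (Real.exp u))⁻¹ * Real.exp u)⁻¹ * ((μ x)⁻¹ * x * x⁻¹))) x :=
      (Real.hasDerivAt_exp _).comp x h5
    have heq : (fun y => Γ t y) =ᶠ[nhds x] (fun y => Real.exp (e.symm (H (Real.log y) + t))) := by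
      filter_upwards [Ioi_mem_nhds hx] with y hy
      exact hΓformula t ht y hy
    have h7 : HasDerivAt (fun y => Γ t y)
        (Real.exp u * (((μ (Real.exp u))⁻¹ * Real.exp u)⁻¹ * ((μ x)⁻¹ * x * x⁻¹))) x :=
      h6.congr_of_eventuallyEq heq
    convert h7 using 1
    rw [hu]
    have hμΓ := hpos _ hΓpos
    have hμx := hpos x hx
    field_simp
  have hderiv_eq : ∀ t ≥ (0:ℝ), ∀ x > (0:ℝ), deriv (fun y => Γ t y) x = μ (Γ t x) / μ x :=
    fun t ht x hx => (hΓderiv t ht x hx).deriv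
  have hΓ2 : ∀ t ≥ (0:ℝ), ∀ x > (0:ℝ), HasDerivAt (deriv (fun y => Γ t y))
      ((deriv μ (Γ t x) - deriv μ x) * (μ (Γ t x) / μ x) / μ x) x := by
    intro t ht x hx
    obtain ⟨hΓpos, -⟩ := hΓ t ht x hx
    have hev : deriv (fun y => Γ t y) =ᶠ[nhds x] (fun y => μ (Γ t y) * (μ y)⁻¹) := by
      filter_upwards [Ioi_mem_nhds hx] with y hy
      rw [hderiv_eq t ht y hy, div_eq_mul_inv]
    have hg1 : HasDerivAt (fun y => μ (Γ t y)) (deriv μ (Γ t x) * (μ (Γ t x) / μ x)) x :=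
      ((hdiff _ hΓpos).hasDerivAt).comp x (hΓderiv t ht x hx)
    have hg2 : HasDerivAt (fun y => (μ y)⁻¹) (-(deriv μ x) / (μ x)^2) x :=
      ((hdiff x hx).hasDerivAt).inv (ne_of_gt (hpos x hx))
    have hg := (hg1.mul hg2).congr_of_eventuallyEq hev
    refine hg.congr_deriv ?_
    have hx1 := hpos x hx; have hx2 := hpos _ hΓpos
    field_simp
    ring
  have hformula : ∀ t ≥ (0:ℝ), ∀ x > (0:ℝ),
      deriv (deriv (fun y => Γ t y)) x
        = (deriv μ (Γ t x) - deriv μ x) * deriv (fun y => Γ t y) x / μ x := by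
    intro t ht x hx
    rw [(hΓ2 t ht x hx).deriv, hderiv_eq t ht x hx]
  have hdiffboth : ∀ t ≥ (0:ℝ), ∀ x > (0:ℝ),
      DifferentiableAt ℝ (fun y => Γ t y) x ∧
        DifferentiableAt ℝ (deriv (fun y => Γ t y)) x :=
    fun t ht x hx => ⟨(hΓderiv t ht x hx).differentiableAt, (hΓ2 t ht x hx).differentiableAt⟩
  have hsign : ∀ t ≥ (0:ℝ), ∀ x > (0:ℝ),
      (deriv (deriv (fun y => Γ t y)) x ≤ 0 ↔ deriv μ (Γ t x) ≤ deriv μ x) := by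
    intro t ht x hx
    obtain ⟨hΓpos, -⟩ := hΓ t ht x hx
    rw [hformula t ht x hx, hderiv_eq t ht x hx]
    have hr : 0 < μ (Γ t x) / μ x / μ x := by
      have := hpos x hx; have := hpos _ hΓpos; positivity
    rw [mul_div_assoc]
    constructor
    · intro h; nlinarith
    · intro h; nlinarith
  have hsignlt : ∀ t ≥ (0:ℝ), ∀ x > (0:ℝ),
      (deriv (deriv (fun y => Γ t y)) x < 0 ↔ deriv μ (Γ t x) < deriv μ x) := by
    intro t ht x hx
    obtain ⟨hΓpos, -⟩ := hΓ t ht x hx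
    rw [hformula t ht x hx, hderiv_eq t ht x hx]
    have hr : 0 < μ (Γ t x) / μ x / μ x := by
      have := hpos x hx; have := hpos _ hΓpos; positivity
    rw [mul_div_assoc]
    constructor
    · intro h; nlinarith
    · intro h; nlinarith
  -- uniqueness helpers
  have huniq : ∀ t ≥ (0:ℝ), ∀ x > (0:ℝ), ∀ z > (0:ℝ), F z = F x + t → Γ t x = z := by
    intro t ht x hx z hz hFz
    exact hFinj (hΓ t ht x hx).1 hz (by rw [hFΓ t ht x hx, hFz])
  have hΓ0 : ∀ x > (0:ℝ), Γ 0 x = x := fun x hx => huniq 0 le_rfl x hx x hx (by ring)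
  have hxlt : ∀ t > (0:ℝ), ∀ x > (0:ℝ), x < Γ t x := by
    intro t ht x hx
    have h1 : F x < F (Γ t x) := by rw [hFΓ t (le_of_lt ht) x hx]; linarith
    exact (hFmono.lt_iff_lt hx (hΓ t (le_of_lt ht) x hx).1).1 h1
  set S : Set ℝ := {x : ℝ | 0 < x ∧ ENNReal.ofReal x < a} with hSdef
  have hAto2 : AntitoneOn (deriv μ) S → ∀ t > (0:ℝ),
      (∀ x > (0:ℝ), DifferentiableAt ℝ (fun y => Γ t y) x ∧
        DifferentiableAt ℝ (deriv (fun y => Γ t y)) x) ∧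
      (∀ x > (0:ℝ), ENNReal.ofReal (Γ t x) < a → deriv (deriv (fun y => Γ t y)) x ≤ 0) := by
    intro hA t ht
    refine ⟨fun x hx => hdiffboth t (le_of_lt ht) x hx, ?_⟩
    intro x hx hΓa
    rw [hsign t (le_of_lt ht) x hx]
    have hlt := hxlt t ht x hx
    have hΓpos := (hΓ t (le_of_lt ht) x hx).1
    have hxS : x ∈ S := ⟨hx, lt_of_le_of_lt (ENNReal.ofReal_le_ofReal (le_of_lt hlt)) hΓa⟩
    exact hA hxS ⟨hΓpos, hΓa⟩ (le_of_lt hlt)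
  have h2toA : (∀ t > (0:ℝ),
      (∀ x > (0:ℝ), DifferentiableAt ℝ (fun y => Γ t y) x ∧
        DifferentiableAt ℝ (deriv (fun y => Γ t y)) x) ∧
      (∀ x > (0:ℝ), ENNReal.ofReal (Γ t x) < a → deriv (deriv (fun y => Γ t y)) x ≤ 0)) →
      AntitoneOn (deriv μ) S := by
    intro h x hxS y hyS hxy
    rcases eq_or_lt_of_le hxy with rfl | hlt
    · exact le_rfl
    have ht : 0 < F y - F x := sub_pos.mpr (hFmono hxS.1 hyS.1 hlt)
    have hGy : Γ (F y - F x) x = y :=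
      huniq _ (le_of_lt ht) x hxS.1 y hyS.1 (by ring)
    have h2 := (h _ ht).2 x hxS.1 (by rw [hGy]; exact hyS.2)
    rw [hsign _ (le_of_lt ht) x hxS.1, hGy] at h2
    exact h2
  have hchain : (∃ δ > (0:ℝ), ∀ t ∈ Set.Ioo (0:ℝ) δ,
      (∀ x > (0:ℝ), DifferentiableAt ℝ (fun y => Γ t y) x ∧
        DifferentiableAt ℝ (deriv (fun y => Γ t y)) x) ∧
      (∀ x > (0:ℝ), ENNReal.ofReal (Γ t x) < a → deriv (deriv (fun y => Γ t y)) x ≤ 0)) →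
      AntitoneOn (deriv μ) S := by
    rintro ⟨δ, hδ, h3⟩ x hxS y hyS hxy
    rcases eq_or_lt_of_le hxy with rfl | hlt
    · exact le_rfl
    have hx := hxS.1
    have ht₀ : 0 < F y - F x := sub_pos.mpr (hFmono hxS.1 hyS.1 hlt)
    set t₀ := F y - F x with ht₀def
    obtain ⟨n, hn⟩ := exists_nat_gt (t₀ / δ)
    set s := t₀ / ((n:ℝ) + 1) with hsdef
    have hnpos : (0:ℝ) < (n:ℝ) + 1 := by positivity
    have hspos : 0 < s := by positivity
    have hns : ((n:ℝ) + 1) * s = t₀ := by rw [hsdef]; field_simp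
    have hsδ : s < δ := by
      rw [hsdef, div_lt_iff₀ hnpos]
      rw [div_lt_iff₀ hδ] at hn
      nlinarith [Nat.cast_nonneg (α := ℝ) n]
    have hxi_pos : ∀ i : ℕ, 0 < Γ ((i:ℝ) * s) x := fun i =>
      (hΓ _ (by positivity) x hx).1
    have hxi_F : ∀ i : ℕ, F (Γ ((i:ℝ) * s) x) = F x + (i:ℝ) * s := fun i =>
      hFΓ _ (by positivity) x hx
    have hxi_le : ∀ i : ℕ, i ≤ n + 1 → Γ ((i:ℝ) * s) x ≤ y := by
      intro i hi
      have hile : (i:ℝ) ≤ (n:ℝ) + 1 := by exact_mod_cast hi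
      have hF : F (Γ ((i:ℝ) * s) x) ≤ F y := by
        rw [hxi_F i]
        nlinarith [hns]
      exact (hFmono.le_iff_le (hxi_pos i) hyS.1).1 hF
    have hstep : ∀ i : ℕ, Γ s (Γ ((i:ℝ) * s) x) = Γ (((i:ℝ) + 1) * s) x := by
      intro i
      have h1 : 0 < Γ (((i:ℝ) + 1) * s) x := by
        have : ((i:ℝ) + 1) * s = (((i+1:ℕ)):ℝ) * s := by push_cast; ring
        rw [this]; exact hxi_pos (i+1)
      apply huniq s (le_of_lt hspos) _ (hxi_pos i) _ h1
      have h2 : F (Γ (((i:ℝ) + 1) * s) x) = F x + ((i:ℝ) + 1) * s := by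
        have h := hxi_F (i+1)
        push_cast at h
        exact h
      rw [h2, hxi_F i]; ring
    have hkey : ∀ i : ℕ, i ≤ n + 1 → deriv μ (Γ ((i:ℝ) * s) x) ≤ deriv μ x := by
      intro i
      induction i with
      | zero =>
        intro _
        simp only [Nat.cast_zero, zero_mul]
        rw [hΓ0 x hx]
      | succ k ih =>
        intro hk
        have IH := ih (Nat.le_of_succ_le hk)
        have hmem : Γ ((k:ℝ) * s) x > 0 := hxi_pos k
        have hlea : ENNReal.ofReal (Γ s (Γ ((k:ℝ) * s) x)) < a := by
          rw [hstep k]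
          refine lt_of_le_of_lt (ENNReal.ofReal_le_ofReal ?_) hyS.2
          have := hxi_le (k+1) hk
          push_cast at this ⊢
          exact this
        have h2 := (h3 s ⟨hspos, hsδ⟩).2 _ hmem hlea
        rw [hsign s (le_of_lt hspos) _ hmem, hstep k] at h2
        push_cast
        exact le_trans h2 IH
    have hfin : Γ (((n:ℝ) + 1) * s) x = y :=
      huniq _ (by positivity) x hx y hyS.1 (by rw [hns, ht₀def]; ring)
    have := hkey (n+1) le_rfl
    push_cast at this
    rw [hfin] at this
    exact this
  refine ⟨⟨fun hA => hAto2 hA, fun h => h2toA h⟩,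
    ⟨fun h => ⟨1, one_pos, fun t ht => h t ht.1⟩, fun h => hAto2 (hchain h)⟩,
    fun t ht x hx => hformula t (le_of_lt ht) x hx, ?_⟩
  intro h x hxS y hyS hxy
  have ht : 0 < F y - F x := sub_pos.mpr (hFmono hxS.1 hyS.1 hxy)
  have hGy : Γ (F y - F x) x = y := huniq _ (le_of_lt ht) x hxS.1 y hyS.1 (by ring)
  have h2 := h _ ht x hxS.1 (by rw [hGy]; exact hyS.2)
  rw [hsignlt _ (le_of_lt ht) x hxS.1, hGy] at h2
  exact h2
end

section
/- Let μ : [0,∞) → [0,∞) be continuous with μ(0) = 0, μ > 0 on (0,∞), ∫₀¹ dr/μ(r) = ∞ and ∫₁^∞ dr/μ(r) = ∞, and assume μ is nondecreasing on (0,∞). Let Γ be the associated flow defined by ∫ₓ^{Γ(t,x)} dr/μ(r) = t. Then for each fixed x > 0: the map t ↦ Γ(t,x) is convex on [0,∞), and the map t ↦ ∂ₓΓ(t,x) is nondecreasing. If μ is strictly increasing, then t ↦ Γ(t,x) is strictly convex and t ↦ ∂ₓΓ(t,x) is strictly increasing. -/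
open MeasureTheory Real Filter
open Topology

theorem stmt8 (μ : ℝ → ℝ) (hcont : ContinuousOn μ (Set.Ici 0)) (h0 : μ 0 = 0)
    (hpos : ∀ x > 0, 0 < μ x)
    (hmono : MonotoneOn μ (Set.Ioi 0))
    (hOsgood : ∫⁻ r in Set.Ioo (0:ℝ) 1, ENNReal.ofReal (μ r)⁻¹ = ⊤)
    (hInfty : ∫⁻ r in Set.Ioi (1:ℝ), ENNReal.ofReal (μ r)⁻¹ = ⊤)
    (Γ : ℝ → ℝ → ℝ)
    (hΓ : ∀ t ≥ 0, ∀ x > 0, 0 < Γ t x ∧ ∫ r in x..Γ t x, (μ r)⁻¹ = t)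
    (x : ℝ) (hx : 0 < x) :
    ConvexOn ℝ (Set.Ici 0) (fun t => Γ t x) ∧
    MonotoneOn (fun t => deriv (fun y => Γ t y) x) (Set.Ici 0) ∧
    (StrictMonoOn μ (Set.Ioi 0) →
      StrictConvexOn ℝ (Set.Ici 0) (fun t => Γ t x) ∧
      StrictMonoOn (fun t => deriv (fun y => Γ t y) x) (Set.Ici 0)) := by
  classical
  set f : ℝ → ℝ := fun r => (μ r)⁻¹ with hfdef
  have hμc : ContinuousOn μ (Set.Ioi 0) := hcont.mono Set.Ioi_subset_Ici_self
  have hfc : ContinuousOn f (Set.Ioi 0) := hμc.inv₀ fun y hy => (hpos y hy).ne'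
  have hsub : ∀ {a b : ℝ}, 0 < a → 0 < b → Set.uIcc a b ⊆ Set.Ioi 0 := by
    intro a b ha hb z hz
    rw [Set.mem_uIcc] at hz
    rcases hz with ⟨h1, _⟩ | ⟨h1, _⟩
    · exact lt_of_lt_of_le ha h1
    · exact lt_of_lt_of_le hb h1
  have hint : ∀ a b : ℝ, 0 < a → 0 < b → IntervalIntegrable f volume a b :=
    fun a b ha hb => (hfc.mono (hsub ha hb)).intervalIntegrable
  set G : ℝ → ℝ := fun y => ∫ r in x..y, f r with hGdef
  have hGd : ∀ y : ℝ, 0 < y → HasDerivAt G (f y) y := fun y hy =>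
    intervalIntegral.integral_hasDerivAt_right (hint x y hx hy)
      (hfc.stronglyMeasurableAtFilter isOpen_Ioi y hy)
      (hfc.continuousAt (Ioi_mem_nhds hy))
  have hGsub : ∀ a b : ℝ, 0 < a → 0 < b → (∫ r in a..b, f r) = G b - G a := by
    intro a b ha hb
    have h := intervalIntegral.integral_add_adjacent_intervals
      (hint x a hx ha) (hint a b ha hb)
    simp only [hGdef]
    linarith
  have hGx : G x = 0 := intervalIntegral.integral_same
  have hGsm : StrictMonoOn G (Set.Ioi 0) := by
    intro a ha b hb hab
    have h1 : 0 < ∫ r in a..b, f r :=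
      intervalIntegral.intervalIntegral_pos_of_pos_on (hint a b ha hb)
        (fun r hr => inv_pos.2 (hpos r (lt_trans ha hr.1))) hab
    have h2 := hGsub a b ha hb
    linarith
  set g : ℝ → ℝ := fun t => Γ t x with hgdef
  have hgpos : ∀ t : ℝ, 0 ≤ t → 0 < g t := fun t ht => (hΓ t ht x hx).1
  have hgG : ∀ t : ℝ, 0 ≤ t → G (g t) = t := by
    intro t ht
    have h := (hΓ t ht x hx).2
    simpa [hGdef, hgdef] using h
  have hgsm : StrictMonoOn g (Set.Ici 0) := by
    intro a ha b hb hab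
    have ha' : 0 ≤ a := ha
    have hb' : 0 ≤ b := hb
    have : G (g a) < G (g b) := by rw [hgG a ha', hgG b hb']; exact hab
    exact (hGsm.lt_iff_lt (hgpos a ha') (hgpos b hb')).mp this
  have hg0 : g 0 = x := by
    have h : G (g 0) = G x := by rw [hgG 0 le_rfl, hGx]
    exact hGsm.injOn (hgpos 0 le_rfl) hx h
  have hgx : ∀ t : ℝ, 0 ≤ t → x ≤ g t := by
    intro t ht
    rw [← hg0]
    exact hgsm.monotoneOn (Set.mem_Ici.mpr le_rfl) (Set.mem_Ici.mpr ht) ht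
  have hsurj : ∀ v : ℝ, x ≤ v → g (G v) = v := by
    intro v hv
    have hv0 : 0 < v := lt_of_lt_of_le hx hv
    have hGv : 0 ≤ G v := by
      rw [← hGx]
      exact hGsm.monotoneOn hx hv0 hv
    exact hGsm.injOn (hgpos _ hGv) hv0 (hgG _ hGv)
  -- continuity of g
  have hbetween_r : ∀ t : ℝ, 0 ≤ t → ∀ b > g t, ∃ c ∈ Set.Ici (0:ℝ), g c ∈ Set.Ioc (g t) b := by
    intro t ht b hb
    have hxb : x ≤ b := le_trans (hgx t ht) hb.le
    refine ⟨G b, ?_, ?_⟩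
    · rw [← hGx]; exact hGsm.monotoneOn hx (lt_of_lt_of_le hx hxb) hxb
    · rw [hsurj b hxb]; exact ⟨hb, le_rfl⟩
  have hbetween_l : ∀ t : ℝ, 0 < t → ∀ b < g t, ∃ c ∈ Set.Ici (0:ℝ), g c ∈ Set.Ico b (g t) := by
    intro t ht b hb
    rcases le_or_gt x b with hxb | hbx
    · refine ⟨G b, ?_, ?_⟩
      · rw [← hGx]; exact hGsm.monotoneOn hx (lt_of_lt_of_le hx hxb) hxb
      · rw [hsurj b hxb]; exact ⟨le_rfl, hb⟩
    · refine ⟨0, Set.self_mem_Ici, ?_⟩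
      rw [hg0]
      refine ⟨hbx.le, ?_⟩
      rw [← hg0]
      exact hgsm (Set.mem_Ici.mpr le_rfl) (Set.mem_Ici.mpr ht.le) ht
  have hgcA : ∀ t : ℝ, 0 < t → ContinuousAt g t := by
    intro t ht
    exact hgsm.continuousAt_of_exists_between (Ici_mem_nhds ht)
      (hbetween_l t ht) (hbetween_r t ht.le)
  have hgcOn : ContinuousOn g (Set.Ici 0) := by
    intro t ht
    rcases eq_or_lt_of_le (Set.mem_Ici.mp ht) with h | h
    · subst h
      exact (hgsm.continuousWithinAt_right_of_exists_between self_mem_nhdsWithin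
        (hbetween_r 0 le_rfl)).mono (by simp)
    · exact (hgcA t h).continuousWithinAt
  -- derivative of g
  have hgd : ∀ t : ℝ, 0 < t → HasDerivAt g (μ (g t)) t := by
    intro t ht
    have h1 : HasDerivAt G (f (g t)) (g t) := hGd _ (hgpos t ht.le)
    have h2 : f (g t) ≠ 0 := (inv_pos.2 (hpos _ (hgpos t ht.le))).ne'
    have h3 : ∀ᶠ s in 𝓝 t, G (g s) = s := by
      filter_upwards [Ioi_mem_nhds ht] with s hs using hgG s (le_of_lt hs)
    have h4 := HasDerivAt.of_local_left_inverse (hgcA t ht) h1 h2 h3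
    simpa [hfdef, inv_inv] using h4
  have hderivg : ∀ t ∈ Set.Ioi (0:ℝ), deriv g t = μ (g t) := fun t ht => (hgd t ht).deriv
  -- convexity
  have hconv : ConvexOn ℝ (Set.Ici 0) g := by
    apply MonotoneOn.convexOn_of_deriv (convex_Ici 0) hgcOn
    · rw [interior_Ici]
      exact fun t ht => (hgd t ht).differentiableAt.differentiableWithinAt
    · rw [interior_Ici]
      intro a ha b hb hab
      rw [hderivg a ha, hderivg b hb]
      exact hmono (Set.mem_Ioi.mpr (hgpos a (le_of_lt ha)))
        (Set.mem_Ioi.mpr (hgpos b (le_of_lt hb)))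
        (hgsm.monotoneOn (Set.mem_Ici.mpr (le_of_lt ha)) (Set.mem_Ici.mpr (le_of_lt hb)) hab)
  -- the y-derivative
  have hyderiv : ∀ t : ℝ, 0 ≤ t → deriv (fun y => Γ t y) x = μ (g t) / μ x := by
    intro t ht
    rcases eq_or_lt_of_le ht with h0' | htpos
    · subst h0'
      have hev : (fun y => Γ 0 y) =ᶠ[𝓝 x] fun y => y := by
        filter_upwards [Ioi_mem_nhds hx] with y hy
        have h1 := (hΓ 0 le_rfl y hy).1
        have h2 := (hΓ 0 le_rfl y hy).2
        have h3 := hGsub y (Γ 0 y) hy h1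
        have h4 : G (Γ 0 y) = G y := by
          simp only [hfdef] at h2
          linarith
        exact hGsm.injOn h1 hy h4
      rw [hev.deriv_eq, deriv_id'']
      rw [hg0, div_self (hpos x hx).ne']
    · have hchain : HasDerivAt (fun y => g (t + G y)) (μ (g t) * f x) x := by
        have h1 : HasDerivAt G (f x) x := hGd x hx
        have h2 : HasDerivAt (fun y => t + G y) (f x) x := h1.const_add t
        have h3 : HasDerivAt g (μ (g t)) (t + G x) := by
          rw [hGx, add_zero]; exact hgd t htpos
        have := h3.comp x h2
        exact this
      have hd : HasDerivAt (fun y => Γ t y) (μ (g t) * f x) x := by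
        refine hchain.congr_of_eventuallyEq ?_
        have hG0 : ContinuousAt G x := (hGd x hx).continuousAt
        have hev2 : ∀ᶠ y in 𝓝 x, -t < G y :=
          hG0.eventually (eventually_gt_nhds (by rw [hGx]; linarith))
        filter_upwards [Ioi_mem_nhds hx, hev2] with y hy1 hy2
        have hs0 : 0 ≤ t + G y := by linarith
        have h1 := (hΓ t ht y hy1).1
        have h2 := (hΓ t ht y hy1).2
        have h3 := hGsub y (Γ t y) hy1 h1
        have e1 : G (Γ t y) = t + G y := by
          simp only [hfdef] at h2
          linarith
        have e2 : G (g (t + G y)) = t + G y := hgG _ hs0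
        exact hGsm.injOn h1 (hgpos _ hs0) (e1.trans e2.symm)
      rw [hd.deriv, hfdef, div_eq_mul_inv]
  have hmono2 : MonotoneOn (fun t => deriv (fun y => Γ t y) x) (Set.Ici 0) := by
    intro a ha b hb hab
    simp only
    rw [hyderiv a ha, hyderiv b hb]
    have hga : g a ≤ g b := hgsm.monotoneOn ha hb hab
    have := hmono (Set.mem_Ioi.mpr (hgpos a ha)) (Set.mem_Ioi.mpr (hgpos b hb)) hga
    exact (div_le_div_iff_of_pos_right (hpos x hx)).mpr this
  refine ⟨hconv, hmono2, fun hsm => ⟨?_, ?_⟩⟩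
  · apply StrictMonoOn.strictConvexOn_of_deriv (convex_Ici 0) hgcOn
    rw [interior_Ici]
    intro a ha b hb hab
    rw [hderivg a ha, hderivg b hb]
    exact hsm (Set.mem_Ioi.mpr (hgpos a (le_of_lt ha)))
      (Set.mem_Ioi.mpr (hgpos b (le_of_lt hb)))
      (hgsm (Set.mem_Ici.mpr (le_of_lt ha)) (Set.mem_Ici.mpr (le_of_lt hb)) hab)
  · intro a ha b hb hab
    simp only
    rw [hyderiv a ha, hyderiv b hb]
    have hga : g a < g b := hgsm ha hb hab
    have := hsm (Set.mem_Ioi.mpr (hgpos a ha)) (Set.mem_Ioi.mpr (hgpos b hb)) hga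
    exact (div_lt_div_iff_of_pos_right (hpos x hx)).mpr this
end

section
/- Let h : ℝ → (0,∞) be a continuously differentiable, strictly increasing bijection onto (0,∞) with h'(x) > 0 for every x ∈ ℝ, and define μ : (0,∞) → (0,∞) by μ(y) = h'(h⁻¹(y)). Then: (i) for every t ∈ ℝ and every x > 0, ∫ₓ^{h(t + h⁻¹(x))} ds/μ(s) = t; (ii) ∫₀¹ ds/μ(s) = ∞, i.e. μ (extended by μ(0) = 0) satisfies the Osgood condition. -/
open MeasureTheory Real Filter

theorem stmt10 (h g : ℝ → ℝ) (hpos : ∀ x, 0 < h x)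
    (hC1 : ContDiff ℝ 1 h) (hmono : StrictMono h)
    (hderiv : ∀ x, 0 < deriv h x)
    (hsurj : ∀ y > 0, ∃ x, h x = y)
    (hg1 : ∀ x, g (h x) = x) (hg2 : ∀ y > 0, h (g y) = y) :
    (∀ t : ℝ, ∀ x > 0, ∫ s in x..h (t + g x), (deriv h (g s))⁻¹ = t) ∧
    (∫⁻ s in Set.Ioo (0:ℝ) 1, ENNReal.ofReal (deriv h (g s))⁻¹ = ⊤) := by
  have hdiff : Differentiable ℝ h := hC1.differentiable one_ne_zero
  -- g is strictly monotone on (0, ∞)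
  have hgmono : StrictMonoOn g (Set.Ioi 0) := by
    intro y1 hy1 y2 hy2 hlt
    have := hmono.lt_iff_lt (a := g y1) (b := g y2)
    rw [hg2 y1 hy1, hg2 y2 hy2] at this
    exact this.mp hlt
  -- g is continuous at every point of (0, ∞)
  have hgcont : ∀ a : ℝ, 0 < a → ContinuousAt g a := by
    intro a ha
    refine hgmono.continuousAt_of_image_mem_nhds (Ioi_mem_nhds ha) ?_
    have himg : g '' Set.Ioi 0 = Set.univ := by
      ext x
      simp only [Set.mem_image, Set.mem_univ, iff_true]
      exact ⟨h x, hpos x, hg1 x⟩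
    rw [himg]; exact Filter.univ_mem
  -- g has derivative (deriv h (g a))⁻¹ at every a > 0
  have hgderiv : ∀ a : ℝ, 0 < a → HasDerivAt g (deriv h (g a))⁻¹ a := by
    intro a ha
    refine HasDerivAt.of_local_left_inverse (hgcont a ha) ((hdiff (g a)).hasDerivAt)
      (hderiv (g a)).ne' ?_
    filter_upwards [Ioi_mem_nhds ha] with y hy
    exact hg2 y hy
  -- the integrand is continuous on (0, ∞)
  have hicont : ∀ a : ℝ, 0 < a → ContinuousAt (fun s => (deriv h (g s))⁻¹) a := by
    intro a ha
    have hdc : Continuous (deriv h) := (hC1.continuous_deriv le_rfl)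
    exact ((hdc.continuousAt.comp (hgcont a ha))).inv₀ (hderiv (g a)).ne'
  -- Part 1
  have part1 : ∀ t : ℝ, ∀ x > 0, ∫ s in x..h (t + g x), (deriv h (g s))⁻¹ = t := by
    intro t x hx
    set b := h (t + g x) with hb
    have hbpos : 0 < b := hpos _
    have hsub : Set.uIcc x b ⊆ Set.Ioi 0 := by
      intro s hs
      have := hs.1
      rcases le_total x b with hxb | hbx
      · rw [Set.uIcc_of_le hxb] at hs; exact lt_of_lt_of_le hx hs.1
      · rw [Set.uIcc_of_ge hbx] at hs; exact lt_of_lt_of_le hbpos hs.1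
    have hint : IntervalIntegrable (fun s => (deriv h (g s))⁻¹) volume x b := by
      apply ContinuousOn.intervalIntegrable
      intro s hs
      exact ((hicont s (hsub hs))).continuousWithinAt
    have := intervalIntegral.integral_eq_sub_of_hasDerivAt
      (fun s hs => hgderiv s (hsub hs)) hint
    rw [this, hb, hg1 (t + g x)]
    ring
  refine ⟨part1, ?_⟩
  -- Part 2
  apply ENNReal.eq_top_of_forall_nnreal_le
  intro r
  set c : ℝ := (r : ℝ) with hc
  have hc0 : 0 ≤ c := r.coe_nonneg
  have hg1pos : h (g 1) = 1 := hg2 1 one_pos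
  set a : ℝ := h (g 1 - 1 - c) with ha
  set b : ℝ := h (g 1 - 1) with hbdef
  have hapos : 0 < a := hpos _
  have hbpos : 0 < b := hpos _
  have hab : a ≤ b := (hmono.le_iff_le).mpr (by linarith)
  have hb1 : b < 1 := by
    calc b = h (g 1 - 1) := hbdef
      _ < h (g 1) := hmono (by linarith)
      _ = 1 := hg1pos
  -- the interval integral from a to b equals c
  have hkey : ∫ s in a..b, (deriv h (g s))⁻¹ = c := by
    have hga : g a = g 1 - 1 - c := hg1 _
    have heq : h (c + g a) = b := by rw [hga]; congr 1; ring
    have := part1 c a hapos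
    rwa [heq] at this
  have hsub : Set.Ioc a b ⊆ Set.Ioo (0:ℝ) 1 := fun s hs =>
    ⟨lt_trans hapos hs.1, lt_of_le_of_lt hs.2 hb1⟩
  have hint : IntervalIntegrable (fun s => (deriv h (g s))⁻¹) volume a b := by
    apply ContinuousOn.intervalIntegrable
    intro s hs
    rw [Set.uIcc_of_le hab] at hs
    exact (hicont s (lt_of_lt_of_le hapos hs.1)).continuousWithinAt
  have hInteg : Integrable (fun s => (deriv h (g s))⁻¹) (volume.restrict (Set.Ioc a b)) :=
    (intervalIntegrable_iff_integrableOn_Ioc_of_le hab).mp hint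
  have hnonneg : 0 ≤ᵐ[volume.restrict (Set.Ioc a b)] fun s => (deriv h (g s))⁻¹ :=
    Filter.Eventually.of_forall fun s => inv_nonneg.mpr (hderiv (g s)).le
  calc (r : ENNReal) = ENNReal.ofReal c := by
        rw [hc]; simp [ENNReal.ofReal_coe_nnreal]
    _ = ENNReal.ofReal (∫ s in Set.Ioc a b, (deriv h (g s))⁻¹) := by
        rw [← hkey, intervalIntegral.integral_of_le hab]
    _ ≤ ∫⁻ s in Set.Ioc a b, ENNReal.ofReal (deriv h (g s))⁻¹ :=
        le_of_eq (MeasureTheory.ofReal_integral_eq_lintegral_ofReal hInteg hnonneg)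
    _ ≤ ∫⁻ s in Set.Ioo (0:ℝ) 1, ENNReal.ofReal (deriv h (g s))⁻¹ :=
        lintegral_mono' (Measure.restrict_mono hsub le_rfl) le_rfl
end

section
/- Let μ : [0,∞) → [0,∞) be continuous with μ(0) = 0, twice continuously differentiable on (0,∞), strictly increasing, concave on (0,∞), and positive on (0,∞). Set A(x) = x·μ'(x)/μ(x) for x > 0 and λ(r) = r + log μ(e^{−r}) for r ∈ ℝ. Then: (i) 0 < A(x) ≤ 1 for all x > 0, and A(x) < 1 for all x > 0 if μ is strictly concave; (ii) λ is nondecreasing on ℝ, with λ'(r) = 1 − A(e^{−r}) < 1, and λ is strictly increasing if μ is strictly concave; (iii) x ↦ μ(x)/x is nonincreasing on (0,∞), and strictly decreasing if μ is strictly concave; (iv) log μ is strictly increasing on (0,∞) with (log μ)''(x) < 0 for all x > 0; (v) if moreover μ satisfies the Osgood condition ∫₀¹ dr/μ(r) = ∞, then limsup_{x→0⁺} A(x) = 1. -/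
open MeasureTheory Real Filter

theorem stmt13 (μ : ℝ → ℝ)
    (hc : ContinuousOn μ (Set.Ici 0)) (h0 : μ 0 = 0)
    (hC2 : ContDiffOn ℝ 2 μ (Set.Ioi 0))
    (hmono : StrictMonoOn μ (Set.Ici 0))
    (hconc : ConcaveOn ℝ (Set.Ioi 0) μ)
    (hpos : ∀ x > 0, 0 < μ x)
    (A lam : ℝ → ℝ)
    (hA : ∀ x, A x = x * deriv μ x / μ x)
    (hlam : ∀ r, lam r = r + Real.log (μ (Real.exp (-r)))) :
    (∀ x > 0, 0 < A x ∧ A x ≤ 1) ∧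
    (StrictAntiOn (deriv μ) (Set.Ioi 0) → ∀ x > 0, A x < 1) ∧
    Monotone lam ∧
    (∀ r : ℝ, HasDerivAt lam (1 - A (Real.exp (-r))) r ∧ 1 - A (Real.exp (-r)) < 1) ∧
    (StrictAntiOn (deriv μ) (Set.Ioi 0) → StrictMono lam) ∧
    AntitoneOn (fun x => μ x / x) (Set.Ioi 0) ∧
    (StrictAntiOn (deriv μ) (Set.Ioi 0) → StrictAntiOn (fun x => μ x / x) (Set.Ioi 0)) ∧
    StrictMonoOn (fun x => Real.log (μ x)) (Set.Ioi 0) ∧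
    (∀ x > 0, deriv (deriv (fun y => Real.log (μ y))) x < 0) ∧
    ((∫⁻ r in Set.Ioo (0:ℝ) 1, ENNReal.ofReal (μ r)⁻¹ = ⊤) →
      Filter.limsup A (nhdsWithin 0 (Set.Ioi 0)) = 1) := by
  -- basic differentiability facts
  have hdiff : ∀ x ∈ Set.Ioi (0:ℝ), DifferentiableAt ℝ μ x := fun x hx =>
    (hC2.differentiableOn (by norm_num)).differentiableAt (isOpen_Ioi.mem_nhds hx)
  have hd : ∀ x ∈ Set.Ioi (0:ℝ), HasDerivAt μ (deriv μ x) x := fun x hx =>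
    (hdiff x hx).hasDerivAt
  have hanti : AntitoneOn (deriv μ) (Set.Ioi 0) := hconc.antitoneOn_deriv hdiff
  have hd'pos : ∀ x > 0, 0 < deriv μ x := by
    intro x hx
    have h2x : x < 2 * x := by linarith
    have h2x' : (2:ℝ) * x ∈ Set.Ioi (0:ℝ) := by simp; linarith
    have hs := hconc.slope_le_deriv (Set.mem_Ioi.mpr hx) h2x' h2x (hdiff x hx)
    rw [slope_def_field] at hs
    have hnum : 0 < μ (2 * x) - μ x :=
      sub_pos.mpr (hmono (le_of_lt hx) (by simp; linarith) h2x)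
    have : 0 < (μ (2 * x) - μ x) / (2 * x - x) := div_pos hnum (by linarith)
    linarith
  -- tangent line inequality on subintervals
  have htan : ∀ x > 0, ∀ t ∈ Set.Ioo (0:ℝ) x, deriv μ x * (x - t) ≤ μ x - μ t := by
    intro x hx t ht
    have hs := hconc.deriv_le_slope (Set.mem_Ioi.mpr ht.1) (Set.mem_Ioi.mpr hx) ht.2
      (hdiff x hx)
    rw [slope_def_field] at hs
    have hxt : (0:ℝ) < x - t := by linarith [ht.2]
    exact (le_div_iff₀ hxt).mp hs
  -- key inequality
  have hkey : ∀ x > 0, x * deriv μ x ≤ μ x := by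
    intro x hx
    have h1 : Filter.Tendsto (fun t => deriv μ x * (x - t)) (nhdsWithin 0 (Set.Ioi 0))
        (nhds (deriv μ x * (x - 0))) :=
      ((continuous_const.mul (continuous_const.sub continuous_id)).tendsto 0).mono_left
        nhdsWithin_le_nhds
    have h2 : Filter.Tendsto (fun t => μ x - μ t) (nhdsWithin 0 (Set.Ioi 0))
        (nhds (μ x - μ 0)) := by
      refine tendsto_const_nhds.sub ?_
      exact (hc 0 Set.self_mem_Ici).tendsto.mono_left
        (nhdsWithin_mono 0 (Set.Ioi_subset_Ici_self))
    have hev : ∀ᶠ t in nhdsWithin 0 (Set.Ioi 0),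
        deriv μ x * (x - t) ≤ μ x - μ t := by
      filter_upwards [Ioo_mem_nhdsGT_of_mem ⟨le_refl (0:ℝ), hx⟩] with t ht
      exact htan x hx t ht
    have := le_of_tendsto_of_tendsto h1 h2 hev
    rw [h0] at this
    nlinarith
  -- strict key inequality
  have hkeys : StrictAntiOn (deriv μ) (Set.Ioi 0) → ∀ x > 0, x * deriv μ x < μ x := by
    intro hsa x hx
    set t := x / 2 with htdef
    have htpos : 0 < t := by positivity
    have htx : t < x := by simp [htdef]; linarith
    have h1 : deriv μ x * (x - t) ≤ μ x - μ t := htan x hx t ⟨htpos, htx⟩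
    have h2 : t * deriv μ t ≤ μ t := hkey t htpos
    have h3 : deriv μ x < deriv μ t := hsa (Set.mem_Ioi.mpr htpos) (Set.mem_Ioi.mpr hx) htx
    nlinarith
  -- part (i)
  have part1 : ∀ x > 0, 0 < A x ∧ A x ≤ 1 := by
    intro x hx
    rw [hA]
    exact ⟨div_pos (mul_pos hx (hd'pos x hx)) (hpos x hx),
      (div_le_one (hpos x hx)).mpr (hkey x hx)⟩
  have part2 : StrictAntiOn (deriv μ) (Set.Ioi 0) → ∀ x > 0, A x < 1 := by
    intro hsa x hx
    rw [hA]
    exact (div_lt_one (hpos x hx)).mpr (hkeys hsa x hx)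
  -- derivative of lam
  have hlamfun : lam = fun r => r + Real.log (μ (Real.exp (-r))) := funext hlam
  have hlamderiv : ∀ r : ℝ, HasDerivAt lam (1 - A (Real.exp (-r))) r := by
    intro r
    set e := Real.exp (-r) with he
    have hepos : 0 < e := Real.exp_pos _
    have h1 : HasDerivAt (fun r : ℝ => Real.exp (-r)) (-e) r := by
      simpa [Function.comp_def, he] using (Real.hasDerivAt_exp (-r)).comp r ((hasDerivAt_id r).neg)
    have h2 : HasDerivAt (fun r : ℝ => μ (Real.exp (-r))) (deriv μ e * -e) r :=
      (hd e hepos).comp r h1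
    have h3 : HasDerivAt (fun r : ℝ => Real.log (μ (Real.exp (-r))))
        (deriv μ e * -e / μ e) r := h2.log (ne_of_gt (hpos e hepos))
    have h4 := (hasDerivAt_id r).add h3
    rw [hlamfun]
    refine h4.congr_deriv ?_
    rw [hA]
    have := (hpos e hepos).ne'
    field_simp
    ring
  have part4 : ∀ r : ℝ, HasDerivAt lam (1 - A (Real.exp (-r))) r ∧
      1 - A (Real.exp (-r)) < 1 := by
    intro r
    refine ⟨hlamderiv r, ?_⟩
    have := (part1 _ (Real.exp_pos (-r))).1
    linarith
  have part3 : Monotone lam := by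
    apply monotone_of_deriv_nonneg (fun r => (hlamderiv r).differentiableAt)
    intro r
    rw [(hlamderiv r).deriv]
    have := (part1 _ (Real.exp_pos (-r))).2
    linarith
  have part5 : StrictAntiOn (deriv μ) (Set.Ioi 0) → StrictMono lam := by
    intro hsa
    apply strictMono_of_deriv_pos
    intro r
    rw [(hlamderiv r).deriv]
    have := part2 hsa _ (Real.exp_pos (-r))
    linarith
  -- μ x / x parts
  have hgd : ∀ x ∈ Set.Ioi (0:ℝ), HasDerivAt (fun x => μ x / x)
      ((deriv μ x * x - μ x * 1) / x ^ 2) x := fun x hx =>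
    (hd x hx).div (hasDerivAt_id x) (ne_of_gt hx)
  have hgc : ContinuousOn (fun x => μ x / x) (Set.Ioi 0) := fun x hx =>
    (hgd x hx).differentiableAt.continuousAt.continuousWithinAt
  have part6 : AntitoneOn (fun x => μ x / x) (Set.Ioi 0) := by
    apply antitoneOn_of_deriv_nonpos (convex_Ioi 0) hgc
    · intro x hx
      rw [interior_Ioi] at hx
      exact (hgd x hx).differentiableAt.differentiableWithinAt
    · intro x hx
      rw [interior_Ioi] at hx
      rw [(hgd x hx).deriv]
      apply div_nonpos_of_nonpos_of_nonneg
      · have := hkey x hx; nlinarith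
      · positivity
  have part7 : StrictAntiOn (deriv μ) (Set.Ioi 0) →
      StrictAntiOn (fun x => μ x / x) (Set.Ioi 0) := by
    intro hsa
    apply strictAntiOn_of_deriv_neg (convex_Ioi 0) hgc
    intro x hx
    rw [interior_Ioi] at hx
    rw [(hgd x hx).deriv]
    apply div_neg_of_neg_of_pos
    · have := hkeys hsa x hx; nlinarith
    · have : (0:ℝ) < x := hx; positivity
  have part8 : StrictMonoOn (fun x => Real.log (μ x)) (Set.Ioi 0) := by
    intro x hx y hy hxy
    exact Real.log_lt_log (hpos x hx) (hmono (Set.mem_Ici.mpr (le_of_lt hx)) (Set.mem_Ici.mpr (le_of_lt hy)) hxy)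
  -- second derivative of log μ
  have part9 : ∀ x > 0, deriv (deriv (fun y => Real.log (μ y))) x < 0 := by
    intro x hx
    have hC1d : ContDiffOn ℝ 1 (deriv μ) (Set.Ioi 0) := by
      exact hC2.deriv_of_isOpen (m := 1) isOpen_Ioi (by norm_num)
    have hdd : DifferentiableAt ℝ (deriv μ) x :=
      (hC1d.differentiableOn one_ne_zero).differentiableAt (isOpen_Ioi.mem_nhds hx)
    have hdd' : HasDerivAt (deriv μ) (deriv (deriv μ) x) x := hdd.hasDerivAt
    -- second derivative nonpositive via antitonicity of deriv μ
    have hμ2 : deriv (deriv μ) x ≤ 0 := by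
      have hts : Filter.Tendsto (slope (deriv μ) x) (nhdsWithin x {x}ᶜ)
          (nhds (deriv (deriv μ) x)) := hasDerivAt_iff_tendsto_slope.mp hdd'
      have hts' : Filter.Tendsto (slope (deriv μ) x) (nhdsWithin x (Set.Ioi x))
          (nhds (deriv (deriv μ) x)) :=
        hts.mono_left (nhdsWithin_mono x (fun y hy => ne_of_gt hy))
      refine le_of_tendsto hts' ?_
      filter_upwards [self_mem_nhdsWithin] with y hy
      rw [slope_def_field]
      apply div_nonpos_of_nonpos_of_nonneg
      · have := hanti (Set.mem_Ioi.mpr hx) (Set.mem_Ioi.mpr (lt_trans hx hy)) (le_of_lt hy)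
        linarith
      · have : x < y := hy; linarith
    have hEq : deriv (fun y => Real.log (μ y)) =ᶠ[nhds x] fun y => deriv μ y / μ y := by
      filter_upwards [isOpen_Ioi.mem_nhds hx] with y hy
      exact ((hd y hy).log (ne_of_gt (hpos y hy))).deriv
    have h5 : HasDerivAt (fun y => deriv μ y / μ y)
        ((deriv (deriv μ) x * μ x - deriv μ x * deriv μ x) / μ x ^ 2) x :=
      hdd'.div (hd x hx) (ne_of_gt (hpos x hx))
    have h6 : HasDerivAt (deriv (fun y => Real.log (μ y)))
        ((deriv (deriv μ) x * μ x - deriv μ x * deriv μ x) / μ x ^ 2) x :=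
      h5.congr_of_eventuallyEq hEq
    rw [h6.deriv]
    apply div_neg_of_neg_of_pos
    · have h7 := hd'pos x hx
      have h8 := hpos x hx
      nlinarith
    · have := hpos x hx; positivity
  -- Osgood part
  have part10 : (∫⁻ r in Set.Ioo (0:ℝ) 1, ENNReal.ofReal (μ r)⁻¹ = ⊤) →
      Filter.limsup A (nhdsWithin 0 (Set.Ioi 0)) = 1 := by
    intro hint
    have hub : ∀ᶠ x in nhdsWithin (0:ℝ) (Set.Ioi 0), A x ≤ 1 := by
      filter_upwards [self_mem_nhdsWithin] with x hx
      exact (part1 x hx).2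
    have hlb0 : ∀ᶠ x in nhdsWithin (0:ℝ) (Set.Ioi 0), (0:ℝ) ≤ A x := by
      filter_upwards [self_mem_nhdsWithin] with x hx
      exact le_of_lt (part1 x hx).1
    have hbdd : Filter.IsBoundedUnder (· ≤ ·) (nhdsWithin (0:ℝ) (Set.Ioi 0)) A := ⟨1, hub⟩
    have hcob : Filter.IsCoboundedUnder (· ≤ ·) (nhdsWithin (0:ℝ) (Set.Ioi 0)) A :=
      Filter.isCoboundedUnder_le_of_eventually_le _ hlb0
    refine le_antisymm (Filter.limsup_le_of_le hcob hub) ?_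
    by_contra hcon
    push_neg at hcon
    obtain ⟨b, hLb, hb1⟩ := exists_between hcon
    have hev : ∀ᶠ x in nhdsWithin (0:ℝ) (Set.Ioi 0), A x < b :=
      Filter.eventually_lt_of_limsup_lt hLb hbdd
    -- extract an interval
    rw [Filter.eventually_iff, mem_nhdsGT_iff_exists_Ioo_subset] at hev
    obtain ⟨x0, hx0, hsub⟩ := hev
    set b' := max b (1/2 : ℝ) with hb'def
    have hb'pos : (0:ℝ) < b' := lt_max_of_lt_right (by norm_num)
    have hb'1 : b' < 1 := max_lt hb1 (by norm_num)
    have hAb' : ∀ x ∈ Set.Ioo (0:ℝ) x0, x * deriv μ x < b' * μ x := by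
      intro x hx
      have h1 : A x < b' := lt_of_lt_of_le (hsub hx) (le_max_left _ _)
      rw [hA] at h1
      have := hpos x hx.1
      rw [div_lt_iff₀ this] at h1
      linarith
    set x1 := min x0 1 with hx1def
    have hx1pos : 0 < x1 := lt_min hx0 one_pos
    have hx1le1 : x1 ≤ 1 := min_le_right _ _
    have hx1lex0 : x1 ≤ x0 := min_le_left _ _
    -- g = μ x * x ^ (-b') is antitone on Ioo 0 x1
    set g : ℝ → ℝ := fun x => μ x * x ^ (-b') with hgdef
    have hgD : ∀ x ∈ Set.Ioo (0:ℝ) x1, HasDerivAt g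
        (deriv μ x * x ^ (-b') + μ x * (-b' * x ^ (-b' - 1))) x := by
      intro x hx
      exact (hd x hx.1).mul (Real.hasDerivAt_rpow_const (Or.inl (ne_of_gt hx.1)))
    have hganti : AntitoneOn g (Set.Ioo 0 x1) := by
      apply antitoneOn_of_deriv_nonpos (convex_Ioo 0 x1)
      · exact fun x hx => (hgD x hx).differentiableAt.continuousAt.continuousWithinAt
      · intro x hx
        rw [interior_Ioo] at hx
        exact (hgD x hx).differentiableAt.differentiableWithinAt
      · intro x hx
        rw [interior_Ioo] at hx
        rw [(hgD x hx).deriv]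
        have hxp : 0 < x := hx.1
        have hrw : x ^ (-b') = x ^ (-b' - 1) * x := by
          rw [← Real.rpow_add_one (ne_of_gt hxp) (-b' - 1)]
          norm_num
        have hA' : x * deriv μ x < b' * μ x :=
          hAb' x ⟨hxp, lt_of_lt_of_le hx.2 hx1lex0⟩
        have hr1 : (0:ℝ) < x ^ (-b' - 1) := Real.rpow_pos_of_pos hxp _
        rw [hrw]
        nlinarith
    -- lower bound for μ
    set x2 := x1 / 2 with hx2def
    have hx2pos : 0 < x2 := by positivity
    have hx2mem : x2 ∈ Set.Ioo (0:ℝ) x1 := ⟨hx2pos, by simp [hx2def]; linarith⟩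
    set c := μ x2 * x2 ^ (-b') with hcdef
    have hcpos : 0 < c := mul_pos (hpos x2 hx2pos) (Real.rpow_pos_of_pos hx2pos _)
    have hμlow : ∀ x ∈ Set.Ioo (0:ℝ) x2, c ≤ μ x * x ^ (-b') := by
      intro x hx
      exact hganti ⟨hx.1, lt_trans hx.2 hx2mem.2⟩ hx2mem (le_of_lt hx.2)
    -- the comparison function
    set F : ℝ → ℝ := fun x => c⁻¹ * x ^ (-b') + (μ x2)⁻¹ with hFdef
    have hFbound : ∀ x ∈ Set.Ioo (0:ℝ) 1, (μ x)⁻¹ ≤ F x := by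
      intro x hx
      have hxp : 0 < x := hx.1
      have hrp : 0 < x ^ (-b') := Real.rpow_pos_of_pos hxp _
      rcases lt_or_ge x x2 with h | h
      · have h1 := hμlow x ⟨hxp, h⟩
        have hμx := hpos x hxp
        have hxb : (0:ℝ) < x ^ b' := Real.rpow_pos_of_pos hxp _
        have h1' : c * x ^ b' ≤ μ x := by
          rw [Real.rpow_neg (le_of_lt hxp), ← div_eq_mul_inv, le_div_iff₀ hxb] at h1
          exact h1
        have h2 : (μ x)⁻¹ ≤ c⁻¹ * x ^ (-b') := by
          rw [Real.rpow_neg (le_of_lt hxp), ← mul_inv]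
          exact inv_anti₀ (by positivity) h1'
        calc (μ x)⁻¹ ≤ c⁻¹ * x ^ (-b') := h2
          _ ≤ F x := by
            simp only [hFdef, le_add_iff_nonneg_right]
            exact inv_nonneg.mpr (le_of_lt (hpos x2 hx2pos))
      · have hμx2 := hpos x2 hx2pos
        have h1 : μ x2 ≤ μ x := hmono.monotoneOn (le_of_lt hx2pos) (le_of_lt hxp) h
        have h2 : (μ x)⁻¹ ≤ (μ x2)⁻¹ := by
          apply inv_anti₀ hμx2 h1
        calc (μ x)⁻¹ ≤ (μ x2)⁻¹ := h2
          _ ≤ F x := by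
            simp only [hFdef, le_add_iff_nonneg_left]
            positivity
    -- F is integrable on Ioo 0 1
    have hFint : IntegrableOn F (Set.Ioo (0:ℝ) 1) := by
      apply Integrable.add
      · exact ((intervalIntegral.integrableOn_Ioo_rpow_iff one_pos).mpr (by linarith)).const_mul _
      · exact (integrableOn_const_iff).mpr (Or.inr (by rw [Real.volume_Ioo]; norm_num))
    have hFlt : (∫⁻ r in Set.Ioo (0:ℝ) 1, ENNReal.ofReal (F r)) < ⊤ :=
      hFint.setLIntegral_lt_top
    have hle : (∫⁻ r in Set.Ioo (0:ℝ) 1, ENNReal.ofReal (μ r)⁻¹) ≤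
        ∫⁻ r in Set.Ioo (0:ℝ) 1, ENNReal.ofReal (F r) := by
      apply lintegral_mono_ae
      rw [ae_restrict_iff' measurableSet_Ioo]
      exact Filter.Eventually.of_forall fun x hx => ENNReal.ofReal_le_ofReal (hFbound x hx)
    rw [hint] at hle
    exact absurd (lt_of_le_of_lt hle hFlt) (lt_irrefl ⊤)
  exact ⟨part1, part2, part3, part4, part5, part6, part7, part8, part9, part10⟩
end

section
/- Let μ : [0,∞) → [0,∞) be continuous with μ(0) = 0, twice continuously differentiable on (0,∞), strictly increasing and strictly concave on (0,∞), satisfying the Osgood condition ∫₀¹ dr/μ(r) = ∞, and assume lim_{x→0⁺} x·μ'(x)/μ(x) = 1. Define S_μ(x) = ∫₀ˣ μ(s)/s ds. Then: (i) S_μ(x) < ∞ for every x > 0 (μ is Dini-continuous); (ii) S_μ is a strictly increasing, strictly concave MOC on [0,∞); (iii) lim_{x→0⁺} S_μ(x)/μ(x) = 1 and lim_{x→0⁺} S_μ'(x)/μ'(x) = 1 (S_μ and μ lie in the same germ at the origin, as do their derivatives); (iv) if in addition x²·μ''(x) − x·μ'(x) + μ(x) ≥ 0 for all x > 0, then x²·S_μ''(x)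 − x·S_μ'(x) + S_μ(x) ≥ 0 for all x > 0. -/
open MeasureTheory Real Filter

theorem stmt16 (μ : ℝ → ℝ)
    (hc : ContinuousOn μ (Set.Ici 0)) (h0 : μ 0 = 0)
    (hC2 : ContDiffOn ℝ 2 μ (Set.Ioi 0))
    (hmono : StrictMonoOn μ (Set.Ici 0))
    (hconc : StrictAntiOn (deriv μ) (Set.Ioi 0))
    (hOsgood : ∫⁻ r in Set.Ioo (0:ℝ) 1, ENNReal.ofReal (μ r)⁻¹ = ⊤)
    (hlim : Tendsto (fun x => x * deriv μ x / μ x) (nhdsWithin 0 (Set.Ioi 0)) (nhds 1))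
    (S : ℝ → ℝ) (hS : ∀ x, S x = ∫ s in (0:ℝ)..x, μ s / s) :
    (∀ x > 0, IntervalIntegrable (fun s => μ s / s) volume 0 x) ∧
    ContinuousOn S (Set.Ici 0) ∧ S 0 = 0 ∧
    StrictMonoOn S (Set.Ici 0) ∧ StrictConcaveOn ℝ (Set.Ici 0) S ∧
    Tendsto (fun x => S x / μ x) (nhdsWithin 0 (Set.Ioi 0)) (nhds 1) ∧
    Tendsto (fun x => deriv S x / deriv μ x) (nhdsWithin 0 (Set.Ioi 0)) (nhds 1) ∧
    ((∀ x > 0, 0 ≤ x ^ 2 * deriv (deriv μ) x - x * deriv μ x + μ x) →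
      ∀ x > 0, 0 ≤ x ^ 2 * deriv (deriv S) x - x * deriv S x + S x) := by
  -- basic positivity
  have hμpos : ∀ x > (0:ℝ), 0 < μ x := by
    intro x hx
    have := hmono Set.self_mem_Ici (Set.mem_Ici.2 hx.le) hx
    rwa [h0] at this
  have hμdiff : ∀ x > (0:ℝ), DifferentiableAt ℝ μ x := by
    intro x hx
    exact (hC2.differentiableOn (by norm_num)).differentiableAt
      (isOpen_Ioi.mem_nhds hx)
  have hμd : ∀ x > (0:ℝ), HasDerivAt μ (deriv μ x) x :=
    fun x hx => (hμdiff x hx).hasDerivAt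
  have hμcont : ∀ x > (0:ℝ), ContinuousAt μ x :=
    fun x hx => (hμdiff x hx).continuousAt
  -- key concavity inequality: x μ'(x) < μ(x) for x > 0
  have hkey : ∀ x > (0:ℝ), x * deriv μ x < μ x := by
    intro x hx
    obtain ⟨c, hc1, hc2⟩ := exists_deriv_eq_slope μ hx
      (hc.mono ((Set.Icc_subset_Ici_iff hx.le).2 le_rfl))
      (fun y hy => (hμdiff y hy.1).differentiableWithinAt)
    have hcx : deriv μ x < deriv μ c := hconc hc1.1 hx hc1.2
    have hμx : μ x = x * deriv μ c := by
      rw [hc2, h0]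
      rw [sub_zero, sub_zero, mul_div_assoc', mul_div_cancel_left₀ _ hx.ne']
    nlinarith
  have hderivpos : ∀ x > (0:ℝ), 0 < deriv μ x := by
    intro x hx
    obtain ⟨c, hc1, hc2⟩ := exists_deriv_eq_slope μ (by linarith : x < x + 1)
      (hc.mono fun y hy => le_trans hx.le hy.1)
      (fun y hy => (hμdiff y (lt_trans hx hy.1)).differentiableWithinAt)
    have hcpos : 0 < deriv μ c := by
      rw [hc2]
      have h1 : μ x < μ (x + 1) :=
        hmono (Set.mem_Ici.2 hx.le) (Set.mem_Ici.2 (by linarith)) (by linarith)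
      have h2 : x + 1 - x = 1 := by ring
      rw [h2]
      simpa using sub_pos.2 h1
    exact lt_trans hcpos (hconc hx (lt_trans hx hc1.1) hc1.1)
  -- a small interval on which x μ'(x) ≥ μ(x)/2
  obtain ⟨δ, hδpos, hδ⟩ : ∃ δ > 0, ∀ y ∈ Set.Ioc (0:ℝ) δ, μ y ≤ 2 * (y * deriv μ y) := by
    have h2 : ∀ᶠ x in nhdsWithin 0 (Set.Ioi 0), (1:ℝ)/2 < x * deriv μ x / μ x :=
      hlim.eventually (eventually_gt_nhds (by norm_num))
    obtain ⟨u, hu, hsub⟩ := mem_nhdsGT_iff_exists_Ioc_subset.1 h2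
    refine ⟨u, hu, fun y hy => ?_⟩
    have h3 := hsub hy
    have hμy := hμpos y hy.1
    rw [Set.mem_setOf_eq, lt_div_iff₀ hμy] at h3
    linarith
  -- μ(y)/√y is monotone on (0, δ]
  have hgd : ∀ y > (0:ℝ), HasDerivAt (fun y => μ y / Real.sqrt y)
      ((deriv μ y * Real.sqrt y - μ y * (1 / (2 * Real.sqrt y))) / Real.sqrt y ^ 2) y :=
    fun y hy => (hμd y hy).div (Real.hasDerivAt_sqrt (ne_of_gt hy))
      (by positivity)
  have hg : MonotoneOn (fun y => μ y / Real.sqrt y) (Set.Ioc 0 δ) := by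
    apply monotoneOn_of_deriv_nonneg (convex_Ioc 0 δ)
    · exact ContinuousOn.div (hc.mono fun y hy => hy.1.le)
        continuous_sqrt.continuousOn
        (fun y hy => ne_of_gt (Real.sqrt_pos.2 hy.1))
    · intro y hy
      rw [interior_Ioc] at hy
      exact (hgd y hy.1).differentiableAt.differentiableWithinAt
    · intro y hy
      rw [interior_Ioc] at hy
      rw [(hgd y hy.1).deriv]
      apply div_nonneg _ (sq_nonneg _)
      have hb := hδ y ⟨hy.1, hy.2.le⟩
      have hs : 0 < Real.sqrt y := Real.sqrt_pos.2 hy.1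
      have hs2 : Real.sqrt y * Real.sqrt y = y := Real.mul_self_sqrt hy.1.le
      rw [sub_nonneg, mul_one_div, div_le_iff₀ (by positivity)]
      have h5 : deriv μ y * Real.sqrt y * (2 * Real.sqrt y)
          = 2 * (Real.sqrt y * Real.sqrt y * deriv μ y) := by ring
      rw [h5, hs2]
      linarith
  -- pointwise bound μ(y)/y ≤ C / √y on (0, δ]
  have hbound : ∀ y ∈ Set.Ioc (0:ℝ) δ, μ y / y ≤ μ δ / Real.sqrt δ / Real.sqrt y := by
    intro y hy
    have h1 : μ y / Real.sqrt y ≤ μ δ / Real.sqrt δ :=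
      hg hy ⟨hδpos, le_rfl⟩ hy.2
    have hs : 0 < Real.sqrt y := Real.sqrt_pos.2 hy.1
    have hs2 : Real.sqrt y * Real.sqrt y = y := Real.mul_self_sqrt hy.1.le
    calc μ y / y = μ y / Real.sqrt y / Real.sqrt y := by rw [div_div, hs2]
      _ ≤ μ δ / Real.sqrt δ / Real.sqrt y := by gcongr
  -- integrability on (0, δ]
  have hfInt : IntegrableOn (fun s => μ s / s) (Set.Ioc 0 δ) volume := by
    have hbint : IntegrableOn (fun y : ℝ => μ δ / Real.sqrt δ * y ^ (-(1/2) : ℝ))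
        (Set.Ioc 0 δ) volume := by
      have h1 : IntervalIntegrable (fun y : ℝ => y ^ (-(1/2) : ℝ)) volume 0 δ :=
        intervalIntegral.intervalIntegrable_rpow' (by norm_num)
      have h2 := h1.const_mul (μ δ / Real.sqrt δ)
      rwa [intervalIntegrable_iff_integrableOn_Ioc_of_le hδpos.le] at h2
    apply Integrable.mono' hbint
    · exact (ContinuousOn.div (hc.mono fun y hy => hy.1.le) continuousOn_id
        (fun y hy => ne_of_gt hy.1)).aestronglyMeasurable measurableSet_Ioc
    · rw [ae_restrict_iff' measurableSet_Ioc]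
      filter_upwards with y hy
      rw [Real.norm_eq_abs, abs_of_nonneg (div_nonneg (hμpos y hy.1).le hy.1.le)]
      have h3 := hbound y hy
      have h4 : y ^ (-(1/2) : ℝ) = (Real.sqrt y)⁻¹ := by
        rw [Real.rpow_neg hy.1.le, Real.sqrt_eq_rpow]
      rw [h4]
      rw [div_eq_mul_inv (μ δ / Real.sqrt δ)] at h3
      exact h3
  have part1 : ∀ x > (0:ℝ), IntervalIntegrable (fun s => μ s / s) volume 0 x := by
    have hIδ : IntervalIntegrable (fun s => μ s / s) volume 0 δ :=
      (intervalIntegrable_iff_integrableOn_Ioc_of_le hδpos.le).2 hfInt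
    intro x hx
    rcases le_total x δ with h | h
    · apply hIδ.mono_set
      rw [Set.uIcc_of_le hx.le, Set.uIcc_of_le hδpos.le]
      exact Set.Icc_subset_Icc le_rfl h
    · refine hIδ.trans ?_
      apply ContinuousOn.intervalIntegrable
      rw [Set.uIcc_of_le h]
      exact ContinuousOn.div
        (hc.mono fun y hy => le_trans hδpos.le hy.1)
        continuousOn_id
        (fun y hy => ne_of_gt (lt_of_lt_of_le hδpos hy.1))
  -- derivative of S
  have hprim : S = fun u => ∫ s in (0:ℝ)..u, μ s / s := funext hS
  have hfc : ContinuousOn (fun s => μ s / s) (Set.Ioi 0) :=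
    ContinuousOn.div hC2.continuousOn continuousOn_id (fun y hy => ne_of_gt hy)
  have hSd : ∀ x > (0:ℝ), HasDerivAt S (μ x / x) x := by
    intro x hx
    have hmeas := hfc.stronglyMeasurableAtFilter (μ := volume) isOpen_Ioi x hx
    have hca : ContinuousAt (fun s => μ s / s) x :=
      (hμcont x hx).div continuousAt_id (ne_of_gt hx)
    have := intervalIntegral.integral_hasDerivAt_right (part1 x hx) hmeas hca
    rw [hprim]
    exact this
  have hderivS : ∀ x > (0:ℝ), deriv S x = μ x / x := fun x hx => (hSd x hx).deriv
  -- continuity of S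
  have hScont : ContinuousOn S (Set.Ici 0) := by
    intro x hx
    have hx0 : (0:ℝ) ≤ x := hx
    have hcont := intervalIntegral.continuousOn_primitive_interval'
      (part1 (x + 1) (by linarith))
      (by rw [Set.uIcc_of_le (by linarith : (0:ℝ) ≤ x + 1)]
          exact Set.left_mem_Icc.2 (by linarith))
    have hx1 : x ∈ Set.uIcc (0:ℝ) (x + 1) := by
      rw [Set.uIcc_of_le (by linarith : (0:ℝ) ≤ x + 1)]
      exact ⟨hx0, by linarith⟩
    rw [hprim]
    refine (hcont x hx1).mono_of_mem_nhdsWithin ?_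
    rw [Set.uIcc_of_le (by linarith : (0:ℝ) ≤ x + 1), ← Set.Ici_inter_Iic]
    exact inter_mem_nhdsWithin _ (Iic_mem_nhds (by linarith))
  have hS0 : S 0 = 0 := by simp [hS 0]
  -- strict monotonicity
  have hmonoS : StrictMonoOn S (Set.Ici 0) := by
    apply strictMonoOn_of_deriv_pos (convex_Ici 0) hScont
    intro x hx
    rw [interior_Ici] at hx
    rw [hderivS x hx]
    exact div_pos (hμpos x hx) hx
  -- μ(x)/x is strictly decreasing
  have hq : StrictAntiOn (fun y => μ y / y) (Set.Ioi 0) := by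
    apply strictAntiOn_of_deriv_neg (convex_Ioi 0) hfc
    intro x hx
    rw [interior_Ioi] at hx
    have hd : HasDerivAt (fun y => μ y / y) ((deriv μ x * x - μ x * 1) / x ^ 2) x :=
      (hμd x hx).div (hasDerivAt_id x) (ne_of_gt hx)
    rw [hd.deriv]
    apply div_neg_of_neg_of_pos _ (pow_pos hx 2)
    have := hkey x hx
    nlinarith
  have hconcS : StrictConcaveOn ℝ (Set.Ici 0) S := by
    apply StrictAntiOn.strictConcaveOn_of_deriv (convex_Ici 0) hScont
    rw [interior_Ici]
    intro a ha b hb hab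
    rw [hderivS a ha, hderivS b hb]
    exact hq ha hb hab
  -- limits
  have hμ0 : Tendsto μ (nhdsWithin 0 (Set.Ioi 0)) (nhds 0) := by
    have := (hc 0 Set.self_mem_Ici).tendsto
    rw [h0] at this
    exact this.mono_left (nhdsWithin_mono 0 Set.Ioi_subset_Ici_self)
  have hS0t : Tendsto S (nhdsWithin 0 (Set.Ioi 0)) (nhds 0) := by
    have := (hScont 0 Set.self_mem_Ici).tendsto
    rw [hS0] at this
    exact this.mono_left (nhdsWithin_mono 0 Set.Ioi_subset_Ici_self)
  have hratio2 : Tendsto (fun x => deriv S x / deriv μ x)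
      (nhdsWithin 0 (Set.Ioi 0)) (nhds 1) := by
    have hinv := hlim.inv₀ one_ne_zero
    rw [inv_one] at hinv
    apply hinv.congr'
    filter_upwards [self_mem_nhdsWithin] with x hx
    rw [hderivS x hx, inv_div, div_div]
  have hratio1 : Tendsto (fun x => S x / μ x) (nhdsWithin 0 (Set.Ioi 0)) (nhds 1) := by
    apply deriv.lhopital_zero_nhdsGT ?_ ?_ hS0t hμ0 hratio2
    · filter_upwards [self_mem_nhdsWithin] with x hx
      exact (hSd x hx).differentiableAt
    · filter_upwards [self_mem_nhdsWithin] with x hx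
      exact ne_of_gt (hderivpos x hx)
  refine ⟨part1, hScont, hS0, hmonoS, hconcS, hratio1, hratio2, ?_⟩
  -- part (iv)
  intro H
  have hdd : ∀ y > (0:ℝ), HasDerivAt (deriv μ) (deriv (deriv μ) y) y := by
    intro y hy
    have h1 : ContDiffOn ℝ 1 (deriv μ) (Set.Ioi 0) :=
      hC2.deriv_of_isOpen isOpen_Ioi (by norm_num)
    exact ((h1.differentiableOn one_ne_zero).differentiableAt
      (isOpen_Ioi.mem_nhds hy)).hasDerivAt
  have hSd2 : ∀ y > (0:ℝ), HasDerivAt (deriv S)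
      ((deriv μ y * y - μ y * 1) / y ^ 2) y := by
    intro y hy
    have hq' : HasDerivAt (fun u => μ u / u) ((deriv μ y * y - μ y * 1) / y ^ 2) y :=
      (hμd y hy).div (hasDerivAt_id y) (ne_of_gt hy)
    apply hq'.congr_of_eventuallyEq
    filter_upwards [isOpen_Ioi.mem_nhds hy] with u hu
    exact hderivS u hu
  have hTd : ∀ y > (0:ℝ), HasDerivAt (fun y => S y + y * deriv μ y - 2 * μ y)
      (μ y / y + (1 * deriv μ y + y * deriv (deriv μ) y) - 2 * deriv μ y) y := by
    intro y hy
    exact ((hSd y hy).add ((hasDerivAt_id y).mul (hdd y hy))).sub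
      ((hμd y hy).const_mul 2)
  have hTmono : MonotoneOn (fun y => S y + y * deriv μ y - 2 * μ y) (Set.Ioi 0) := by
    apply monotoneOn_of_deriv_nonneg (convex_Ioi 0)
    · intro y hy
      exact (hTd y hy).continuousAt.continuousWithinAt
    · intro y hy
      rw [interior_Ioi] at hy
      exact (hTd y hy).differentiableAt.differentiableWithinAt
    · intro y hy
      rw [interior_Ioi] at hy
      rw [(hTd y hy).deriv]
      have hH := H y hy
      have hyne : y ≠ 0 := ne_of_gt hy
      have heq : μ y / y + (1 * deriv μ y + y * deriv (deriv μ) y) - 2 * deriv μ y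
          = (y ^ 2 * deriv (deriv μ) y - y * deriv μ y + μ y) / y := by
        field_simp
        ring
      rw [heq]
      exact div_nonneg hH hy.le
  have hxd0 : Tendsto (fun y => y * deriv μ y) (nhdsWithin 0 (Set.Ioi 0)) (nhds 0) := by
    have h1 := hlim.mul hμ0
    rw [mul_zero] at h1
    apply h1.congr'
    filter_upwards [self_mem_nhdsWithin] with x hx
    exact div_mul_cancel₀ _ (ne_of_gt (hμpos x hx))
  have hT0 : Tendsto (fun y => S y + y * deriv μ y - 2 * μ y)
      (nhdsWithin 0 (Set.Ioi 0)) (nhds 0) := by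
    have := (hS0t.add hxd0).sub (hμ0.const_mul 2)
    simpa using this
  have hTnn : ∀ x > (0:ℝ), 0 ≤ S x + x * deriv μ x - 2 * μ x := by
    intro x hx
    apply le_of_tendsto hT0
    filter_upwards [Ioo_mem_nhdsGT_of_mem (Set.mem_Ico.2 ⟨le_rfl, hx⟩)] with z hz
    exact hTmono hz.1 (Set.mem_Ioi.2 hx) hz.2.le
  intro x hx
  have hxne : x ≠ 0 := ne_of_gt hx
  rw [(hSd2 x hx).deriv, hderivS x hx]
  have heq : x ^ 2 * ((deriv μ x * x - μ x * 1) / x ^ 2) - x * (μ x / x) + S x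
      = S x + x * deriv μ x - 2 * μ x := by
    field_simp
    ring
  rw [heq]
  exact hTnn x hx
end

section
/- Let μ : [0,∞) → [0,∞) be continuous with μ(0) = 0, twice continuously differentiable on (0,∞), strictly increasing, concave, and positive on (0,∞), satisfying the Osgood condition ∫₀¹ dr/μ(r) = ∞. Define λ(r) = r + log μ(e^{−r}) and ε(r) = λ'(r)/2 for r ∈ ℝ, and assume λ''(r) < 0 for all r > r₀, for some r₀ ∈ ℝ. Then ε is strictly decreasing on (r₀,∞) with values in (0,1/2) and ε(r) → 0 as r → ∞; letting η : (0,δ) → (r₀,∞) be the inverse of ε restricted to (r₀,∞), where δ = lim_{r→r₀⁺} ε(r), and defining α(e) = exp(λ(η(e)) − 2·e·η(e)) for e ∈ (0,δ): (i) x^{1−2ε(r)}·α(ε(r)) = μ(x) for every r > r₀, where x = e^{−r}; (ii) log α is strictly convex on (0,δ); (iii) if in addition λ''(r) + (λ'(r))² ≥ 0 for all r > r₀, then p ↦ p·log(α(1/p)/p) is convex on (1/δ, ∞). -/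
open MeasureTheory Real Filter

set_option maxHeartbeats 1000000 in
theorem stmt17 (μ : ℝ → ℝ)
    (hc : ContinuousOn μ (Set.Ici 0)) (h0 : μ 0 = 0)
    (hC2 : ContDiffOn ℝ 2 μ (Set.Ioi 0))
    (hmono : StrictMonoOn μ (Set.Ici 0))
    (hconc : ConcaveOn ℝ (Set.Ioi 0) μ)
    (hpos : ∀ x > 0, 0 < μ x)
    (hOsgood : ∫⁻ r in Set.Ioo (0:ℝ) 1, ENNReal.ofReal (μ r)⁻¹ = ⊤)
    (lam eps : ℝ → ℝ)
    (hlam : ∀ r, lam r = r + Real.log (μ (Real.exp (-r))))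
    (heps : ∀ r, eps r = deriv lam r / 2)
    (r₀ : ℝ) (hlam'' : ∀ r > r₀, deriv (deriv lam) r < 0)
    (δ : ℝ) (hδ : Tendsto eps (nhdsWithin r₀ (Set.Ioi r₀)) (nhds δ))
    (η : ℝ → ℝ) (hη : ∀ e ∈ Set.Ioo (0:ℝ) δ, r₀ < η e ∧ eps (η e) = e)
    (α : ℝ → ℝ) (hα : ∀ e, α e = Real.exp (lam (η e) - 2 * e * η e)) :
    StrictAntiOn eps (Set.Ioi r₀) ∧
    (∀ r > r₀, eps r ∈ Set.Ioo (0:ℝ) (1/2)) ∧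
    Tendsto eps atTop (nhds 0) ∧
    (∀ r > r₀, (Real.exp (-r)) ^ (1 - 2 * eps r) * α (eps r) = μ (Real.exp (-r))) ∧
    StrictConvexOn ℝ (Set.Ioo 0 δ) (fun e => Real.log (α e)) ∧
    ((∀ r > r₀, 0 ≤ deriv (deriv lam) r + (deriv lam r) ^ 2) →
      ConvexOn ℝ (Set.Ioi δ⁻¹) (fun p => p * Real.log (α p⁻¹ / p))) := by
  -- ### basic facts about μ
  have hdiff : ∀ x > (0:ℝ), DifferentiableAt ℝ μ x := fun x hx =>
    (hC2.contDiffAt ((isOpen_Ioi).mem_nhds hx)).differentiableAt (by norm_num)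
  have hD_pos : ∀ x > (0:ℝ), 0 < deriv μ x := by
    intro x hx
    have h1 : slope μ x (x+1) ≤ deriv μ x :=
      hconc.slope_le_deriv hx (by simp only [Set.mem_Ioi]; linarith) (by linarith) (hdiff x hx)
    have h2 : 0 < slope μ x (x+1) := by
      rw [slope_def_field]
      have := hmono (le_of_lt hx : x ∈ Set.Ici (0:ℝ))
        (by simp only [Set.mem_Ici]; linarith : x + 1 ∈ Set.Ici (0:ℝ)) (by linarith)
      exact div_pos (by linarith) (by linarith)
    linarith
  have hxD_le : ∀ x > (0:ℝ), x * deriv μ x ≤ μ x := by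
    intro x hx
    have key : ∀ z ∈ Set.Ioo (0:ℝ) x, deriv μ x ≤ (μ x - μ z) / (x - z) := by
      intro z hz
      have := hconc.deriv_le_slope (Set.mem_Ioi.2 hz.1) (Set.mem_Ioi.2 hx) hz.2 (hdiff x hx)
      rwa [slope_def_field] at this
    have hlim : Tendsto (fun z => (μ x - μ z) / (x - z)) (nhdsWithin 0 (Set.Ioi (0:ℝ)))
        (nhds (μ x / x)) := by
      have hμ : Tendsto μ (nhdsWithin 0 (Set.Ioi (0:ℝ))) (nhds 0) := by
        have := (hc 0 (Set.self_mem_Ici)).tendsto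
        rw [h0] at this
        exact this.mono_left (nhdsWithin_mono _ (fun z hz => Set.mem_Ici.2 (le_of_lt (Set.mem_Ioi.1 hz))))
      have hid : Tendsto (fun z : ℝ => z) (nhdsWithin 0 (Set.Ioi (0:ℝ))) (nhds 0) :=
        tendsto_id.mono_left nhdsWithin_le_nhds
      have h3 : Tendsto (fun z => (μ x - μ z) / (x - z)) (nhdsWithin 0 (Set.Ioi (0:ℝ)))
          (nhds ((μ x - 0) / (x - 0))) :=
        Tendsto.div (tendsto_const_nhds.sub hμ) (tendsto_const_nhds.sub hid)
          (by simpa using ne_of_gt hx)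
      simpa using h3
    have : deriv μ x ≤ μ x / x := by
      refine ge_of_tendsto hlim ?_
      filter_upwards [Ioo_mem_nhdsGT_of_mem (Set.left_mem_Ico.2 hx)] with z hz using key z hz
    calc x * deriv μ x ≤ x * (μ x / x) := by nlinarith
    _ = μ x := by field_simp
  -- ### substitute lam, eps, α
  have hlam_eq : lam = fun r => r + Real.log (μ (Real.exp (-r))) := funext hlam
  subst hlam_eq
  have heps_eq : eps = fun r => deriv (fun r => r + Real.log (μ (Real.exp (-r)))) r / 2 :=
    funext heps
  subst heps_eq
  set L : ℝ → ℝ := fun r => r + Real.log (μ (Real.exp (-r))) with hL_def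
  -- smoothness of L
  have hμpos : ∀ r : ℝ, 0 < μ (Real.exp (-r)) := fun r => hpos _ (Real.exp_pos _)
  have hL2 : ContDiff ℝ 2 L := by
    rw [contDiff_iff_contDiffAt]
    intro r
    have hx : Real.exp (-r) ∈ Set.Ioi (0:ℝ) := Real.exp_pos _
    have h1 : ContDiffAt ℝ 2 μ (Real.exp (-r)) := hC2.contDiffAt (isOpen_Ioi.mem_nhds hx)
    have h2 : ContDiffAt ℝ 2 (fun r : ℝ => Real.exp (-r)) r :=
      (Real.contDiff_exp.comp contDiff_neg).contDiffAt
    have h3 : ContDiffAt ℝ 2 (fun r : ℝ => μ (Real.exp (-r))) r := h1.comp r h2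
    have h4 : ContDiffAt ℝ 2 (fun r : ℝ => Real.log (μ (Real.exp (-r)))) r :=
      ((Real.contDiffAt_log.mpr (ne_of_gt (hμpos r))).comp r h3 :)
    exact contDiffAt_id.add h4
  have hLD : ∀ r : ℝ, HasDerivAt L
      (1 + deriv μ (Real.exp (-r)) * (Real.exp (-r) * (-1)) / μ (Real.exp (-r))) r := by
    intro r
    have hde : HasDerivAt (fun r : ℝ => Real.exp (-r)) (Real.exp (-r) * (-1)) r :=
      (Real.hasDerivAt_exp (-r)).comp r ((hasDerivAt_id r).neg.congr_deriv (by simp))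
    have hcomp : HasDerivAt (fun r : ℝ => μ (Real.exp (-r)))
        (deriv μ (Real.exp (-r)) * (Real.exp (-r) * (-1))) r :=
      ((hdiff _ (Real.exp_pos (-r))).hasDerivAt).comp r hde
    have hlog : HasDerivAt (fun r : ℝ => Real.log (μ (Real.exp (-r))))
        (deriv μ (Real.exp (-r)) * (Real.exp (-r) * (-1)) / μ (Real.exp (-r))) r :=
      hcomp.log (ne_of_gt (hμpos r))
    exact (hasDerivAt_id r).add hlog
  have hL' : ∀ r : ℝ, deriv L r =
      1 - Real.exp (-r) * deriv μ (Real.exp (-r)) / μ (Real.exp (-r)) := by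
    intro r
    rw [(hLD r).deriv]; ring
  have hLdiff : Differentiable ℝ L := fun r => (hLD r).differentiableAt
  have hL1 : ContDiff ℝ 1 (deriv L) := by
    have := (contDiff_succ_iff_deriv (n := 1)).mp (by exact_mod_cast hL2)
    exact this.2.2
  have hL'diff : Differentiable ℝ (deriv L) := hL1.differentiable one_ne_zero
  have hL'cont : Continuous (deriv L) := hL1.continuous
  -- eps facts
  have heps_ge : ∀ r : ℝ, 0 ≤ deriv L r / 2 := by
    intro r
    rw [hL' r]
    have h1 := hxD_le _ (Real.exp_pos (-r))
    have h2 := hμpos r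
    have : Real.exp (-r) * deriv μ (Real.exp (-r)) / μ (Real.exp (-r)) ≤ 1 :=
      (div_le_one h2).mpr h1
    linarith
  have heps_lt : ∀ r : ℝ, deriv L r / 2 < 1/2 := by
    intro r
    rw [hL' r]
    have h1 := hD_pos _ (Real.exp_pos (-r))
    have h2 := hμpos r
    have : 0 < Real.exp (-r) * deriv μ (Real.exp (-r)) / μ (Real.exp (-r)) :=
      div_pos (mul_pos (Real.exp_pos _) h1) h2
    linarith
  have hepsD : ∀ r : ℝ, HasDerivAt (fun r => deriv L r / 2) (deriv (deriv L) r / 2) r :=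
    fun r => ((hL'diff r).hasDerivAt).div_const 2
  have heps_deriv : ∀ r : ℝ, deriv (fun r => deriv L r / 2) r = deriv (deriv L) r / 2 :=
    fun r => (hepsD r).deriv
  have hepscont : Continuous fun r => deriv L r / 2 := hL'cont.div_const 2
  -- Part 1 : strict antitonicity
  have part1 : StrictAntiOn (fun r => deriv L r / 2) (Set.Ioi r₀) := by
    apply strictAntiOn_of_deriv_neg (convex_Ioi r₀) hepscont.continuousOn
    intro r hr
    rw [interior_Ioi] at hr
    rw [heps_deriv r]
    have := hlam'' r hr
    linarith
  -- Part 2 : range of eps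
  have part2 : ∀ r > r₀, (fun r => deriv L r / 2) r ∈ Set.Ioo (0:ℝ) (1/2) := by
    intro r hr
    refine ⟨?_, heps_lt r⟩
    have h1 : deriv L (r+1) / 2 < deriv L r / 2 :=
      part1 hr (by simp only [Set.mem_Ioi]; linarith) (by linarith)
    have := heps_ge (r+1)
    simpa using lt_of_le_of_lt this h1
  -- eps r < δ for r > r₀
  have heps_lt_δ : ∀ r > r₀, deriv L r / 2 < δ := by
    intro r hr
    set m := (r₀ + r) / 2 with hm
    have hm1 : r₀ < m := by simp only [hm]; linarith
    have hm2 : m < r := by simp only [hm]; linarith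
    have h1 : deriv L r / 2 < deriv L m / 2 := part1 hm1 (Set.mem_Ioi.2 hr) hm2
    have h2 : deriv L m / 2 ≤ δ := by
      refine ge_of_tendsto hδ ?_
      filter_upwards [Ioo_mem_nhdsGT_of_mem (Set.left_mem_Ico.2 hm1)] with s hs
      exact le_of_lt (part1 (Set.mem_Ioi.2 hs.1) (Set.mem_Ioi.2 hm1) hs.2)
    linarith
  have hδpos : 0 < δ := lt_of_le_of_lt (le_of_eq rfl)
    (lt_of_lt_of_le (part2 (r₀+1) (by linarith)).1 (le_of_lt (heps_lt_δ (r₀+1) (by linarith))))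
  have hmemδ : ∀ r > r₀, deriv L r / 2 ∈ Set.Ioo (0:ℝ) δ :=
    fun r hr => ⟨(part2 r hr).1, heps_lt_δ r hr⟩
  -- η inverts eps
  have hη_inv : ∀ r > r₀, η (deriv L r / 2) = r := by
    intro r hr
    obtain ⟨h1, h2⟩ := hη _ (hmemδ r hr)
    exact part1.injOn (Set.mem_Ioi.2 h1) (Set.mem_Ioi.2 hr) h2
  -- Part 4
  have part4 : ∀ r > r₀, (Real.exp (-r)) ^ (1 - 2 * (deriv L r / 2)) * α (deriv L r / 2)
      = μ (Real.exp (-r)) := by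
    intro r hr
    rw [hα, hη_inv r hr]
    rw [Real.rpow_def_of_pos (Real.exp_pos (-r)), Real.log_exp, ← Real.exp_add]
    have : -r * (1 - 2 * (deriv L r / 2)) + (L r - 2 * (deriv L r / 2) * r)
        = L r - r := by ring
    rw [this]
    have : L r - r = Real.log (μ (Real.exp (-r))) := by simp only [hL_def]; ring
    rw [this, Real.exp_log (hμpos r)]
  -- Part 3
  have part3 : Tendsto (fun r => deriv L r / 2) atTop (nhds 0) := by
    by_cases hcase : ∀ c > (0:ℝ), ∃ r > r₀, deriv L r / 2 < c
    · rw [Metric.tendsto_atTop]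
      intro c hc
      obtain ⟨r1, hr1, hr1'⟩ := hcase c hc
      refine ⟨r1 + 1, fun n hn => ?_⟩
      have hn' : r1 < n := by linarith
      have h1 : deriv L n / 2 < deriv L r1 / 2 :=
        part1 (Set.mem_Ioi.2 hr1) (Set.mem_Ioi.2 (hr1.trans hn')) hn'
      have h2 := heps_ge n
      rw [Real.dist_eq, sub_zero, abs_of_nonneg h2]
      linarith
    · exfalso
      push_neg at hcase
      obtain ⟨c, hc, hlb⟩ := hcase
      set a := max r₀ 0 + 1 with ha_def
      have har₀ : r₀ < a := lt_of_le_of_lt (le_max_left r₀ 0) (by linarith)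
      have ha0 : 0 < a := lt_of_le_of_lt (le_max_right r₀ 0) (by linarith)
      -- k := L - 2c·id is monotone on [a, ∞)
      have hk : MonotoneOn (fun r => L r - 2*c*r) (Set.Ici a) := by
        apply monotoneOn_of_deriv_nonneg (convex_Ici a)
          ((hLdiff.continuous.sub (continuous_const.mul continuous_id')).continuousOn)
        · intro r _
          exact ((hLdiff r).sub (((hasDerivAt_id r).const_mul (2*c)).differentiableAt)).differentiableWithinAt
        · intro r hr
          rw [interior_Ici] at hr
          have hd : HasDerivAt (fun r => L r - 2*c*r) (deriv L r - 2*c) r :=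
            (hLdiff r).hasDerivAt.sub
              (((hasDerivAt_id r).const_mul (2*c)).congr_deriv (mul_one _))
          change 0 ≤ deriv (fun r => L r - 2*c*r) r
          rw [hd.deriv]
          have := hlb r (har₀.trans hr)
          linarith
      set B := L a - 2*c*a with hB_def
      -- pointwise bound on 1/μ
      set g : ℝ → ℝ := fun x => Real.exp (-B) * x ^ (2*c-1) + (μ (Real.exp (-a)))⁻¹ with hg_def
      have hg : ∀ x ∈ Set.Ioo (0:ℝ) 1, (μ x)⁻¹ ≤ g x := by
        intro x hx
        have hx0 := hx.1
        have hμx := hpos x hx0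
        by_cases hxa : x ≤ Real.exp (-a)
        · -- use the monotonicity of k
          set r := -Real.log x with hr_def
          have hra : a ≤ r := by
            have : Real.log x ≤ -a := by
              calc Real.log x ≤ Real.log (Real.exp (-a)) :=
                Real.log_le_log hx0 hxa
              _ = -a := Real.log_exp _
            simp only [hr_def]; linarith
          have hxr : Real.exp (-r) = x := by
            simp only [hr_def, neg_neg]; exact Real.exp_log hx0
          have hkr := hk (Set.self_mem_Ici) (Set.mem_Ici.2 hra) hra
          have hlog : B + (2*c-1) * r ≤ Real.log (μ x) := by
            have hLr : L r = r + Real.log (μ x) := by rw [hL_def]; simp [hxr]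
            simp only [hB_def] at hkr ⊢
            rw [hLr] at hkr
            linarith
          have hμlb : Real.exp B * x ^ (1-2*c) ≤ μ x := by
            have h1 : Real.exp (B + (2*c-1) * r) ≤ μ x := by
              rw [← Real.exp_log hμx]
              exact Real.exp_le_exp.mpr hlog
            have h2 : Real.exp (B + (2*c-1) * r) = Real.exp B * x ^ (1-2*c) := by
              rw [Real.exp_add, Real.rpow_def_of_pos hx0]
              congr 1
              congr 1
              simp only [hr_def]; ring
            rw [← h2]; exact h1
          have hpow : (0:ℝ) < Real.exp B * x ^ (1-2*c) :=
            mul_pos (Real.exp_pos _) (Real.rpow_pos_of_pos hx0 _)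
          have hinv : (μ x)⁻¹ ≤ (Real.exp B * x ^ (1-2*c))⁻¹ :=
            inv_anti₀ hpow hμlb
          have heq : (Real.exp B * x ^ (1-2*c))⁻¹ = Real.exp (-B) * x ^ (2*c-1) := by
            rw [mul_inv, ← Real.exp_neg, ← Real.rpow_neg (le_of_lt hx0)]
            norm_num
          have hc2 : (0:ℝ) ≤ (μ (Real.exp (-a)))⁻¹ :=
            le_of_lt (inv_pos.2 (hpos _ (Real.exp_pos _)))
          rw [heq] at hinv
          simp only [hg_def]
          linarith
        · -- x ≥ exp(-a) : use monotonicity of μ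
          push_neg at hxa
          have h1 : μ (Real.exp (-a)) ≤ μ x :=
            le_of_lt (hmono (Set.mem_Ici.2 (le_of_lt (Real.exp_pos _)))
              (Set.mem_Ici.2 (le_of_lt hx0)) hxa)
          have h2 : (μ x)⁻¹ ≤ (μ (Real.exp (-a)))⁻¹ :=
            inv_anti₀ (hpos _ (Real.exp_pos _)) h1
          have h3 : (0:ℝ) ≤ Real.exp (-B) * x ^ (2*c-1) :=
            le_of_lt (mul_pos (Real.exp_pos _) (Real.rpow_pos_of_pos hx0 _))
          simp only [hg_def]
          linarith
      -- g is integrable on Ioo 0 1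
      have hgint : IntegrableOn g (Set.Ioo (0:ℝ) 1) := by
        have hint : IntervalIntegrable (fun x : ℝ => x ^ (2*c-1)) volume 0 1 :=
          intervalIntegral.intervalIntegrable_rpow' (by linarith)
        have hint2 : IntegrableOn (fun x : ℝ => x ^ (2*c-1)) (Set.Ioc (0:ℝ) 1) := by
          rw [intervalIntegrable_iff, Set.uIoc_of_le (by norm_num : (0:ℝ) ≤ 1)] at hint
          exact hint
        have hint3 : IntegrableOn (fun x : ℝ => x ^ (2*c-1)) (Set.Ioo (0:ℝ) 1) :=
          hint2.mono_set Set.Ioo_subset_Ioc_self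
        exact (hint3.const_mul _).add (integrableOn_const measure_Ioo_lt_top.ne)
      -- conclude
      have hfin : ∫⁻ x in Set.Ioo (0:ℝ) 1, ENNReal.ofReal (μ x)⁻¹ < ⊤ := by
        have hle : ∫⁻ x in Set.Ioo (0:ℝ) 1, ENNReal.ofReal (μ x)⁻¹
            ≤ ∫⁻ x in Set.Ioo (0:ℝ) 1, ENNReal.ofReal (g x) := by
          apply setLIntegral_mono (by fun_prop) -- measurability
          intro x hx
          exact ENNReal.ofReal_le_ofReal (hg x hx)
        exact lt_of_le_of_lt hle hgint.lintegral_lt_top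
      rw [hOsgood] at hfin
      exact (lt_irrefl _ hfin)
  -- maximum lemma : r ↦ L r - 2 e r is maximized at η e on (r₀, ∞)
  have hhd : ∀ (e s : ℝ), HasDerivAt (fun u => L u - 2*e*u) (deriv L s - 2*e) s := fun e s =>
    (hLdiff s).hasDerivAt.sub (((hasDerivAt_id s).const_mul (2*e)).congr_deriv (mul_one _))
  have hcont2 : ∀ e : ℝ, Continuous fun u => L u - 2*e*u := fun e =>
    hLdiff.continuous.sub (continuous_const.mul continuous_id')
  have hmax : ∀ e ∈ Set.Ioo (0:ℝ) δ, ∀ r ∈ Set.Ioi r₀, r ≠ η e →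
      L r - 2*e*r < L (η e) - 2*e*(η e) := by
    intro e he r hr hne
    obtain ⟨hηe, hεη⟩ := hη e he
    simp only at hεη
    rcases lt_or_gt_of_ne hne with hlt | hgt
    · have hmono2 : StrictMonoOn (fun u => L u - 2*e*u) (Set.Icc r (η e)) := by
        apply strictMonoOn_of_deriv_pos (convex_Icc _ _) (hcont2 e).continuousOn
        intro s hs
        rw [interior_Icc] at hs
        rw [(hhd e s).deriv]
        have h1 : deriv L (η e) / 2 < deriv L s / 2 :=
          part1 (Set.mem_Ioi.2 (lt_trans hr hs.1)) (Set.mem_Ioi.2 hηe) hs.2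
        rw [hεη] at h1
        linarith
      exact hmono2 (Set.left_mem_Icc.2 (le_of_lt hlt)) (Set.right_mem_Icc.2 (le_of_lt hlt)) hlt
    · have hanti2 : StrictAntiOn (fun u => L u - 2*e*u) (Set.Icc (η e) r) := by
        apply strictAntiOn_of_deriv_neg (convex_Icc _ _) (hcont2 e).continuousOn
        intro s hs
        rw [interior_Icc] at hs
        rw [(hhd e s).deriv]
        have h1 : deriv L s / 2 < deriv L (η e) / 2 :=
          part1 (Set.mem_Ioi.2 hηe) (Set.mem_Ioi.2 (lt_trans hηe hs.1)) hs.1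
        rw [hεη] at h1
        linarith
      exact hanti2 (Set.left_mem_Icc.2 (le_of_lt hgt)) (Set.right_mem_Icc.2 (le_of_lt hgt)) hgt
  have hlogα : ∀ e : ℝ, Real.log (α e) = L (η e) - 2*e*(η e) := fun e => by
    rw [hα, Real.log_exp]
  -- Part 5
  have part5 : StrictConvexOn ℝ (Set.Ioo 0 δ) (fun e => Real.log (α e)) := by
    refine ⟨convex_Ioo 0 δ, ?_⟩
    intro x hx y hy hxy p q hp hq hpq
    simp only [smul_eq_mul]
    have hz : p * x + q * y ∈ Set.Ioo 0 δ :=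
      (convex_Ioo 0 δ) hx hy (le_of_lt hp) (le_of_lt hq) hpq
    set z := p * x + q * y with hz_def
    obtain ⟨hηz, hεz⟩ := hη z hz
    simp only at hεz
    have hne : ∀ w, w ∈ Set.Ioo (0:ℝ) δ → w ≠ z → η z ≠ η w := by
      intro w hw hwz hcon
      apply hwz
      have e1 := (hη w hw).2
      simp only at e1
      rw [← hcon] at e1
      rw [e1] at hεz
      exact hεz
    have hzx : z ≠ x := by
      intro hcon
      apply hxy
      have h1 : q * (y - x) = 0 := by
        have hpq' : p = 1 - q := by linarith
        linear_combination hcon - hz_def - x * hpq'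
      have := mul_eq_zero.mp h1
      rcases this with h | h
      · exact absurd h (ne_of_gt hq)
      · linarith
    have hzy : z ≠ y := by
      intro hcon
      apply hxy
      have h1 : p * (x - y) = 0 := by
        have hpq' : q = 1 - p := by linarith
        linear_combination hcon - hz_def - y * hpq'
      have := mul_eq_zero.mp h1
      rcases this with h | h
      · exact absurd h (ne_of_gt hp)
      · linarith
    have key1 : L (η z) - 2*x*(η z) < L (η x) - 2*x*(η x) :=
      hmax x hx (η z) (Set.mem_Ioi.2 hηz) (hne x hx (fun h => hzx h.symm))
    have key2 : L (η z) - 2*y*(η z) < L (η y) - 2*y*(η y) :=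
      hmax y hy (η z) (Set.mem_Ioi.2 hηz) (hne y hy (fun h => hzy h.symm))
    have hsplit : L (η z) - 2*z*(η z)
        = p * (L (η z) - 2*x*(η z)) + q * (L (η z) - 2*y*(η z)) := by
      have h1 : p * (L (η z) - 2*x*(η z)) + q * (L (η z) - 2*y*(η z))
          = (p+q) * L (η z) - 2*(p*x+q*y)*(η z) := by ring
      rw [h1, hpq, one_mul, ← hz_def]
    calc Real.log (α z) = L (η z) - 2*z*(η z) := hlogα z
    _ = p * (L (η z) - 2*x*(η z)) + q * (L (η z) - 2*y*(η z)) := hsplit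
    _ < p * (L (η x) - 2*x*(η x)) + q * (L (η y) - 2*y*(η y)) := by
        have h1 := mul_lt_mul_of_pos_left key1 hp
        have h2 := mul_lt_mul_of_pos_left key2 hq
        linarith
    _ = p * Real.log (α x) + q * Real.log (α y) := by rw [hlogα, hlogα]
  refine ⟨part1, part2, part3, part4, part5, ?_⟩
  -- Part 6
  intro hyp2
  have hδinv : (0:ℝ) < δ⁻¹ := inv_pos.2 hδpos
  -- Λ = exp ∘ L is convex on (r₀, ∞) : support-line inequality
  have hΛD : ∀ r : ℝ, HasDerivAt (fun u => Real.exp (L u))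
      (Real.exp (L r) * deriv L r) r := fun r => ((hLdiff r).hasDerivAt).exp
  have hΛ'D : ∀ r : ℝ, HasDerivAt (fun u => Real.exp (L u) * deriv L u)
      (Real.exp (L r) * deriv L r * deriv L r + Real.exp (L r) * deriv (deriv L) r) r :=
    fun r => (hΛD r).mul ((hL'diff r).hasDerivAt)
  have hΛ'mono : MonotoneOn (fun u => Real.exp (L u) * deriv L u) (Set.Ioi r₀) := by
    apply monotoneOn_of_deriv_nonneg (convex_Ioi r₀)
      ((hLdiff.continuous.rexp.mul hL'cont).continuousOn)
    · exact fun r _ => (hΛ'D r).differentiableAt.differentiableWithinAt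
    · intro r hr
      rw [interior_Ioi] at hr
      change 0 ≤ deriv (fun u => Real.exp (L u) * deriv L u) r
      rw [(hΛ'D r).deriv]
      have he : Real.exp (L r) * deriv L r * deriv L r + Real.exp (L r) * deriv (deriv L) r
          = Real.exp (L r) * (deriv (deriv L) r + (deriv L r)^2) := by ring
      rw [he]
      exact mul_nonneg (le_of_lt (Real.exp_pos _)) (hyp2 r hr)
  have hsupport : ∀ w ∈ Set.Ioi r₀, ∀ r ∈ Set.Ioi r₀,
      Real.exp (L w) + Real.exp (L w) * deriv L w * (r - w) ≤ Real.exp (L r) := by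
    intro w hw r hr
    have hφd : ∀ s : ℝ, HasDerivAt (fun u => Real.exp (L u) - Real.exp (L w) * deriv L w * u)
        (Real.exp (L s) * deriv L s - Real.exp (L w) * deriv L w) s := fun s =>
      (hΛD s).sub (((hasDerivAt_id s).const_mul (Real.exp (L w) * deriv L w)).congr_deriv
        (mul_one _))
    have hφc : Continuous fun u => Real.exp (L u) - Real.exp (L w) * deriv L w * u :=
      hLdiff.continuous.rexp.sub (continuous_const.mul continuous_id')
    rcases le_or_gt w r with hle | hlt
    · rcases eq_or_lt_of_le hle with rfl | hwr
      · simp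
      · have hφ : MonotoneOn (fun u => Real.exp (L u) - Real.exp (L w) * deriv L w * u)
            (Set.Icc w r) := by
          apply monotoneOn_of_deriv_nonneg (convex_Icc _ _) hφc.continuousOn
          · exact fun s _ => (hφd s).differentiableAt.differentiableWithinAt
          · intro s hs
            rw [interior_Icc] at hs
            rw [(hφd s).deriv]
            have := hΛ'mono hw (Set.mem_Ioi.2 (lt_trans hw hs.1)) (le_of_lt hs.1)
            simpa using sub_nonneg.2 this
        have := hφ (Set.left_mem_Icc.2 hle) (Set.right_mem_Icc.2 hle) hle
        simp only at this
        nlinarith [this]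
    · have hφ : AntitoneOn (fun u => Real.exp (L u) - Real.exp (L w) * deriv L w * u)
          (Set.Icc r w) := by
        apply antitoneOn_of_deriv_nonpos (convex_Icc _ _) hφc.continuousOn
        · exact fun s _ => (hφd s).differentiableAt.differentiableWithinAt
        · intro s hs
          rw [interior_Icc] at hs
          rw [(hφd s).deriv]
          have := hΛ'mono (Set.mem_Ioi.2 (lt_trans hr hs.1)) hw (le_of_lt hs.2)
          simpa using sub_nonpos.2 this
      have := hφ (Set.left_mem_Icc.2 (le_of_lt hlt)) (Set.right_mem_Icc.2 (le_of_lt hlt))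
        (le_of_lt hlt)
      simp only at this
      nlinarith [this]
  -- lower bound on η from the differential inequality 1/ε' ≥ -2/λ'²
  have hη_lb : ∀ e ∈ Set.Ioo (0:ℝ) δ, 1/e ≤ 1/δ + 2*(η e - r₀) := by
    intro e he
    obtain ⟨hηe, hεη⟩ := hη e he
    simp only at hεη
    have hgd : ∀ r ∈ Set.Ioi r₀, HasDerivAt (fun r => (deriv L r / 2)⁻¹ - 2*r)
        (-(deriv (deriv L) r / 2) / (deriv L r / 2)^2 - 2) r := by
      intro r hr
      exact ((hepsD r).inv (ne_of_gt (part2 r hr).1)).sub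
        (((hasDerivAt_id r).const_mul 2).congr_deriv (mul_one _))
    have hganti : AntitoneOn (fun r => (deriv L r / 2)⁻¹ - 2*r) (Set.Ioi r₀) := by
      apply antitoneOn_of_deriv_nonpos (convex_Ioi r₀)
      · apply ContinuousOn.sub
        · exact ContinuousOn.inv₀ hepscont.continuousOn (fun r hr => ne_of_gt (part2 r hr).1)
        · exact (continuous_const.mul continuous_id').continuousOn
      · intro r hr
        rw [interior_Ioi] at hr
        exact (hgd r hr).differentiableAt.differentiableWithinAt
      · intro r hr
        rw [interior_Ioi] at hr
        rw [(hgd r hr).deriv]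
        have h2 := hyp2 r hr
        have hE : (0:ℝ) < (deriv L r / 2)^2 := by
          have := (part2 r hr).1
          positivity
        have key : -(deriv (deriv L) r / 2) ≤ 2 * (deriv L r / 2)^2 := by nlinarith [h2]
        have := (div_le_iff₀ hE).mpr key
        linarith
    have hstep : ∀ s ∈ Set.Ioo r₀ (η e), 1/e ≤ (deriv L s / 2)⁻¹ + 2*(η e - s) := by
      intro s hs
      have h1 := hganti (Set.mem_Ioi.2 hs.1) (Set.mem_Ioi.2 hηe) (le_of_lt hs.2)
      simp only at h1
      rw [hεη] at h1
      rw [one_div]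
      linarith
    have htends : Tendsto (fun s => (deriv L s / 2)⁻¹ + 2*(η e - s))
        (nhdsWithin r₀ (Set.Ioi r₀)) (nhds (δ⁻¹ + 2*(η e - r₀))) := by
      apply Tendsto.add
      · exact hδ.inv₀ (ne_of_gt hδpos)
      · have hco : Continuous fun s : ℝ => 2*(η e - s) := by fun_prop
        exact (hco.tendsto r₀).mono_left nhdsWithin_le_nhds
    have hfinal : 1/e ≤ δ⁻¹ + 2*(η e - r₀) := by
      refine ge_of_tendsto htends ?_
      filter_upwards [Ioo_mem_nhdsGT_of_mem (Set.left_mem_Ico.2 hηe)] with s hs using hstep s hs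
    rw [one_div δ]
    exact hfinal
  -- rewrite of the target function
  have hF : ∀ p : ℝ, 0 < p → p * Real.log (α p⁻¹ / p)
      = p * L (η p⁻¹) - 2*(η p⁻¹) - p * Real.log p := by
    intro p hp0
    have hα_pos : 0 < α p⁻¹ := by rw [hα]; exact Real.exp_pos _
    rw [Real.log_div (ne_of_gt hα_pos) (ne_of_gt hp0), hlogα]
    have e1 : p * ((L (η p⁻¹) - 2*p⁻¹*(η p⁻¹)) - Real.log p)
        = p * L (η p⁻¹) - 2*(p*p⁻¹)*(η p⁻¹) - p * Real.log p := by ring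
    rw [e1, mul_inv_cancel₀ (ne_of_gt hp0)]
    ring
  -- supporting-line inequality for F
  have hS : ∀ b ∈ Set.Ioi δ⁻¹, ∀ a ∈ Set.Ioi δ⁻¹,
      b * Real.log (α b⁻¹ / b) + (L (η b⁻¹) - 1 - Real.log b) * (a - b)
        ≤ a * Real.log (α a⁻¹ / a) := by
    intro b hb a ha
    have hb0 : 0 < b := lt_trans hδinv hb
    have ha0 : 0 < a := lt_trans hδinv ha
    have hbe : b⁻¹ ∈ Set.Ioo (0:ℝ) δ := by
      constructor
      · exact inv_pos.2 hb0
      · have := inv_strictAnti₀ hδinv hb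
        rwa [inv_inv] at this
    have hae : a⁻¹ ∈ Set.Ioo (0:ℝ) δ := by
      constructor
      · exact inv_pos.2 ha0
      · have := inv_strictAnti₀ hδinv ha
        rwa [inv_inv] at this
    obtain ⟨hηb, hεb⟩ := hη b⁻¹ hbe
    simp only at hεb
    obtain ⟨hηa, hεa⟩ := hη a⁻¹ hae
    set r := η b⁻¹ + (a - b)/2 with hr_def
    have hrgt : r > r₀ := by
      have h1 := hη_lb b⁻¹ hbe
      rw [one_div, inv_inv, one_div] at h1
      simp only [hr_def]
      have : δ⁻¹ < a := ha
      linarith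
    have hmax1 : L r - 2*a⁻¹*r ≤ L (η a⁻¹) - 2*a⁻¹*(η a⁻¹) := by
      rcases eq_or_ne r (η a⁻¹) with heq | hne
      · rw [heq]
      · exact le_of_lt (hmax a⁻¹ hae r (Set.mem_Ioi.2 hrgt) hne)
    have hsup := hsupport (η b⁻¹) (Set.mem_Ioi.2 hηb) r (Set.mem_Ioi.2 hrgt)
    have hdLb : deriv L (η b⁻¹) = 2 * b⁻¹ := by linarith [hεb]
    have hlamlb : L (η b⁻¹) + Real.log (a/b) ≤ L r := by
      have h2 : Real.exp (L (η b⁻¹)) + Real.exp (L (η b⁻¹)) * deriv L (η b⁻¹) * (r - η b⁻¹)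
          = Real.exp (L (η b⁻¹)) * (a/b) := by
        rw [hdLb]
        have e2 : r - η b⁻¹ = (a - b)/2 := by rw [hr_def]; ring
        rw [e2]
        field_simp
        ring
      rw [h2] at hsup
      have h3 : Real.exp (L (η b⁻¹)) * (a/b) = Real.exp (L (η b⁻¹) + Real.log (a/b)) := by
        rw [Real.exp_add (L (η b⁻¹)) (Real.log (a/b)), Real.exp_log (div_pos ha0 hb0)]
      rw [h3] at hsup
      exact Real.exp_le_exp.mp hsup
    rw [hF a ha0, hF b hb0]
    have hlogab : Real.log (a/b) = Real.log a - Real.log b :=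
      Real.log_div (ne_of_gt ha0) (ne_of_gt hb0)
    have hchain1 : a * L r - 2*r ≤ a * L (η a⁻¹) - 2*(η a⁻¹) := by
      have h4 := mul_le_mul_of_nonneg_left hmax1 (le_of_lt ha0)
      have e3 : a * (L r - 2*a⁻¹*r) = a * L r - 2*(a*a⁻¹)*r := by ring
      have e4 : a * (L (η a⁻¹) - 2*a⁻¹*(η a⁻¹)) = a * L (η a⁻¹) - 2*(a*a⁻¹)*(η a⁻¹) := by ring
      rw [e3, e4, mul_inv_cancel₀ (ne_of_gt ha0)] at h4
      linarith
    have hchain2 : a * (L (η b⁻¹) + (Real.log a - Real.log b)) ≤ a * L r := by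
      rw [← hlogab]
      exact mul_le_mul_of_nonneg_left hlamlb (le_of_lt ha0)
    have e5 : a * (L (η b⁻¹) + (Real.log a - Real.log b))
        = a * L (η b⁻¹) + a * Real.log a - a * Real.log b := by ring
    rw [e5] at hchain2
    have e6 : 2*r = 2*(η b⁻¹) + (a - b) := by rw [hr_def]; ring
    have e7 : (L (η b⁻¹) - 1 - Real.log b)*(a-b)
        = a*L (η b⁻¹) - b*L (η b⁻¹) - (a - b) - a*Real.log b + b*Real.log b := by ring
    linarith [hchain1, hchain2, e6, e7]
  -- assemble convexity from supporting lines
  refine ⟨convex_Ioi _, ?_⟩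
  intro x hx y hy p q hp hq hpq
  simp only [smul_eq_mul]
  have hz : p * x + q * y ∈ Set.Ioi δ⁻¹ := (convex_Ioi _) hx hy hp hq hpq
  set z := p * x + q * y with hz_def
  have h1 := hS z hz x hx
  have h2 := hS z hz y hy
  have h1' := mul_le_mul_of_nonneg_left h1 hp
  have h2' := mul_le_mul_of_nonneg_left h2 hq
  have key : p * (z * Real.log (α z⁻¹ / z) + (L (η z⁻¹) - 1 - Real.log z) * (x - z))
      + q * (z * Real.log (α z⁻¹ / z) + (L (η z⁻¹) - 1 - Real.log z) * (y - z))
      = z * Real.log (α z⁻¹ / z) := by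
    linear_combination (z * Real.log (α z⁻¹ / z) - (L (η z⁻¹) - 1 - Real.log z) * z) * hpq
      - (L (η z⁻¹) - 1 - Real.log z) * hz_def
  linarith [h1', h2', key]
end
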